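/- arXiv:2605.07506 — 10 statements merged into one kernel-verified Lean document; each statement's English description precedes it below -/
import Mathlib

section
/- For any analytic self-map φ of the unit disk and any n ≥ 1 such that the composition-differentiation operator D_{φ,n} f = f^{(n)} ∘ φ is bounded on H²(𝔻), the operator D_{φ,n} is not posinormal; equivalently, the range of D_{φ,n} is not contained in the range of D_{φ,n}^*. -/
open Complex Metric
open scoped InnerProductSpace

noncomputable section

/-- The Hardy space `H²(𝔻)`, modeled as the Hilbert space of square-summable
Taylor coefficient sequences. -/
abbrev H2 : Type := lp (fun _ : ℕ => ℂ) 2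

/-- The analytic function on the unit disk represented by an element of `H²`. -/
noncomputable def H2.toFun (f : H2) (z : ℂ) : ℂ := ∑' k, f k * z ^ k

/-- `T` is posinormal if `T T* = T* P T` for some positive operator `P`. -/
def Posinormal {H : Type*} [NormedAddCommGroup H] [InnerProductSpace ℂ H] [CompleteSpace H]
    (T : H →L[ℂ] H) : Prop :=
  ∃ P : H →L[ℂ] H, P.IsPositive ∧
    T ∘L ContinuousLinearMap.adjoint T = ContinuousLinearMap.adjoint T ∘L P ∘L T

/-- `T` realizes the weighted composition-differentiation operator `D_{ψ,φ,n}` on `H²`. -/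
def IsWCD (ψ φ : ℂ → ℂ) (n : ℕ) (T : H2 →L[ℂ] H2) : Prop :=
  ∀ f : H2, ∀ z ∈ ball (0 : ℂ) 1,
    H2.toFun (T f) z = ψ z * iteratedDeriv n (H2.toFun f) (φ z)

/-- The coefficients of an `H²` element are summable against powers of a point of the disk. -/
lemma H2.hasSum_toFun (g : H2) {z : ℂ} (hz : ‖z‖ < 1) :
    HasSum (fun k => g k * z ^ k) (H2.toFun g z) := by
  have hs : Summable fun k => g k * z ^ k := by
    apply Summable.of_norm
    refine Summable.of_nonneg_of_le (fun k => norm_nonneg _) (fun k => ?_)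
      ((summable_geometric_of_lt_one (norm_nonneg z) hz).mul_left ‖g‖)
    rw [norm_mul, norm_pow]
    exact mul_le_mul_of_nonneg_right (lp.norm_apply_le_norm two_ne_zero g k) (by positivity)
  exact hs.hasSum

lemma H2.toFun_zero_eq (g : H2) : H2.toFun g 0 = g 0 := by
  unfold H2.toFun
  rw [tsum_eq_single 0 (fun k hk => by simp [zero_pow hk])]
  simp

/-- If the function represented by an `H²` element vanishes on the unit disk,
the element is zero. -/
lemma H2.eq_zero_of_toFun (g : H2) (h : ∀ z ∈ ball (0 : ℂ) 1, H2.toFun g z = 0) :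
    g = 0 := by
  set p : FormalMultilinearSeries ℂ ℂ ℂ :=
    fun k => ContinuousMultilinearMap.mkPiRing ℂ (Fin k) (g k) with hp
  have hnorm : ∀ k, ‖p k‖ = ‖g k‖ := fun k => ContinuousMultilinearMap.norm_mkPiRing _
  have hr : 1 ≤ p.radius := by
    refine FormalMultilinearSeries.le_radius_of_bound _ ‖g‖ fun k => ?_
    rw [hnorm k]
    simpa using lp.norm_apply_le_norm two_ne_zero g k
  have hball : HasFPowerSeriesOnBall (H2.toFun g) p 0 1 := by
    refine ⟨hr, one_pos, fun hy => ?_⟩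
    rename_i y
    rw [mem_emetric_ball_zero_iff] at hy
    have hy' : ‖y‖ < 1 := by rw [← _root_.ofReal_norm, ENNReal.ofReal_lt_one] at hy; exact hy
    have := g.hasSum_toFun hy'
    simp only [zero_add]
    convert this using 1
    · rfl
    funext k
    simp [hp, smul_eq_mul, mul_comm]
  have hfz : H2.toFun g =ᶠ[nhds 0] 0 :=
    Filter.eventuallyEq_of_mem (ball_mem_nhds (0 : ℂ) one_pos) h
  have hp0 : p = 0 := hball.hasFPowerSeriesAt.eq_zero_of_eventually hfz
  refine lp.ext (funext fun k => ?_)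
  have : p k = 0 := by rw [hp0]; rfl
  have := congrArg (fun q => q (fun _ => (1 : ℂ))) this
  simpa [hp] using this

/-- The unweighted composition-differentiation operator `D_{φ,n}` is never posinormal;
equivalently, its range is not contained in the range of its adjoint. -/
theorem stmt2 (φ : ℂ → ℂ)
    (hφ : DifferentiableOn ℂ φ (ball (0 : ℂ) 1))
    (hφm : ∀ z ∈ ball (0 : ℂ) 1, φ z ∈ ball (0 : ℂ) 1)
    (n : ℕ) (hn : 1 ≤ n)
    (T : H2 →L[ℂ] H2) (hT : IsWCD (fun _ => 1) φ n T) :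
    ¬ Posinormal T ∧
      ¬ (Set.range T ⊆ Set.range (ContinuousLinearMap.adjoint T)) := by
  classical
  set e0 : H2 := lp.single 2 0 1 with he0
  set en : H2 := lp.single 2 n 1 with hen
  -- the function represented by `e0` is the constant `1`
  have he0fun : H2.toFun e0 = fun _ => (1 : ℂ) := by
    funext z
    unfold H2.toFun
    rw [tsum_eq_single 0 (fun k hk => by
      rw [he0, lp.single_apply_ne 2 0 1 hk, zero_mul])]
    rw [he0, lp.single_apply_self]
    simp
  -- the function represented by `en` is `z ^ n`
  have henfun : H2.toFun en = fun z => z ^ n := by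
    funext z
    unfold H2.toFun
    rw [tsum_eq_single n (fun k hk => by
      rw [hen, lp.single_apply_ne 2 n 1 hk, zero_mul])]
    rw [hen, lp.single_apply_self]
    simp
  -- iterated derivatives of the zero function
  have hzero : ∀ k : ℕ, iteratedDeriv k (fun _ : ℂ => (0 : ℂ)) = fun _ => 0 := by
    intro k
    induction k with
    | zero => simp [iteratedDeriv_zero]
    | succ k ih =>
      rw [iteratedDeriv_succ']
      have : deriv (fun _ : ℂ => (0 : ℂ)) = fun _ => (0 : ℂ) :=
        funext fun x => deriv_const x 0
      rw [this]; exact ih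
  -- iterated derivative of the constant one function
  have hconst : iteratedDeriv n (fun _ : ℂ => (1 : ℂ)) = fun _ => 0 := by
    obtain ⟨k, rfl⟩ : ∃ k, n = k + 1 := ⟨n - 1, (Nat.succ_pred_eq_of_pos hn).symm⟩
    rw [iteratedDeriv_succ']
    have : deriv (fun _ : ℂ => (1 : ℂ)) = fun _ => (0 : ℂ) :=
      funext fun x => deriv_const x 1
    rw [this]; exact hzero k
  -- iterated derivatives of monomials
  have hpow : ∀ (m : ℕ) (c : ℂ),
      iteratedDeriv m (fun z : ℂ => c * z ^ m) = fun _ => c * (m.factorial : ℂ) := by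
    intro m
    induction m with
    | zero => intro c; funext z; simp [iteratedDeriv_zero]
    | succ m ih =>
      intro c
      rw [iteratedDeriv_succ']
      have hder : deriv (fun z : ℂ => c * z ^ (m + 1))
          = fun z => (c * (m + 1)) * z ^ m := by
        funext z
        rw [deriv_const_mul _ (differentiableAt_pow (m + 1)), deriv_pow_field,
          Nat.add_sub_cancel]
        push_cast
        ring
      rw [hder, ih (c * (m + 1))]
      funext z
      push_cast [Nat.factorial_succ]
      ring
  have hpn : iteratedDeriv n (fun z : ℂ => z ^ n) = fun _ => (n.factorial : ℂ) := by
    have := hpow n 1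
    simpa using this
  -- `T e0 = 0`
  have hTe0 : T e0 = 0 := by
    apply H2.eq_zero_of_toFun
    intro z hz
    rw [hT e0 z hz, he0fun, hconst]
    simp
  -- `(T en) 0 = n !`
  have h0mem : (0 : ℂ) ∈ ball (0 : ℂ) 1 := mem_ball_self one_pos
  have hTen : (T en) 0 = (n.factorial : ℂ) := by
    have h := hT en 0 h0mem
    rw [H2.toFun_zero_eq, henfun, hpn] at h
    simpa using h
  have hfact : ((n.factorial : ℂ)) ≠ 0 := by
    exact_mod_cast Nat.cast_ne_zero.mpr n.factorial_ne_zero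
  -- inner product with `e0` extracts the zeroth coefficient
  have hinner : ∀ f : H2, ⟪e0, f⟫_ℂ = f 0 := by
    intro f
    rw [he0, lp.inner_single_left]
    simp [RCLike.inner_apply]
  constructor
  · rintro ⟨P, hP, heq⟩
    -- `T† e0 = 0`
    have hadj : ContinuousLinearMap.adjoint T e0 = 0 := by
      rw [← inner_self_eq_zero (𝕜 := ℂ)]
      calc ⟪ContinuousLinearMap.adjoint T e0, ContinuousLinearMap.adjoint T e0⟫_ℂ
          = ⟪e0, T (ContinuousLinearMap.adjoint T e0)⟫_ℂ :=
            ContinuousLinearMap.adjoint_inner_left T _ _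
        _ = ⟪e0, (T ∘L ContinuousLinearMap.adjoint T) e0⟫_ℂ := rfl
        _ = ⟪e0, (ContinuousLinearMap.adjoint T ∘L P ∘L T) e0⟫_ℂ := by rw [heq]
        _ = ⟪e0, ContinuousLinearMap.adjoint T (P (T e0))⟫_ℂ := rfl
        _ = 0 := by rw [hTe0]; simp
    have : ⟪e0, T en⟫_ℂ = 0 := by
      rw [← ContinuousLinearMap.adjoint_inner_left T, hadj, inner_zero_left]
    rw [hinner, hTen] at this
    exact hfact this
  · intro hsub
    obtain ⟨x, hx⟩ := hsub ⟨en, rfl⟩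
    have : ⟪e0, ContinuousLinearMap.adjoint T x⟫_ℂ = 0 := by
      rw [ContinuousLinearMap.adjoint_inner_right, hTe0, inner_zero_left]
    rw [hinner, hx, hTen] at this
    exact hfact this
end
end

section
/- A bounded linear operator T on a Hilbert space H is posinormal (i.e., there exists a positive operator P with T T^* = T^* P T) if and only if Range(T) ⊆ Range(T^*), if and only if T T^* ≤ λ² T^* T for some λ ≥ 0, if and only if there exists a bounded operator A on H with T = T^* A. -/
open Complex Metric
open scoped InnerProductSpace

noncomputable section

section Aux

open ContinuousLinearMap InnerProductSpace

variable {H : Type*} [NormedAddCommGroup H] [InnerProductSpace ℂ H] [CompleteSpace H]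



/-- Douglas: range inclusion implies factorization. -/
lemma factor_of_range_subset (S R : H →L[ℂ] H) (h : Set.range R ⊆ Set.range S) :
    ∃ A : H →L[ℂ] H, R = S ∘L A := by
  set K : Submodule ℂ H := LinearMap.ker (S : H →ₗ[ℂ] H) with hK
  haveI : CompleteSpace K := S.isClosed_ker.completeSpace_coe
  have ex : ∀ x : H, ∃ y, y ∈ Kᗮ ∧ S y = R x := by
    intro x
    obtain ⟨y₀, hy₀⟩ := h (Set.mem_range_self x)
    refine ⟨y₀ - (K.orthogonalProjectionOnto y₀ : H),
      K.sub_starProjection_mem_orthogonal y₀, ?_⟩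
    have hk : ((K.orthogonalProjectionOnto y₀ : H)) ∈ K := (K.orthogonalProjectionOnto y₀).2
    have hSk : S (K.orthogonalProjectionOnto y₀ : H) = 0 := LinearMap.mem_ker.mp hk
    rw [map_sub, hSk, sub_zero, hy₀]
  have uniq : ∀ y y' : H, y ∈ Kᗮ → y' ∈ Kᗮ → S y = S y' → y = y' := by
    intro y y' hy hy' hS
    have h1 : y - y' ∈ K := LinearMap.mem_ker.mpr (by rw [map_sub, ContinuousLinearMap.coe_coe, hS, sub_self])
    have h2 : y - y' ∈ Kᗮ := Submodule.sub_mem _ hy hy'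
    have h0 : ⟪y - y', y - y'⟫_ℂ = 0 := (Submodule.mem_orthogonal K (y - y')).mp h2 _ h1
    have := inner_self_eq_zero.mp h0
    exact sub_eq_zero.mp this
  set g : H → H := fun x => (ex x).choose with hg
  have hg1 : ∀ x, g x ∈ Kᗮ := fun x => (ex x).choose_spec.1
  have hg2 : ∀ x, S (g x) = R x := fun x => (ex x).choose_spec.2
  have hadd : ∀ x y, g (x + y) = g x + g y := by
    intro x y
    refine uniq _ _ (hg1 _) (Submodule.add_mem _ (hg1 x) (hg1 y)) ?_
    rw [map_add, hg2, hg2, hg2, map_add]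
  have hsmul : ∀ (c : ℂ) (x : H), g (c • x) = c • g x := by
    intro c x
    refine uniq _ _ (hg1 _) (Submodule.smul_mem _ c (hg1 x)) ?_
    rw [map_smul, hg2, hg2, map_smul]
  set A₀ : H →ₗ[ℂ] H :=
    { toFun := g, map_add' := hadd, map_smul' := hsmul } with hA₀
  have hgraph : IsClosed (A₀.graph : Set (H × H)) := by
    have hset : (A₀.graph : Set (H × H)) =
        {p : H × H | S p.2 = R p.1} ∩ {p : H × H | p.2 ∈ Kᗮ} := by
      ext p
      simp only [SetLike.mem_coe, LinearMap.mem_graph_iff, Set.mem_inter_iff, Set.mem_setOf_eq]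
      constructor
      · intro hp
        have : p.2 = g p.1 := hp
        exact ⟨by rw [this, hg2], by rw [this]; exact hg1 _⟩
      · rintro ⟨h1, h2⟩
        exact uniq _ _ h2 (hg1 _) (h1.trans (hg2 p.1).symm)
    rw [hset]
    exact (isClosed_eq (S.continuous.comp continuous_snd)
        (R.continuous.comp continuous_fst)).inter
      (show IsClosed {p : H × H | p.2 ∈ Kᗮ} from K.isClosed_orthogonal.preimage continuous_snd)
  refine ⟨⟨A₀, A₀.continuous_of_isClosed_graph hgraph⟩, ?_⟩
  ext x
  exact (hg2 x).symm

/-- Douglas: majorization implies range inclusion of adjoints. -/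
lemma range_adjoint_subset_of_majorize (S R : H →L[ℂ] H) (l : ℝ) (hl : 0 ≤ l)
    (h : ∀ x, ‖S x‖ ≤ l * ‖R x‖) :
    Set.range (adjoint S) ⊆ Set.range (adjoint R) := by
  rintro _ ⟨u, rfl⟩
  have hker : ∀ x y : H, R x = R y → S x = S y := by
    intro x y hxy
    have h0 : ‖S (x - y)‖ ≤ l * ‖R (x - y)‖ := h _
    rw [map_sub, map_sub, hxy, sub_self, norm_zero, mul_zero] at h0
    exact sub_eq_zero.mp (norm_le_zero_iff.mp h0)
  have exy : ∀ y : LinearMap.range (R : H →ₗ[ℂ] H), ∃ x, R x = (y : H) := fun y => y.2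
  set g : LinearMap.range (R : H →ₗ[ℂ] H) → ℂ := fun y => ⟪u, S (exy y).choose⟫_ℂ with hgdef
  have hwd : ∀ (y : LinearMap.range (R : H →ₗ[ℂ] H)) (x : H), R x = (y : H) → ⟪u, S x⟫_ℂ = g y := by
    intro y x hx
    have : S x = S (exy y).choose := hker _ _ (by rw [hx, (exy y).choose_spec])
    rw [hgdef]; rw [this]
  set f₀ : LinearMap.range (R : H →ₗ[ℂ] H) →ₗ[ℂ] ℂ :=
    { toFun := g
      map_add' := by
        intro y y'
        show g (y + y') = g y + g y'
        rw [← hwd (y + y') ((exy y).choose + (exy y').choose)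
          (by rw [map_add, (exy y).choose_spec, (exy y').choose_spec]; rfl)]
        rw [← hwd y _ (exy y).choose_spec, ← hwd y' _ (exy y').choose_spec]
        rw [map_add, inner_add_right]
      map_smul' := by
        intro c y
        show g (c • y) = c • g y
        rw [← hwd (c • y) (c • (exy y).choose)
          (by rw [map_smul, (exy y).choose_spec]; rfl)]
        rw [← hwd y _ (exy y).choose_spec]
        rw [map_smul, inner_smul_right, smul_eq_mul] } with hf₀
  have hbound : ∀ y : LinearMap.range (R : H →ₗ[ℂ] H), ‖f₀ y‖ ≤ (l * ‖u‖) * ‖y‖ := by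
    intro y
    have h1 : ‖f₀ y‖ = ‖⟪u, S (exy y).choose⟫_ℂ‖ := rfl
    rw [h1]
    calc ‖⟪u, S (exy y).choose⟫_ℂ‖ ≤ ‖u‖ * ‖S (exy y).choose‖ := norm_inner_le_norm _ _
      _ ≤ ‖u‖ * (l * ‖R (exy y).choose‖) :=
          mul_le_mul_of_nonneg_left (h _) (norm_nonneg u)
      _ = (l * ‖u‖) * ‖(y : H)‖ := by rw [(exy y).choose_spec]; ring
      _ = (l * ‖u‖) * ‖y‖ := rfl
  set f : LinearMap.range (R : H →ₗ[ℂ] H) →L[ℂ] ℂ := LinearMap.mkContinuous f₀ (l * ‖u‖) hbound with hf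
  obtain ⟨gext, hgext, -⟩ := exists_extension_norm_eq (LinearMap.range (R : H →ₗ[ℂ] H)) f
  refine ⟨(InnerProductSpace.toDual ℂ H).symm gext, ?_⟩
  refine ext_inner_right ℂ fun x => ?_
  rw [adjoint_inner_left, adjoint_inner_left]
  have h1 : ⟪(InnerProductSpace.toDual ℂ H).symm gext, R x⟫_ℂ = gext (R x) := by
    rw [← InnerProductSpace.toDual_apply_apply]
    simp
  rw [h1]
  have h2 : gext (R x) = f ⟨R x, LinearMap.mem_range_self (R : H →ₗ[ℂ] H) x⟩ :=
    hgext ⟨R x, LinearMap.mem_range_self (R : H →ₗ[ℂ] H) x⟩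
  rw [h2]
  exact (hwd ⟨R x, LinearMap.mem_range_self (R : H →ₗ[ℂ] H) x⟩ x rfl).symm

lemma posinormal_of_factor (T : H →L[ℂ] H)
    (h : ∃ A : H →L[ℂ] H, T = adjoint T ∘L A) : Posinormal T := by
  obtain ⟨A, hA⟩ := h
  have hpos : (A ∘L adjoint A).IsPositive := by
    have := isPositive_one.conj_adjoint (T := (1 : H →L[ℂ] H)) A
    simpa [ContinuousLinearMap.one_def] using this
  refine ⟨A ∘L adjoint A, hpos, ?_⟩
  have hA' : ∀ x, adjoint T x = adjoint A (T x) := by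
    intro x
    have h2 : adjoint T = adjoint A ∘L T := by
      conv_lhs => rw [hA]
      rw [adjoint_comp, adjoint_adjoint]
    rw [h2]; rfl
  have hAfun : ∀ y, T y = adjoint T (A y) := by
    intro y
    conv_lhs => rw [hA]
    rfl
  ext x
  show T (adjoint T x) = adjoint T ((A ∘L adjoint A) (T x))
  rw [hA' x]
  exact hAfun (adjoint A (T x))

lemma posinormal_majorize (T : H →L[ℂ] H) (h : Posinormal T) :
    ∃ l : ℝ, 0 ≤ l ∧
      ((((l : ℂ) ^ 2) • (adjoint T ∘L T) - T ∘L adjoint T)).IsPositive := by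
  obtain ⟨P, hP, hPeq⟩ := h
  refine ⟨Real.sqrt ‖P‖, Real.sqrt_nonneg _, ?_, ?_⟩
  · have h1 : IsSelfAdjoint (adjoint T ∘L T) := by
      rw [ContinuousLinearMap.isSelfAdjoint_iff']
      rw [adjoint_comp, adjoint_adjoint]
    have h2 : IsSelfAdjoint (T ∘L adjoint T) := by
      rw [ContinuousLinearMap.isSelfAdjoint_iff']
      rw [adjoint_comp, adjoint_adjoint]
    have hc : star (((Real.sqrt ‖P‖ : ℝ) : ℂ) ^ 2) = ((Real.sqrt ‖P‖ : ℝ) : ℂ) ^ 2 := by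
      rw [star_pow, Complex.star_def, Complex.conj_ofReal]
    exact ((IsSelfAdjoint.smul hc h1).sub h2).isSymmetric
  · intro x
    rw [ContinuousLinearMap.reApplyInnerSelf_apply]
    have hsq : ((Real.sqrt ‖P‖ : ℝ) : ℂ) ^ 2 = ((‖P‖ : ℝ) : ℂ) := by
      rw [← Complex.ofReal_pow, Real.sq_sqrt (norm_nonneg P)]
    have hx : (T ∘L adjoint T) x = adjoint T (P (T x)) := by
      rw [hPeq]; rfl
    have e1 : ⟪((((Real.sqrt ‖P‖ : ℝ) : ℂ) ^ 2) • (adjoint T ∘L T) - T ∘L adjoint T) x, x⟫_ℂ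
        = (‖P‖ : ℂ) * (‖T x‖ : ℂ) ^ 2 - ⟪P (T x), T x⟫_ℂ := by
      rw [ContinuousLinearMap.sub_apply, inner_sub_left,
        ContinuousLinearMap.smul_apply, inner_smul_left, hx, adjoint_inner_left, hsq]
      rw [show ⟪(adjoint T ∘L T) x, x⟫_ℂ = ⟪T x, T x⟫_ℂ by
        show ⟪adjoint T (T x), x⟫_ℂ = _; rw [adjoint_inner_left]]
      rw [inner_self_eq_norm_sq_to_K]
      push_cast
      simp [Complex.star_def, Complex.conj_ofReal]
    rw [RCLike.re_to_complex, e1]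
    have e2 : ((‖P‖ : ℂ) * (‖T x‖ : ℂ) ^ 2 - ⟪P (T x), T x⟫_ℂ).re
        = ‖P‖ * ‖T x‖ ^ 2 - (⟪P (T x), T x⟫_ℂ).re := by
      rw [← Complex.ofReal_pow, ← Complex.ofReal_mul, Complex.sub_re, Complex.ofReal_re]
    rw [e2]
    have hb : (⟪P (T x), T x⟫_ℂ).re ≤ ‖P‖ * ‖T x‖ ^ 2 := by
      calc (⟪P (T x), T x⟫_ℂ).re ≤ ‖P (T x)‖ * ‖T x‖ := by
            rw [← RCLike.re_to_complex]; exact re_inner_le_norm _ _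
        _ ≤ (‖P‖ * ‖T x‖) * ‖T x‖ :=
            mul_le_mul_of_nonneg_right (P.le_opNorm _) (norm_nonneg _)
        _ = ‖P‖ * ‖T x‖ ^ 2 := by ring
    linarith

lemma majorize_range (T : H →L[ℂ] H)
    (h : ∃ l : ℝ, 0 ≤ l ∧
      ((((l : ℂ) ^ 2) • (adjoint T ∘L T) - T ∘L adjoint T)).IsPositive) :
    Set.range T ⊆ Set.range (adjoint T) := by
  obtain ⟨l, hl, hsa, hpos⟩ := h
  have hmaj : ∀ x, ‖adjoint T x‖ ≤ l * ‖T x‖ := by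
    intro x
    have h0 := hpos x
    rw [ContinuousLinearMap.reApplyInnerSelf_apply, RCLike.re_to_complex] at h0
    have e1 : (⟪((((l : ℂ) ^ 2) • (adjoint T ∘L T) - T ∘L adjoint T)) x, x⟫_ℂ).re
        = l ^ 2 * ‖T x‖ ^ 2 - ‖adjoint T x‖ ^ 2 := by
      rw [ContinuousLinearMap.sub_apply, inner_sub_left,
        ContinuousLinearMap.smul_apply, inner_smul_left]
      rw [show ⟪(adjoint T ∘L T) x, x⟫_ℂ = ⟪T x, T x⟫_ℂ by
        show ⟪adjoint T (T x), x⟫_ℂ = _; rw [adjoint_inner_left]]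
      rw [show ⟪(T ∘L adjoint T) x, x⟫_ℂ = ⟪adjoint T x, adjoint T x⟫_ℂ by
        show ⟪T (adjoint T x), x⟫_ℂ = _; rw [← adjoint_inner_right]]
      rw [inner_self_eq_norm_sq_to_K, inner_self_eq_norm_sq_to_K]
      push_cast
      simp [Complex.star_def, Complex.conj_ofReal, Complex.sub_re,
        ← Complex.ofReal_pow, ← Complex.ofReal_mul]
    rw [e1] at h0
    nlinarith [norm_nonneg (adjoint T x), norm_nonneg (T x),
      mul_nonneg hl (norm_nonneg (T x))]
  have := range_adjoint_subset_of_majorize (adjoint T) T l hl hmaj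
  rwa [adjoint_adjoint] at this

end Aux

open ContinuousLinearMap in
/-- Rhaly's characterizations of posinormality: `T` is posinormal iff
`Range(T) ⊆ Range(T*)`, iff `T T* ≤ λ² T* T` for some `λ ≥ 0`, iff `T = T* A`
for some bounded `A`. -/
theorem stmt3 {H : Type*} [NormedAddCommGroup H] [InnerProductSpace ℂ H] [CompleteSpace H]
    (T : H →L[ℂ] H) :
    (Posinormal T ↔ Set.range T ⊆ Set.range (ContinuousLinearMap.adjoint T)) ∧
    (Posinormal T ↔ ∃ l : ℝ, 0 ≤ l ∧
      ((((l : ℂ) ^ 2) • (ContinuousLinearMap.adjoint T ∘L T) -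
        T ∘L ContinuousLinearMap.adjoint T)).IsPositive) ∧
    (Posinormal T ↔ ∃ A : H →L[ℂ] H, T = ContinuousLinearMap.adjoint T ∘L A) := by
  have e13 : Set.range T ⊆ Set.range (adjoint T) →
      ∃ A : H →L[ℂ] H, T = adjoint T ∘L A :=
    fun h => factor_of_range_subset (adjoint T) T h
  refine ⟨⟨fun h => majorize_range T (posinormal_majorize T h),
      fun h => posinormal_of_factor T (e13 h)⟩,
    ⟨posinormal_majorize T,
      fun h => posinormal_of_factor T (e13 (majorize_range T h))⟩,
    ⟨fun h => e13 (majorize_range T (posinormal_majorize T h)),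
      posinormal_of_factor T⟩⟩
end
end

section
/- If T is a posinormal bounded operator on a Hilbert space H, then Kernel(T) ⊆ Kernel(T^*), and consequently Kernel(T) is a reducing subspace for T. -/
open Complex Metric
open scoped InnerProductSpace

noncomputable section

/-- If `T` is posinormal then `ker T ⊆ ker T*`; in particular `ker T` is a
reducing subspace for `T`. -/
theorem stmt4 {H : Type*} [NormedAddCommGroup H] [InnerProductSpace ℂ H] [CompleteSpace H]
    (T : H →L[ℂ] H) (hT : Posinormal T) :
    (∀ x : H, T x = 0 → ContinuousLinearMap.adjoint T x = 0) ∧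
    (∀ x ∈ LinearMap.ker (T : H →ₗ[ℂ] H), T x ∈ LinearMap.ker (T : H →ₗ[ℂ] H)) ∧
    (∀ x ∈ (LinearMap.ker (T : H →ₗ[ℂ] H))ᗮ, T x ∈ (LinearMap.ker (T : H →ₗ[ℂ] H))ᗮ) := by
  obtain ⟨P, _, hP⟩ := hT
  have key : ∀ x : H, T x = 0 → ContinuousLinearMap.adjoint T x = 0 := by
    intro x hx
    have h1 : T (ContinuousLinearMap.adjoint T x) = 0 := by
      have := congrArg (fun A : H →L[ℂ] H => A x) hP
      simpa [ContinuousLinearMap.comp_apply, hx] using this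
    have h2 : (⟪ContinuousLinearMap.adjoint T x, ContinuousLinearMap.adjoint T x⟫_ℂ) = 0 := by
      rw [ContinuousLinearMap.adjoint_inner_left, h1, inner_zero_right]
    exact inner_self_eq_zero.mp h2
  refine ⟨key, fun x hx => ?_, fun x hx => ?_⟩
  · simp [LinearMap.mem_ker] at hx ⊢
    simp [hx]
  · rw [Submodule.mem_orthogonal]
    intro y hy
    have hy' : T y = 0 := hy
    calc (⟪y, T x⟫_ℂ) = ⟪ContinuousLinearMap.adjoint T y, x⟫_ℂ := by
          rw [ContinuousLinearMap.adjoint_inner_left]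
      _ = 0 := by rw [key y hy', inner_zero_left]
end
end

section
/- Let ψ(z) = z² and φ(z) = a z with 0 < |a| < 1. Then the weighted composition-differentiation operator D_{ψ,φ} f = ψ · (f' ∘ φ) is bounded on H²(𝔻), acts as the unilateral weighted shift sending the monomial z^k to k a^{k-1} z^{k+1} (and 1 to 0), is posinormal, but is not normal. -/
open Complex Metric
open scoped InnerProductSpace
open scoped ENNReal

noncomputable section

namespace Aux

lemma summable_sq (f : H2) : Summable fun m => ‖f m‖ ^ 2 := by
  have := lp.memℓp f
  rw [memℓp_gen_iff (by norm_num : 0 < (2:ℝ≥0∞).toReal)] at this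
  simpa [ENNReal.toReal_ofNat, Real.rpow_natCast] using this

lemma tsum_sq (f : H2) : ∑' m, ‖f m‖ ^ 2 = ‖f‖ ^ 2 := by
  have := (lp.norm_rpow_eq_tsum (by norm_num : 0 < (2:ℝ≥0∞).toReal) f).symm
  simpa [ENNReal.toReal_ofNat, Real.rpow_natCast] using this

lemma mem2 {g : ℕ → ℂ} {u : ℕ → ℝ} (hu : Summable u) (h : ∀ m, ‖g m‖ ^ 2 ≤ u m) :
    Memℓp g 2 := by
  apply memℓp_gen
  have : Summable fun m => ‖g m‖ ^ 2 := hu.of_nonneg_of_le (fun m => by positivity) h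
  simpa [ENNReal.toReal_ofNat, Real.rpow_natCast] using this

lemma norm_le_of {G : H2} {c : ℝ} (hc : 0 ≤ c) (h : ∑' m, ‖G m‖ ^ 2 ≤ c ^ 2) : ‖G‖ ≤ c := by
  have h2 : ‖G‖ ^ 2 ≤ c ^ 2 := (tsum_sq G) ▸ h
  exact (pow_le_pow_iff_left₀ (norm_nonneg G) hc (by norm_num)).mp h2

def fwd (v : ℕ → ℂ) (f : ℕ → ℂ) : ℕ → ℂ := fun m => match m with
  | 0 => 0
  | k+1 => v k * f k

def bwd (v : ℕ → ℂ) (f : ℕ → ℂ) : ℕ → ℂ := fun k => v k * f (k + 1)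

def dia (v : ℕ → ℂ) (f : ℕ → ℂ) : ℕ → ℂ := fun k => v k * f k

variable {v : ℕ → ℂ} {B : ℝ}

lemma fwd_mem (hB : ∀ k, ‖v k‖ ≤ B) (f : H2) : Memℓp (fwd v (⇑f)) 2 := by
  apply mem2 (u := fun m => match m with | 0 => 0 | k+1 => B ^ 2 * ‖f k‖ ^ 2)
  · rw [← summable_nat_add_iff 1]
    exact (summable_sq f).mul_left _
  · intro m
    match m with
    | 0 => simp [fwd]
    | k+1 =>
      simp only [fwd, norm_mul, mul_pow]
      have h0 : (0:ℝ) ≤ ‖v k‖ := norm_nonneg _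
      gcongr
      exact hB k

lemma bwd_mem (hB : ∀ k, ‖v k‖ ≤ B) (f : H2) : Memℓp (bwd v (⇑f)) 2 := by
  apply mem2 (u := fun k => B ^ 2 * ‖f (k+1)‖ ^ 2)
  · exact ((summable_nat_add_iff 1).mpr (summable_sq f)).mul_left _
  · intro k
    simp only [bwd, norm_mul, mul_pow]
    have h0 : (0:ℝ) ≤ ‖v k‖ := norm_nonneg _
    gcongr
    exact hB k

lemma dia_mem (hB : ∀ k, ‖v k‖ ≤ B) (f : H2) : Memℓp (dia v (⇑f)) 2 := by
  apply mem2 (u := fun k => B ^ 2 * ‖f k‖ ^ 2)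
  · exact (summable_sq f).mul_left _
  · intro k
    simp only [dia, norm_mul, mul_pow]
    have h0 : (0:ℝ) ≤ ‖v k‖ := norm_nonneg _
    gcongr
    exact hB k

def fwdOp (v : ℕ → ℂ) (B : ℝ) (hB0 : 0 ≤ B) (hB : ∀ k, ‖v k‖ ≤ B) : H2 →L[ℂ] H2 :=
  LinearMap.mkContinuous
    { toFun := fun f => ⟨fwd v (⇑f), fwd_mem hB f⟩
      map_add' := fun f g => by
        apply lp.ext; funext m
        match m with
        | 0 => simp [fwd]; exact (add_zero (0:ℂ)).symm
        | k+1 => simp [fwd, lp.coeFn_add, mul_add]; rfl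
      map_smul' := fun c f => by
        apply lp.ext; funext m
        match m with
        | 0 => simp [fwd]
        | k+1 => simp [fwd, lp.coeFn_smul]; ring }
    B
    (by
      intro f
      apply norm_le_of (by positivity)
      have hu : Summable fun m => match m with | 0 => (0:ℝ) | k+1 => B ^ 2 * ‖f k‖ ^ 2 := by
        rw [← summable_nat_add_iff 1]
        exact (summable_sq f).mul_left _
      calc ∑' m, ‖fwd v (⇑f) m‖ ^ 2
          ≤ ∑' m, (match m with | 0 => (0:ℝ) | k+1 => B ^ 2 * ‖f k‖ ^ 2) := by
            apply Summable.tsum_le_tsum _ (summable_sq (⟨fwd v (⇑f), fwd_mem hB f⟩ : H2)) hu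
            intro m
            match m with
            | 0 => simp [fwd]
            | k+1 =>
              simp only [fwd, norm_mul, mul_pow]
              have h0 : (0:ℝ) ≤ ‖v k‖ := norm_nonneg _
              gcongr
              exact hB k
        _ = B ^ 2 * ‖f‖ ^ 2 := by
            rw [Summable.tsum_eq_zero_add hu]
            simp only [zero_add]
            rw [tsum_mul_left, tsum_sq]
        _ = (B * ‖f‖) ^ 2 := by ring)

set_option maxHeartbeats 1000000 in
def bwdOp (v : ℕ → ℂ) (B : ℝ) (hB0 : 0 ≤ B) (hB : ∀ k, ‖v k‖ ≤ B) : H2 →L[ℂ] H2 :=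
  LinearMap.mkContinuous
    { toFun := fun f => ⟨bwd v (⇑f), bwd_mem hB f⟩
      map_add' := fun f g => by
        apply lp.ext; funext k
        simp [bwd, lp.coeFn_add, mul_add]; rfl
      map_smul' := fun c f => by
        apply lp.ext; funext k
        simp [bwd, lp.coeFn_smul]; ring }
    B
    (by
      intro f
      apply norm_le_of (by positivity)
      have hu : Summable fun k => B ^ 2 * ‖f (k+1)‖ ^ 2 :=
        ((summable_nat_add_iff 1).mpr (summable_sq f)).mul_left _
      calc ∑' k, ‖bwd v (⇑f) k‖ ^ 2
          ≤ ∑' k, B ^ 2 * ‖f (k+1)‖ ^ 2 := by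
            apply Summable.tsum_le_tsum _ (summable_sq (⟨bwd v (⇑f), bwd_mem hB f⟩ : H2)) hu
            intro k
            simp only [bwd, norm_mul, mul_pow]
            have h0 : (0:ℝ) ≤ ‖v k‖ := norm_nonneg _
            gcongr
            exact hB k
        _ ≤ B ^ 2 * ‖f‖ ^ 2 := by
            rw [tsum_mul_left]
            have h1 : ∑' k, ‖f (k+1)‖ ^ 2 ≤ ‖f‖ ^ 2 := by
              rw [← tsum_sq f]
              exact Summable.tsum_le_tsum_of_inj (· + 1) (add_left_injective 1)
                (fun m _ => by positivity) (fun k => le_rfl)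
                ((summable_nat_add_iff 1).mpr (summable_sq f)) (summable_sq f)
            have hB2 : (0:ℝ) ≤ B ^ 2 := by positivity
            exact mul_le_mul_of_nonneg_left h1 hB2
        _ = (B * ‖f‖) ^ 2 := by ring)

def diaOp (v : ℕ → ℂ) (B : ℝ) (hB0 : 0 ≤ B) (hB : ∀ k, ‖v k‖ ≤ B) : H2 →L[ℂ] H2 :=
  LinearMap.mkContinuous
    { toFun := fun f => ⟨dia v (⇑f), dia_mem hB f⟩
      map_add' := fun f g => by
        apply lp.ext; funext k
        simp [dia, lp.coeFn_add, mul_add]; rfl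
      map_smul' := fun c f => by
        apply lp.ext; funext k
        simp [dia, lp.coeFn_smul]; ring }
    B
    (by
      intro f
      apply norm_le_of (by positivity)
      have hu : Summable fun k => B ^ 2 * ‖f k‖ ^ 2 := (summable_sq f).mul_left _
      calc ∑' k, ‖dia v (⇑f) k‖ ^ 2
          ≤ ∑' k, B ^ 2 * ‖f k‖ ^ 2 := by
            apply Summable.tsum_le_tsum _ (summable_sq (⟨dia v (⇑f), dia_mem hB f⟩ : H2)) hu
            intro k
            simp only [dia, norm_mul, mul_pow]
            have h0 : (0:ℝ) ≤ ‖v k‖ := norm_nonneg _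
            gcongr
            exact hB k
        _ = B ^ 2 * ‖f‖ ^ 2 := by rw [tsum_mul_left, tsum_sq]
        _ = (B * ‖f‖) ^ 2 := by ring)

@[simp] lemma fwdOp_apply (hB0 : 0 ≤ B) (hB : ∀ k, ‖v k‖ ≤ B) (f : H2) (m : ℕ) :
    (fwdOp v B hB0 hB f) m = fwd v (⇑f) m := rfl

@[simp] lemma bwdOp_apply (hB0 : 0 ≤ B) (hB : ∀ k, ‖v k‖ ≤ B) (f : H2) (m : ℕ) :
    (bwdOp v B hB0 hB f) m = bwd v (⇑f) m := rfl

@[simp] lemma diaOp_apply (hB0 : 0 ≤ B) (hB : ∀ k, ‖v k‖ ≤ B) (f : H2) (m : ℕ) :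
    (diaOp v B hB0 hB f) m = dia v (⇑f) m := rfl

def wt (a : ℂ) : ℕ → ℂ := fun k => (k : ℂ) * a ^ (k - 1)

lemma norm_wt (a : ℂ) (k : ℕ) : ‖wt a k‖ = (k : ℝ) * ‖a‖ ^ (k - 1) := by
  simp [wt, norm_mul, norm_pow]

lemma wt_summable {a : ℂ} (ha1 : ‖a‖ < 1) : Summable fun k => ‖wt a k‖ := by
  have h1 : Summable fun n : ℕ => (n : ℝ) ^ 1 * ‖a‖ ^ n :=
    summable_pow_mul_geometric_of_norm_lt_one 1 (by simpa using ha1)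
  have h2 : Summable fun n : ℕ => ‖a‖ ^ n :=
    summable_geometric_of_lt_one (norm_nonneg a) ha1
  apply (summable_nat_add_iff 1).mp
  apply ((h1.add h2).congr)
  intro n
  rw [norm_wt]
  push_cast
  ring

def Bnd (a : ℂ) : ℝ := ∑' k, ‖wt a k‖

lemma Bnd_nonneg (a : ℂ) : 0 ≤ Bnd a := tsum_nonneg fun k => norm_nonneg _

lemma wt_le_Bnd {a : ℂ} (ha1 : ‖a‖ < 1) (k : ℕ) : ‖wt a k‖ ≤ Bnd a :=
  Summable.le_tsum (wt_summable ha1) k fun j _ => norm_nonneg _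
lemma norm_conj_le {v : ℕ → ℂ} {B : ℝ} (hB : ∀ k, ‖v k‖ ≤ B) (k : ℕ) :
    ‖(starRingEnd ℂ) (v k)‖ ≤ B := by rw [RCLike.norm_conj]; exact hB k

lemma fwdOp_single (v : ℕ → ℂ) (B : ℝ) (hB0 : 0 ≤ B) (hB : ∀ k, ‖v k‖ ≤ B) (k : ℕ) :
    fwdOp v B hB0 hB (lp.single 2 k 1) = v k • (lp.single 2 (k+1) 1 : H2) := by
  apply lp.ext; funext m
  rw [lp.coeFn_smul, Pi.smul_apply]
  match m with
  | 0 =>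
    have h1 : fwdOp v B hB0 hB (lp.single 2 k 1) 0 = 0 := rfl
    rw [h1, lp.single_apply_ne 2 (k+1) _ (by omega : (0:ℕ) ≠ k+1)]
    simp
  | j+1 =>
    have h1 : fwdOp v B hB0 hB (lp.single 2 k 1) (j+1) = v j * (lp.single 2 k 1 : H2) j := rfl
    rw [h1]
    rcases eq_or_ne j k with rfl | h
    · rw [lp.single_apply_self, lp.single_apply_self]
      simp
    · rw [lp.single_apply_ne 2 k _ h, lp.single_apply_ne 2 (k+1) _ (by omega : j+1 ≠ k+1)]
      simp

lemma adjoint_fwdOp (v : ℕ → ℂ) (B : ℝ) (hB0 : 0 ≤ B) (hB : ∀ k, ‖v k‖ ≤ B) :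
    ContinuousLinearMap.adjoint (fwdOp v B hB0 hB) =
      bwdOp (fun k => (starRingEnd ℂ) (v k)) B hB0 (norm_conj_le hB) := by
  symm
  rw [ContinuousLinearMap.eq_adjoint_iff]
  intro x y
  have hs := lp.summable_inner (𝕜 := ℂ) x (fwdOp v B hB0 hB y)
  rw [lp.inner_eq_tsum, lp.inner_eq_tsum,
    Summable.tsum_eq_zero_add (G := ℂ) hs]
  have h0 : (⟪x 0, (fwdOp v B hB0 hB y) 0⟫_ℂ) = 0 := by
    simp [RCLike.inner_apply]
    left; rfl
  rw [h0, zero_add]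
  apply tsum_congr
  intro k
  simp only [RCLike.inner_apply, bwdOp_apply, fwdOp_apply, bwd, map_mul, RingHomCompTriple.comp_apply]
  have h2 : (fwd v (⇑y) (k+1)) = v k * y k := rfl
  rw [h2]
  simp only [RingHom.id_apply, starRingEnd_self_apply]
  ring
lemma diaOp_eq_adjoint (q : ℕ → ℝ) (B : ℝ) (hB0 : 0 ≤ B)
    (hB : ∀ k, ‖((q k : ℂ))‖ ≤ B) :
    diaOp (fun k => (q k : ℂ)) B hB0 hB =
      ContinuousLinearMap.adjoint (diaOp (fun k => (q k : ℂ)) B hB0 hB) := by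
  rw [ContinuousLinearMap.eq_adjoint_iff]
  intro x y
  rw [lp.inner_eq_tsum, lp.inner_eq_tsum]
  apply tsum_congr
  intro k
  have h1 : (diaOp (fun k => (q k : ℂ)) B hB0 hB x) k = (q k : ℂ) * x k := rfl
  have h2 : (diaOp (fun k => (q k : ℂ)) B hB0 hB y) k = (q k : ℂ) * y k := rfl
  rw [h1, h2]
  simp only [RCLike.inner_apply, map_mul, Complex.conj_ofReal]
  ring

lemma diaOp_isPositive (q : ℕ → ℝ) (hq : ∀ k, 0 ≤ q k) (B : ℝ) (hB0 : 0 ≤ B)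
    (hB : ∀ k, ‖((q k : ℂ))‖ ≤ B) :
    (diaOp (fun k => (q k : ℂ)) B hB0 hB).IsPositive := by
  set A := diaOp (fun k => (q k : ℂ)) B hB0 hB with hA
  constructor
  · rw [← ContinuousLinearMap.isSelfAdjoint_iff_isSymmetric, ContinuousLinearMap.isSelfAdjoint_iff']
    exact (diaOp_eq_adjoint q B hB0 hB).symm
  · intro x
    rw [ContinuousLinearMap.reApplyInnerSelf_apply]
    have h1 : (⟪A x, x⟫_ℂ) = ((∑' k, q k * ‖x k‖ ^ 2 : ℝ) : ℂ) := by
      rw [lp.inner_eq_tsum, Complex.ofReal_tsum]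
      apply tsum_congr
      intro k
      have h2 : (A x) k = (q k : ℂ) * x k := rfl
      rw [h2]
      simp only [RCLike.inner_apply, map_mul, Complex.conj_ofReal]
      rw [mul_left_comm, Complex.mul_conj, Complex.ofReal_mul]
      congr 1
      rw [Complex.normSq_eq_norm_sq]
    rw [h1, RCLike.re_to_complex, Complex.ofReal_re]
    exact tsum_nonneg fun k => mul_nonneg (hq k) (by positivity)
lemma summable_coeff (f : H2) {z : ℂ} (hz : ‖z‖ < 1) : Summable fun k => f k * z ^ k := by
  apply Summable.of_norm
  apply Summable.of_nonneg_of_le (fun k => norm_nonneg _) (fun k => ?_)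
    ((summable_geometric_of_lt_one (norm_nonneg z) hz).mul_left ‖f‖)
  rw [norm_mul, norm_pow]
  exact mul_le_mul_of_nonneg_right (lp.norm_apply_le_norm (by norm_num) f k) (by positivity)

lemma hasDerivAt_toFun (f : H2) {y : ℂ} (hy : ‖y‖ < 1) :
    HasDerivAt (H2.toFun f) (∑' k, f k * ((k : ℂ) * y ^ (k - 1))) y := by
  set r : ℝ := (1 + ‖y‖) / 2 with hr
  have hy0 := norm_nonneg y
  have hr1 : r < 1 := by rw [hr]; linarith
  have hr0 : 0 < r := by rw [hr]; linarith
  have hyr : ‖y‖ < r := by rw [hr]; linarith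
  have hu : Summable fun k : ℕ => ‖f‖ * ((k : ℝ) * r ^ (k - 1)) := by
    apply Summable.mul_left
    have h := wt_summable (a := (r : ℂ))
      (by rwa [Complex.norm_real, Real.norm_eq_abs, _root_.abs_of_nonneg hr0.le])
    apply h.congr
    intro k
    rw [norm_wt, Complex.norm_real, Real.norm_eq_abs, _root_.abs_of_nonneg hr0.le]
  have key := hasDerivAt_tsum_of_isPreconnected hu (isOpen_ball)
    ((convex_ball (0 : ℂ) r).isPreconnected)
    (g := fun k z => f k * z ^ k) (g' := fun k z => f k * ((k : ℂ) * z ^ (k - 1)))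
    (fun k z _ => (hasDerivAt_pow k z).const_mul (f k))
    (fun k z hz => by
      rw [norm_mul, norm_mul, norm_pow, Complex.norm_natCast]
      have hzr : ‖z‖ < r := mem_ball_zero_iff.mp hz
      have h1 : ‖f k‖ ≤ ‖f‖ := lp.norm_apply_le_norm (by norm_num) f k
      have h2 : ‖z‖ ^ (k - 1) ≤ r ^ (k - 1) := pow_le_pow_left₀ (norm_nonneg z) hzr.le _
      calc ‖f k‖ * ((k : ℝ) * ‖z‖ ^ (k - 1)) ≤ ‖f‖ * ((k : ℝ) * r ^ (k - 1)) := by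
            apply mul_le_mul h1 _ (by positivity) (norm_nonneg f)
            exact mul_le_mul_of_nonneg_left h2 (Nat.cast_nonneg k))
    (mem_ball_zero_iff.mpr (by rw [norm_zero]; exact hr0))
    (summable_coeff f (show ‖(0:ℂ)‖ < 1 by rw [norm_zero]; norm_num))
    (mem_ball_zero_iff.mpr hyr)
  exact key
end Aux

open Aux

/-- With `ψ(z) = z²` and `φ(z) = a z`, `0 < |a| < 1`: `D_{ψ,φ}` is bounded on `H²(𝔻)`,
sends `z^k` to `k a^(k-1) z^(k+1)` (and `1` to `0`), is posinormal, but is not normal. -/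
theorem stmt5 (a : ℂ) (ha0 : 0 < ‖a‖) (ha1 : ‖a‖ < 1) :
    ∃ T : H2 →L[ℂ] H2,
      IsWCD (fun z => z ^ 2) (fun z => a * z) 1 T ∧
      (∀ k : ℕ, T (lp.single 2 k 1) =
        ((k : ℂ) * a ^ (k - 1)) • (lp.single 2 (k + 1) 1 : H2)) ∧
      Posinormal T ∧
      ¬ (T ∘L ContinuousLinearMap.adjoint T = ContinuousLinearMap.adjoint T ∘L T) := by
  have hna1 : ‖a‖ < 1 := ha1
  have hna0 : 0 < ‖a‖ := ha0
  have ha : a ≠ 0 := by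
    intro h; rw [h] at hna0; simp at hna0
  set v := wt a with hv
  set B := Bnd a with hBdef
  have hB0 : 0 ≤ B := Bnd_nonneg a
  have hB : ∀ k, ‖v k‖ ≤ B := wt_le_Bnd hna1
  set T : H2 →L[ℂ] H2 := fwdOp v B hB0 hB with hT
  refine ⟨T, ?_, ?_, ?_, ?_⟩
  · -- IsWCD
    intro f z hz
    have hz1 : ‖z‖ < 1 := mem_ball_zero_iff.mp hz
    have haz : ‖a * z‖ < 1 := by
      rw [norm_mul]
      nlinarith [norm_nonneg a, norm_nonneg z]
    rw [iteratedDeriv_one, (hasDerivAt_toFun f haz).deriv]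
    show ∑' m, (T f) m * z ^ m = z ^ 2 * ∑' k, f k * ((k : ℂ) * (a * z) ^ (k - 1))
    rw [Summable.tsum_eq_zero_add (summable_coeff (T f) hz1), ← tsum_mul_left]
    have h0 : (T f) 0 = 0 := rfl
    rw [h0, zero_mul, zero_add]
    apply tsum_congr
    intro k
    have hk : (T f) (k + 1) = v k * f k := rfl
    rw [hk]
    match k with
    | 0 => simp [hv, wt]
    | j+1 =>
      rw [hv]
      simp only [wt, Nat.add_sub_cancel]
      push_cast
      rw [mul_pow]
      ring
  · -- single formula
    intro k
    exact fwdOp_single v B hB0 hB k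
  · -- posinormal
    set q : ℕ → ℝ := fun m => match m with
      | 0 => 0
      | 1 => 0
      | j+2 => (‖wt a (j+1)‖⁻¹ * ‖wt a j‖) ^ 2 with hq
    have hq0 : ∀ m, 0 ≤ q m := by
      intro m
      match m with
      | 0 => exact le_rfl
      | 1 => exact le_rfl
      | j+2 => positivity
    have hwz : ∀ j : ℕ, wt a (j+1) ≠ 0 := by
      intro j
      simp only [wt]
      apply mul_ne_zero
      · exact_mod_cast Nat.succ_ne_zero j
      · exact pow_ne_zero _ ha
    have hwn : ∀ j : ℕ, 0 < ‖wt a (j+1)‖ := fun j => norm_pos_iff.mpr (hwz j)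
    have hstep : ∀ j : ℕ, ‖wt a j‖ ≤ ‖a‖⁻¹ * ‖wt a (j+1)‖ := by
      intro j
      rw [norm_wt, norm_wt]
      simp only [Nat.add_sub_cancel]
      match j with
      | 0 =>
        simp only [Nat.cast_zero, zero_mul]
        positivity
      | i+1 =>
        have hne : ‖a‖ ≠ 0 := hna0.ne'
        have h2 : ‖a‖⁻¹ * (((i+1+1 : ℕ) : ℝ) * ‖a‖ ^ (i+1)) = ((i+1+1 : ℕ) : ℝ) * ‖a‖ ^ i := by
          rw [pow_succ]
          field_simp
        rw [h2]
        have h3 : ((i+1 : ℕ) : ℝ) ≤ ((i+1+1 : ℕ) : ℝ) := by exact_mod_cast Nat.le_succ _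
        exact mul_le_mul_of_nonneg_right h3 (by positivity)
    have hB20' : (0:ℝ) ≤ (‖a‖⁻¹) ^ 2 := by positivity
    have hqB : ∀ m, ‖((q m : ℝ) : ℂ)‖ ≤ (‖a‖⁻¹) ^ 2 := by
      intro m
      rw [Complex.norm_real, Real.norm_eq_abs, _root_.abs_of_nonneg (hq0 m)]
      match m with
      | 0 => exact hB20'
      | 1 => exact hB20'
      | j+2 =>
        show (‖wt a (j+1)‖⁻¹ * ‖wt a j‖) ^ 2 ≤ (‖a‖⁻¹) ^ 2
        have h1 : ‖wt a (j+1)‖⁻¹ * ‖wt a j‖ ≤ ‖a‖⁻¹ := by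
          rw [inv_mul_le_iff₀ (hwn j), mul_comm]
          exact hstep j
        have h2 : 0 ≤ ‖wt a (j+1)‖⁻¹ * ‖wt a j‖ := by positivity
        exact pow_le_pow_left₀ h2 h1 2
    have hB20 : (0:ℝ) ≤ (‖a‖⁻¹) ^ 2 := by positivity
    set P : H2 →L[ℂ] H2 := diaOp (fun m => ((q m : ℝ) : ℂ)) ((‖a‖⁻¹) ^ 2) hB20 hqB with hP
    refine ⟨P, diaOp_isPositive q hq0 _ hB20 hqB, ?_⟩
    rw [hT, adjoint_fwdOp]
    apply ContinuousLinearMap.ext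
    intro f
    apply lp.ext
    funext m
    simp only [ContinuousLinearMap.comp_apply]
    have hkey : ∀ k : ℕ, v k * (starRingEnd ℂ) (v k) =
        (starRingEnd ℂ) (v (k+1)) * (((q (k+2) : ℝ) : ℂ) * v (k+1)) := by
      intro k
      have e1 : wt a k * (starRingEnd ℂ) (wt a k) = ((‖wt a k‖ ^ 2 : ℝ) : ℂ) := by
        rw [Complex.mul_conj, Complex.normSq_eq_norm_sq]
      have e2 : (starRingEnd ℂ) (wt a (k+1)) * (((q (k+2) : ℝ) : ℂ) * wt a (k+1)) =
          ((q (k+2) * ‖wt a (k+1)‖ ^ 2 : ℝ) : ℂ) := by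
        rw [show (starRingEnd ℂ) (wt a (k+1)) * (((q (k+2) : ℝ) : ℂ) * wt a (k+1)) =
          ((q (k+2) : ℝ) : ℂ) * (wt a (k+1) * (starRingEnd ℂ) (wt a (k+1))) by ring]
        rw [Complex.mul_conj, Complex.normSq_eq_norm_sq]
        push_cast
        ring
      rw [hv, e1, e2]
      congr 1
      rw [show q (k+2) = (‖wt a (k+1)‖⁻¹ * ‖wt a k‖) ^ 2 from rfl]
      have hzn : ‖wt a (k+1)‖ ≠ 0 := (hwn k).ne'
      field_simp
    match m with
    | 0 =>
      have hL : (fwdOp v B hB0 hB) ((bwdOp (fun k => (starRingEnd ℂ) (v k)) B hB0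
          (norm_conj_le hB)) f) 0 = 0 := rfl
      have hR : ((bwdOp (fun k => (starRingEnd ℂ) (v k)) B hB0 (norm_conj_le hB))
          (P ((fwdOp v B hB0 hB) f))) 0 =
          (starRingEnd ℂ) (v 0) * (((q 1 : ℝ) : ℂ) * (v 0 * f 0)) := rfl
      rw [hL, hR]
      have hv0 : v 0 = 0 := by simp [hv, wt]
      rw [hv0]
      simp
    | k+1 =>
      have hL : (fwdOp v B hB0 hB) ((bwdOp (fun k => (starRingEnd ℂ) (v k)) B hB0
          (norm_conj_le hB)) f) (k+1) = v k * ((starRingEnd ℂ) (v k) * f (k+1)) := rfl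
      have hR : ((bwdOp (fun k => (starRingEnd ℂ) (v k)) B hB0 (norm_conj_le hB))
          (P ((fwdOp v B hB0 hB) f))) (k+1) =
          (starRingEnd ℂ) (v (k+1)) * (((q (k+2) : ℝ) : ℂ) * (v (k+1) * f (k+1))) := rfl
      rw [hL, hR, ← mul_assoc, hkey k]
      ring
  · -- not normal
    intro h
    rw [hT, adjoint_fwdOp] at h
    have h1 := congrArg (fun S : H2 →L[ℂ] H2 => (S (lp.single 2 1 1)) 1) h
    simp only [ContinuousLinearMap.comp_apply] at h1
    have hL : (fwdOp v B hB0 hB) ((bwdOp (fun k => (starRingEnd ℂ) (v k)) B hB0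
        (norm_conj_le hB)) (lp.single 2 1 1)) 1 =
        v 0 * ((starRingEnd ℂ) (v 0) * (lp.single 2 1 1 : H2) 1) := rfl
    have hR : ((bwdOp (fun k => (starRingEnd ℂ) (v k)) B hB0 (norm_conj_le hB))
        ((fwdOp v B hB0 hB) (lp.single 2 1 1))) 1 =
        (starRingEnd ℂ) (v 1) * (v 1 * (lp.single 2 1 1 : H2) 1) := rfl
    rw [hL, hR] at h1
    have hv0 : v 0 = 0 := by simp [hv, wt]
    have hv1 : v 1 = 1 := by simp [hv, wt]
    rw [hv0, hv1, lp.single_apply_self] at h1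
    simp at h1
end
end

section
/- Let ψ(z) = λ with λ ∈ ℂ \ {0} and φ(z) = a z with 0 < |a| < 1. Then the adjoint D_{ψ,φ}^* of the weighted composition-differentiation operator D_{ψ,φ} f = λ (f' ∘ φ) on H²(𝔻) acts on the monomial basis by D_{ψ,φ}^* z^k = (k+1) \overline{λ a^k} z^{k+1} for all k ≥ 0; consequently D_{ψ,φ}^* is a unilateral weighted shift with nonzero weights, so D_{ψ,φ} is coposinormal but not normal. -/
open Complex Metric
open scoped InnerProductSpace
open scoped ENNReal

noncomputable section

namespace Stmt8Aux

open scoped ComplexConjugate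

lemma H2summable_sq (f : H2) : Summable (fun k => ‖f k‖ ^ 2) := by
  have h : Memℓp (⇑f) 2 := lp.memℓp f
  rw [memℓp_gen_iff (by norm_num)] at h
  simp only [ENNReal.toReal_ofNat] at h
  rw [show ((2:ℝ)) = ((2:ℕ):ℝ) by norm_num] at h
  simp only [Real.rpow_natCast] at h
  exact_mod_cast h

lemma H2norm_sq (f : H2) : ‖f‖ ^ 2 = ∑' k, ‖f k‖ ^ 2 := by
  have h := lp.norm_rpow_eq_tsum (p := 2) (by norm_num) f
  simp only [ENNReal.toReal_ofNat] at h
  rw [show ((2:ℝ)) = ((2:ℕ):ℝ) by norm_num] at h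
  simp only [Real.rpow_natCast] at h
  exact_mod_cast h

lemma memlp_of_sq_summable {g : ℕ → ℂ} (h : Summable fun k => ‖g k‖ ^ 2) :
    Memℓp g 2 := by
  apply memℓp_gen
  have he : (fun k => ‖g k‖ ^ (2:ℝ≥0∞).toReal) = fun k => ‖g k‖ ^ 2 := by
    funext k
    rw [ENNReal.toReal_ofNat, show ((2:ℝ)) = ((2:ℕ):ℝ) by norm_num, Real.rpow_natCast]
  rw [he]
  exact h

lemma H2norm_le {f : H2} {B : ℝ} (hB : 0 ≤ B) (h : (∑' k, ‖f k‖ ^ 2) ≤ B ^ 2) : ‖f‖ ≤ B := by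
  have h2 : ‖f‖ ^ 2 ≤ B ^ 2 := by rw [H2norm_sq]; exact h
  exact (pow_le_pow_iff_left₀ (norm_nonneg f) hB (by norm_num)).mp h2

section op

variable (w : ℕ → ℂ) (σ : ℕ → ℕ) (C : ℝ)

lemma sq_summable_op (hw : ∀ k, ‖w k‖ ≤ C) (hσ : Function.Injective σ) (f : H2) : Summable (fun k => ‖w k * f (σ k)‖ ^ 2) := by
  refine Summable.of_nonneg_of_le (fun k => by positivity) (fun k => ?_)
    (((H2summable_sq f).comp_injective hσ).mul_left (C ^ 2))
  rw [norm_mul, mul_pow]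
  have h1 : ‖w k‖ ^ 2 ≤ C ^ 2 := by
    have := hw k
    have h0 : (0:ℝ) ≤ ‖w k‖ := norm_nonneg _
    nlinarith
  have h2 : (0:ℝ) ≤ ‖f (σ k)‖ ^ 2 := by positivity
  exact mul_le_mul_of_nonneg_right h1 h2

lemma memlp_op (hw : ∀ k, ‖w k‖ ≤ C) (hσ : Function.Injective σ) (f : H2) : Memℓp (fun k => w k * f (σ k)) 2 :=
  memlp_of_sq_summable (sq_summable_op w σ C hw hσ f)

/-- the generic "multiply and compose with an injection" operator -/
def op (hw : ∀ k, ‖w k‖ ≤ C) (hσ : Function.Injective σ) : H2 →L[ℂ] H2 :=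
  LinearMap.mkContinuous
    { toFun := fun f => (⟨fun k => w k * f (σ k), memlp_op w σ C hw hσ f⟩ : H2)
      map_add' := fun f g => by
        apply lp.ext
        funext k
        simp only [lp.coeFn_add, Pi.add_apply]
        change w k * (f (σ k) + g (σ k)) = w k * f (σ k) + w k * g (σ k)
        ring
      map_smul' := fun c f => by
        apply lp.ext
        funext k
        simp only [lp.coeFn_smul, Pi.smul_apply, RingHom.id_apply, smul_eq_mul]
        change w k * (c * f (σ k)) = c * (w k * f (σ k))
        ring }
    C
    (by
      intro f
      have hC0 : 0 ≤ C := le_trans (norm_nonneg _) (hw 0)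
      refine H2norm_le (by positivity) ?_
      have step1 : (∑' k, ‖w k * f (σ k)‖ ^ 2) ≤ ∑' k, C ^ 2 * ‖f (σ k)‖ ^ 2 := by
        refine Summable.tsum_le_tsum (fun k => ?_) (sq_summable_op w σ C hw hσ f)
          (((H2summable_sq f).comp_injective hσ).mul_left (C ^ 2))
        rw [norm_mul, mul_pow]
        have h1 : ‖w k‖ ^ 2 ≤ C ^ 2 := by
          have := hw k; have h0 : (0:ℝ) ≤ ‖w k‖ := norm_nonneg _; nlinarith
        exact mul_le_mul_of_nonneg_right h1 (by positivity)
      have step2 : (∑' k, ‖f (σ k)‖ ^ 2) ≤ ∑' n, ‖f n‖ ^ 2 :=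
        Summable.tsum_le_tsum_of_inj σ hσ (fun c _ => by positivity) (fun k => le_rfl)
          ((H2summable_sq f).comp_injective hσ) (H2summable_sq f)
      calc (∑' k, ‖(fun k => w k * f (σ k)) k‖ ^ 2)
          ≤ ∑' k, C ^ 2 * ‖f (σ k)‖ ^ 2 := step1
        _ = C ^ 2 * ∑' k, ‖f (σ k)‖ ^ 2 := tsum_mul_left
        _ ≤ C ^ 2 * ∑' n, ‖f n‖ ^ 2 := by
            exact mul_le_mul_of_nonneg_left step2 (by positivity)
        _ = (C * ‖f‖) ^ 2 := by rw [mul_pow, H2norm_sq]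
      )

@[simp] lemma op_apply (f : H2) (k : ℕ) : (op w σ C hw hσ f) k = w k * f (σ k) := rfl

end op

section up

/-- the coefficient function of the "shift up by one and multiply" operator -/
def upFun (w : ℕ → ℂ) (f : ℕ → ℂ) : ℕ → ℂ
  | 0 => 0
  | (m + 1) => conj (w m) * f m

variable (w : ℕ → ℂ) (C : ℝ)

lemma sq_summable_up (hw : ∀ k, ‖w k‖ ≤ C) (f : H2) : Summable (fun k => ‖upFun w f k‖ ^ 2) := by
  rw [← summable_nat_add_iff 1]
  refine Summable.of_nonneg_of_le (fun k => by positivity) (fun k => ?_)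
    ((H2summable_sq f).mul_left (C ^ 2))
  show ‖conj (w k) * f k‖ ^ 2 ≤ C ^ 2 * ‖f k‖ ^ 2
  rw [norm_mul, mul_pow, RCLike.norm_conj]
  have h1 : ‖w k‖ ^ 2 ≤ C ^ 2 := by
    have := hw k; have h0 : (0:ℝ) ≤ ‖w k‖ := norm_nonneg _; nlinarith
  exact mul_le_mul_of_nonneg_right h1 (by positivity)

lemma memlp_up (hw : ∀ k, ‖w k‖ ≤ C) (f : H2) : Memℓp (upFun w f) 2 :=
  memlp_of_sq_summable (sq_summable_up w C hw f)

set_option maxHeartbeats 1000000 in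
/-- the "shift up by one and multiply by conjugated weights" operator -/
def up (hw : ∀ k, ‖w k‖ ≤ C) : H2 →L[ℂ] H2 :=
  LinearMap.mkContinuous
    { toFun := fun f => (⟨upFun w f, memlp_up w C hw f⟩ : H2)
      map_add' := fun f g => by
        apply lp.ext
        funext k
        simp only [lp.coeFn_add, Pi.add_apply]
        match k with
        | 0 => simp [upFun]
        | (m+1) =>
          show conj (w m) * ((f + g) m) = conj (w m) * f m + conj (w m) * g m
          rw [lp.coeFn_add]
          simp [mul_add]
      map_smul' := fun c f => by
        apply lp.ext
        funext k
        simp only [lp.coeFn_smul, Pi.smul_apply, RingHom.id_apply, smul_eq_mul]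
        match k with
        | 0 => simp [upFun]
        | (m+1) =>
          show conj (w m) * ((c • f) m) = c * (conj (w m) * f m)
          rw [lp.coeFn_smul]
          simp only [Pi.smul_apply, smul_eq_mul]
          ring }
    C
    (by
      intro f
      have hC0 : 0 ≤ C := le_trans (norm_nonneg _) (hw 0)
      refine H2norm_le (by positivity) ?_
      show (∑' k, ‖upFun w (⇑f) k‖ ^ 2) ≤ (C * ‖f‖) ^ 2
      have hsum := sq_summable_up w C hw f
      have h0 : ∑' k, ‖upFun w f k‖ ^ 2 = ∑' k, ‖upFun w f (k + 1)‖ ^ 2 := by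
        rw [Summable.tsum_eq_zero_add hsum]
        simp [upFun]
      rw [h0]
      have step1 : (∑' k, ‖upFun w f (k + 1)‖ ^ 2) ≤ ∑' k, C ^ 2 * ‖f k‖ ^ 2 := by
        refine Summable.tsum_le_tsum (fun k => ?_) ((summable_nat_add_iff 1).2 hsum)
          ((H2summable_sq f).mul_left (C ^ 2))
        show ‖conj (w k) * f k‖ ^ 2 ≤ C ^ 2 * ‖f k‖ ^ 2
        rw [norm_mul, mul_pow, RCLike.norm_conj]
        have h1 : ‖w k‖ ^ 2 ≤ C ^ 2 := by
          have := hw k; have h0 : (0:ℝ) ≤ ‖w k‖ := norm_nonneg _; nlinarith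
        exact mul_le_mul_of_nonneg_right h1 (by positivity)
      calc (∑' k, ‖upFun w f (k + 1)‖ ^ 2)
          ≤ ∑' k, C ^ 2 * ‖f k‖ ^ 2 := step1
        _ = C ^ 2 * ∑' k, ‖f k‖ ^ 2 := tsum_mul_left
        _ = (C * ‖f‖) ^ 2 := by rw [mul_pow, H2norm_sq]
      )

@[simp] lemma up_apply (f : H2) (k : ℕ) : (up w C hw f) k = upFun w f k := rfl

end up


section main

variable (l a : ℂ)

/-- weights of the operator `T = D_{ψ,φ}` -/
def wT : ℕ → ℂ := fun k => l * ((k : ℂ) + 1) * a ^ k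

lemma norm_wT (k : ℕ) : ‖wT l a k‖ = ‖l‖ * ((k : ℝ) + 1) * ‖a‖ ^ k := by
  unfold wT
  rw [norm_mul, norm_mul, norm_pow]
  congr 2
  rw [show ((k : ℂ) + 1) = (((k : ℝ) + 1 : ℝ) : ℂ) by push_cast; ring, Complex.norm_real,
    Real.norm_of_nonneg (by positivity)]

lemma summable_geomaux (ha1 : ‖a‖ < 1) : Summable (fun k : ℕ => ((k : ℝ) + 1) * ‖a‖ ^ k) := by
  have hn : ‖(‖a‖ : ℝ)‖ < 1 := by rwa [Real.norm_of_nonneg (norm_nonneg a)]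
  have h1 : Summable (fun n : ℕ => (n : ℝ) ^ 1 * ‖a‖ ^ n) :=
    summable_pow_mul_geometric_of_norm_lt_one 1 hn
  have h2 : Summable (fun n : ℕ => ‖a‖ ^ n) :=
    summable_geometric_of_lt_one (norm_nonneg a) ha1
  exact (h1.add h2).congr fun n => by ring

/-- uniform bound for the weights -/
def CT : ℝ := ‖l‖ * ∑' k : ℕ, ((k : ℝ) + 1) * ‖a‖ ^ k

lemma hwT (ha1 : ‖a‖ < 1) : ∀ k, ‖wT l a k‖ ≤ CT l a := by
  intro k
  rw [norm_wT, CT, mul_assoc]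
  refine mul_le_mul_of_nonneg_left ?_ (norm_nonneg l)
  exact Summable.le_tsum (summable_geomaux a ha1) k (fun j _ => by positivity)

/-- the operator `T` -/
def T (ha1 : ‖a‖ < 1) : H2 →L[ℂ] H2 :=
  op (wT l a) (fun k => k + 1) (CT l a) (hwT l a ha1) (fun x y h => by simpa using h)

/-- the operator that will be shown to equal `adjoint T` -/
def S (ha1 : ‖a‖ < 1) : H2 →L[ℂ] H2 := up (wT l a) (CT l a) (hwT l a ha1)

lemma single_coe (i j : ℕ) (c : ℂ) :
    (lp.single 2 i c : H2) j = if j = i then c else 0 := by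
  rcases eq_or_ne j i with rfl | h
  · simp [lp.single_apply_self]
  · rw [lp.single_apply_ne (E := fun _ : ℕ => ℂ) 2 i c h, if_neg h]

lemma adjoint_T (ha1 : ‖a‖ < 1) :
    ContinuousLinearMap.adjoint (T l a ha1) = S l a ha1 := by
  symm
  rw [ContinuousLinearMap.eq_adjoint_iff]
  intro x y
  simp only [lp.inner_eq_tsum, RCLike.inner_apply']
  have hsL : Summable fun i => (starRingEnd ℂ) ((S l a ha1 x) i) * y i := by
    have := lp.summable_inner (𝕜 := ℂ) (S l a ha1 x) y
    simpa only [RCLike.inner_apply'] using this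
  rw [Summable.tsum_eq_zero_add hsL]
  have h0 : (starRingEnd ℂ) ((S l a ha1 x) 0) = 0 := by
    show (starRingEnd ℂ) (upFun (wT l a) (⇑x) 0) = 0
    simp [upFun]
  rw [h0, zero_mul, zero_add]
  refine tsum_congr fun k => ?_
  show (starRingEnd ℂ) ((starRingEnd ℂ) (wT l a k) * x k) * y (k + 1) =
    (starRingEnd ℂ) (x k) * (wT l a k * y (k + 1))
  rw [map_mul, Complex.conj_conj]
  ring

lemma S_single (ha1 : ‖a‖ < 1) (k : ℕ) :
    S l a ha1 (lp.single 2 k 1) =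
      (((k : ℂ) + 1) * (starRingEnd ℂ) (l * a ^ k)) • (lp.single 2 (k + 1) 1 : H2) := by
  apply lp.ext
  funext j
  rw [lp.coeFn_smul]
  match j with
  | 0 =>
    show (0 : ℂ) = (((k : ℂ) + 1) * (starRingEnd ℂ) (l * a ^ k)) •
      (lp.single 2 (k + 1) (1:ℂ) : H2) 0
    rw [single_coe, if_neg (show (0:ℕ) ≠ k + 1 by omega)]
    simp
  | (m + 1) =>
    show (starRingEnd ℂ) (wT l a m) * (lp.single 2 k (1:ℂ) : H2) m =
      (((k : ℂ) + 1) * (starRingEnd ℂ) (l * a ^ k)) •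
        (lp.single 2 (k + 1) (1:ℂ) : H2) (m + 1)
    rcases eq_or_ne m k with rfl | hmk
    · rw [single_coe, single_coe, if_pos rfl, if_pos rfl]
      simp only [smul_eq_mul, mul_one]
      unfold wT
      simp only [map_mul, map_add, map_one, map_pow, Complex.conj_natCast]
      ring
    · rw [single_coe, single_coe, if_neg hmk, if_neg (show m + 1 ≠ k + 1 by omega)]
      simp

/-- diagonal entries of the intertwining positive operator -/
def pR : ℕ → ℝ := fun j => if j ≤ 1 then 0 else (‖wT l a (j - 2)‖ / ‖wT l a (j - 1)‖) ^ 2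

/-- complex version -/
def wP : ℕ → ℂ := fun j => ((pR l a j : ℝ) : ℂ)

lemma pR_nonneg (j : ℕ) : 0 ≤ pR l a j := by
  unfold pR
  split <;> positivity

lemma wT_ne (hl : l ≠ 0) (ha : a ≠ 0) (k : ℕ) : wT l a k ≠ 0 := by
  unfold wT
  apply mul_ne_zero (mul_ne_zero hl ?_) (pow_ne_zero _ ha)
  have : (0:ℝ) < (k:ℝ) + 1 := by positivity
  intro h
  rw [show ((k : ℂ) + 1) = (((k : ℝ) + 1 : ℝ) : ℂ) by push_cast; ring] at h
  exact absurd (Complex.ofReal_eq_zero.mp h) (by positivity)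

lemma pR_le (hl : l ≠ 0) (ha : a ≠ 0) (j : ℕ) : pR l a j ≤ (‖a‖⁻¹) ^ 2 := by
  unfold pR
  split
  · positivity
  · rename_i hj
    have ha' : (0:ℝ) < ‖a‖ := norm_pos_iff.mpr ha
    obtain ⟨m, rfl⟩ : ∃ m, j = m + 2 := ⟨j - 2, by omega⟩
    simp only [Nat.add_sub_cancel, show m + 2 - 1 = m + 1 by omega]
    have hu : (0:ℝ) < ‖wT l a (m + 1)‖ := norm_pos_iff.mpr (wT_ne l a hl ha _)
    have hratio : ‖wT l a m‖ / ‖wT l a (m + 1)‖ ≤ ‖a‖⁻¹ := by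
      rw [div_le_iff₀ hu, norm_wT, norm_wT]
      rw [inv_mul_eq_div, le_div_iff₀ ha']
      push_cast
      rw [pow_succ]
      have h1 : (0:ℝ) ≤ ‖l‖ * ‖a‖ ^ m * ‖a‖ := by positivity
      nlinarith [norm_nonneg l, pow_nonneg (norm_nonneg a) m, ha'.le,
        mul_nonneg (norm_nonneg l) (pow_nonneg (norm_nonneg a) m)]
    have h0 : (0:ℝ) ≤ ‖wT l a m‖ / ‖wT l a (m + 1)‖ := by positivity
    exact pow_le_pow_left₀ h0 hratio 2

lemma hwP (hl : l ≠ 0) (ha : a ≠ 0) : ∀ j, ‖wP l a j‖ ≤ (‖a‖⁻¹) ^ 2 := by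
  intro j
  rw [wP, Complex.norm_real, Real.norm_of_nonneg (pR_nonneg l a j)]
  exact pR_le l a hl ha j

/-- the positive operator `P` -/
def P (hl : l ≠ 0) (ha : a ≠ 0) : H2 →L[ℂ] H2 :=
  op (wP l a) id ((‖a‖⁻¹) ^ 2) (hwP l a hl ha) Function.injective_id

lemma P_selfAdjoint (hl : l ≠ 0) (ha : a ≠ 0) : IsSelfAdjoint (P l a hl ha) := by
  rw [ContinuousLinearMap.isSelfAdjoint_iff']
  symm
  rw [ContinuousLinearMap.eq_adjoint_iff]
  intro x y
  simp only [lp.inner_eq_tsum, RCLike.inner_apply']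
  refine tsum_congr fun k => ?_
  show (starRingEnd ℂ) (wP l a k * x k) * y k = (starRingEnd ℂ) (x k) * (wP l a k * y k)
  rw [map_mul, wP, Complex.conj_ofReal]
  ring

lemma P_pos (hl : l ≠ 0) (ha : a ≠ 0) :
    ∀ x, 0 ≤ (P l a hl ha).reApplyInnerSelf x := by
  intro x
  rw [ContinuousLinearMap.reApplyInnerSelf]
  rw [show (inner ℂ (P l a hl ha x) x : ℂ) = ∑' k, inner ℂ ((P l a hl ha x) k) (x k) from rfl]
  rw [RCLike.re_tsum _ (lp.summable_inner (𝕜 := ℂ) (P l a hl ha x) x)]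
  refine tsum_nonneg fun k => ?_
  have : (inner ℂ ((P l a hl ha x) k) (x k) : ℂ) =
      ((pR l a k * Complex.normSq (x k) : ℝ) : ℂ) := by
    rw [RCLike.inner_apply']
    show (starRingEnd ℂ) (wP l a k * x k) * x k = _
    rw [map_mul, wP, Complex.conj_ofReal, mul_assoc,
      show (starRingEnd ℂ) (x k) * x k = x k * (starRingEnd ℂ) (x k) from mul_comm _ _,
      Complex.mul_conj]
    push_cast
    ring
  rw [this]
  simpa using mul_nonneg (pR_nonneg l a k) (Complex.normSq_nonneg _)

lemma conj_mul_self' (z : ℂ) : (starRingEnd ℂ) z * z = ((‖z‖ ^ 2 : ℝ) : ℂ) := by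
  rw [mul_comm, Complex.mul_conj, Complex.normSq_eq_norm_sq]

lemma comp_identity (hl : l ≠ 0) (ha : a ≠ 0) (ha1 : ‖a‖ < 1) :
    S l a ha1 ∘L T l a ha1 = T l a ha1 ∘L (P l a hl ha ∘L S l a ha1) := by
  ext f k
  simp only [ContinuousLinearMap.comp_apply]
  match k with
  | 0 =>
    show (0 : ℂ) = wT l a 0 * (wP l a 1 * upFun (wT l a) (⇑f) 1)
    have : wP l a 1 = 0 := by
      rw [wP, pR]
      norm_num
    rw [this]
    ring
  | (m + 1) =>
    show (starRingEnd ℂ) (wT l a m) * (wT l a m * f (m + 1)) =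
      wT l a (m + 1) * (wP l a (m + 2) * ((starRingEnd ℂ) (wT l a (m + 1)) * f (m + 1)))
    have hu : wT l a (m + 1) ≠ 0 := wT_ne l a hl ha _
    have hu' : ‖wT l a (m + 1)‖ ≠ 0 := norm_ne_zero_iff.mpr hu
    have hwp : wP l a (m + 2) = ((‖wT l a m‖ ^ 2 / ‖wT l a (m + 1)‖ ^ 2 : ℝ) : ℂ) := by
      simp only [wP, pR, if_neg (show ¬ (m + 2 ≤ 1) by omega),
        show m + 2 - 2 = m by omega, show m + 2 - 1 = m + 1 by omega, div_pow]
    rw [hwp]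
    calc (starRingEnd ℂ) (wT l a m) * (wT l a m * f (m + 1))
        = ((starRingEnd ℂ) (wT l a m) * wT l a m) * f (m + 1) := by ring
      _ = ((‖wT l a m‖ ^ 2 : ℝ) : ℂ) * f (m + 1) := by rw [conj_mul_self']
      _ = ((‖wT l a (m+1)‖ ^ 2 : ℝ) : ℂ) *
            (((‖wT l a m‖ ^ 2 / ‖wT l a (m + 1)‖ ^ 2 : ℝ) : ℂ) * f (m + 1)) := by
          rw [← mul_assoc, ← Complex.ofReal_mul]
          congr 2
          rw [mul_comm, div_mul_cancel₀ _ (pow_ne_zero 2 hu')]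
      _ = ((starRingEnd ℂ) (wT l a (m+1)) * wT l a (m+1)) *
            (((‖wT l a m‖ ^ 2 / ‖wT l a (m + 1)‖ ^ 2 : ℝ) : ℂ) * f (m + 1)) := by
          rw [conj_mul_self']
      _ = wT l a (m + 1) * (((‖wT l a m‖ ^ 2 / ‖wT l a (m + 1)‖ ^ 2 : ℝ) : ℂ) *
            ((starRingEnd ℂ) (wT l a (m + 1)) * f (m + 1))) := by ring

lemma isWCD_T (ha1 : ‖a‖ < 1) : IsWCD (fun _ => l) (fun z => a * z) 1 (T l a ha1) := by
  intro f z hz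
  rw [mem_ball_zero_iff] at hz
  set y := a * z with hy
  have hy1 : ‖y‖ < 1 := by
    rw [hy, norm_mul]
    calc ‖a‖ * ‖z‖ < 1 * 1 := mul_lt_mul'' ha1 hz (norm_nonneg _) (norm_nonneg _)
      _ = 1 := one_mul 1
  set r : ℝ := (‖y‖ + 1) / 2 with hr
  have hy0 : (0:ℝ) ≤ ‖y‖ := norm_nonneg _
  have hr0 : 0 < r := by rw [hr]; linarith
  have hr1 : r < 1 := by rw [hr]; linarith
  have hyr : ‖y‖ < r := by rw [hr]; linarith
  have hrnorm : ‖r‖ < 1 := by rwa [Real.norm_of_nonneg hr0.le]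
  have husum : Summable (fun n : ℕ => (n : ℝ) * r ^ (n - 1)) := by
    rw [← summable_nat_add_iff 1]
    have h1 : Summable (fun n : ℕ => (n : ℝ) ^ 1 * r ^ n) :=
      summable_pow_mul_geometric_of_norm_lt_one 1 hrnorm
    have h2 : Summable (fun n : ℕ => r ^ n) := summable_geometric_of_lt_one hr0.le hr1
    exact (h1.add h2).congr fun n => by
      simp only [Nat.add_sub_cancel]
      push_cast
      ring
  have hu : Summable (fun n : ℕ => ‖f‖ * ((n : ℝ) * r ^ (n - 1))) := husum.mul_left _
  have hbound : ∀ n : ℕ, ∀ x ∈ ball (0:ℂ) r,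
      ‖f n * ((n : ℂ) * x ^ (n - 1))‖ ≤ ‖f‖ * ((n : ℝ) * r ^ (n - 1)) := by
    intro n x hx
    rw [mem_ball_zero_iff] at hx
    rw [norm_mul, norm_mul, norm_pow, Complex.norm_natCast]
    have h1 : ‖f n‖ ≤ ‖f‖ := lp.norm_apply_le_norm two_ne_zero f n
    have h2 : ‖x‖ ^ (n - 1) ≤ r ^ (n - 1) := pow_le_pow_left₀ (norm_nonneg _) hx.le _
    gcongr
  have hder : HasDerivAt (fun x : ℂ => ∑' n, f n * x ^ n)
      (∑' n, f n * ((n : ℂ) * y ^ (n - 1))) y := by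
    refine hasDerivAt_tsum_of_isPreconnected hu isOpen_ball
      (convex_ball (0:ℂ) r).isPreconnected
      (fun n x _ => (hasDerivAt_pow n x).const_mul (f n)) hbound
      (mem_ball_self hr0) ?_ (mem_ball_zero_iff.mpr hyr)
    refine summable_of_ne_finset_zero (s := ({0} : Finset ℕ)) fun n hn => ?_
    simp only [Finset.mem_singleton] at hn
    simp [zero_pow hn]
  have hderiv : deriv (H2.toFun f) y = ∑' n, f n * ((n : ℂ) * y ^ (n - 1)) :=
    HasDerivAt.deriv hder
  show H2.toFun (T l a ha1 f) z = l * iteratedDeriv 1 (H2.toFun f) (a * z)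
  rw [← hy, iteratedDeriv_one, hderiv]
  have hs : Summable (fun n : ℕ => f n * ((n : ℂ) * y ^ (n - 1))) :=
    Summable.of_norm_bounded hu (fun n => hbound n y (mem_ball_zero_iff.mpr hyr))
  rw [Summable.tsum_eq_zero_add hs]
  simp only [Nat.cast_zero, zero_mul, mul_zero, zero_add]
  rw [← tsum_mul_left]
  show (∑' k, (T l a ha1 f) k * z ^ k) = _
  refine tsum_congr fun k => ?_
  show wT l a k * f (k + 1) * z ^ k =
    l * (f (k + 1) * (((k + 1 : ℕ) : ℂ) * y ^ (k + 1 - 1)))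
  simp only [Nat.add_sub_cancel]
  rw [hy, mul_pow, wT]
  push_cast
  ring

lemma not_normal (hl : l ≠ 0) (ha1 : ‖a‖ < 1) :
    ¬ (T l a ha1 ∘L S l a ha1 = S l a ha1 ∘L T l a ha1) := by
  intro h
  have h2 := congrFun (congrArg (fun A : H2 →L[ℂ] H2 =>
    (⇑(A (lp.single 2 0 1)) : ℕ → ℂ)) h) 0
  simp only [ContinuousLinearMap.comp_apply] at h2
  have hL : (T l a ha1 (S l a ha1 (lp.single 2 0 1))) 0 = wT l a 0 * (starRingEnd ℂ) (wT l a 0) := by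
    show wT l a 0 * upFun (wT l a) _ 1 = _
    show wT l a 0 * ((starRingEnd ℂ) (wT l a 0) * (lp.single 2 0 (1:ℂ) : H2) 0) = _
    rw [lp.single_apply_self]
    ring
  have hR : (S l a ha1 (T l a ha1 (lp.single 2 0 1))) 0 = 0 := rfl
  rw [hL, hR] at h2
  rw [Complex.mul_conj] at h2
  have h3 : Complex.normSq (wT l a 0) = 0 := by exact_mod_cast h2
  have h4 : wT l a 0 = 0 := Complex.normSq_eq_zero.mp h3
  apply hl
  have : wT l a 0 = l := by unfold wT; simp
  rwa [this] at h4

end main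

end Stmt8Aux

/-- With `ψ ≡ λ ≠ 0` and `φ(z) = a z`, `0 < |a| < 1`: the adjoint of `D_{ψ,φ}` acts by
`D* z^k = (k+1) conj (λ a^k) z^(k+1)`, so `D_{ψ,φ}` is coposinormal but not normal. -/
theorem stmt8 (l a : ℂ) (hl : l ≠ 0) (ha0 : 0 < ‖a‖) (ha1 : ‖a‖ < 1) :
    ∃ T : H2 →L[ℂ] H2,
      IsWCD (fun _ => l) (fun z => a * z) 1 T ∧
      (∀ k : ℕ, ContinuousLinearMap.adjoint T (lp.single 2 k 1) =
        (((k : ℂ) + 1) * (starRingEnd ℂ) (l * a ^ k)) • (lp.single 2 (k + 1) 1 : H2)) ∧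
      Posinormal (ContinuousLinearMap.adjoint T) ∧
      ¬ (T ∘L ContinuousLinearMap.adjoint T = ContinuousLinearMap.adjoint T ∘L T) := by
  have ha1' : ‖a‖ < 1 := ha1
  have ha0' : (0:ℝ) < ‖a‖ := ha0
  have ha : a ≠ 0 := norm_pos_iff.mp ha0'
  refine ⟨Stmt8Aux.T l a ha1', Stmt8Aux.isWCD_T l a ha1', ?_, ?_, ?_⟩
  · intro k
    rw [Stmt8Aux.adjoint_T l a ha1']
    exact Stmt8Aux.S_single l a ha1' k
  · refine ⟨Stmt8Aux.P l a hl ha, ContinuousLinearMap.isPositive_def'.mpr ⟨Stmt8Aux.P_selfAdjoint l a hl ha, Stmt8Aux.P_pos l a hl ha⟩, ?_⟩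
    rw [ContinuousLinearMap.adjoint_adjoint, Stmt8Aux.adjoint_T l a ha1']
    exact Stmt8Aux.comp_identity l a hl ha ha1'
  · rw [Stmt8Aux.adjoint_T l a ha1']
    exact Stmt8Aux.not_normal l a hl ha1'
end
end

section
/- Let ψ(z) = z² and φ(z) = z²/2 on 𝔻. Then D_{ψ,φ} f = ψ · (f' ∘ φ) is bounded on H²(𝔻) and is not coposinormal: the function g(z) = z³ lies in Kernel(D_{ψ,φ}^*) but not in Kernel(D_{ψ,φ}). -/
open Complex Metric
open scoped ENNReal
open scoped InnerProductSpace

noncomputable section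

/-! ### Auxiliary definitions -/

/-- weight: `wt k = k / 2^(k-1)`. -/
noncomputable def wt (k : ℕ) : ℂ := (k : ℂ) / 2 ^ (k - 1)

lemma wt_zero : wt 0 = 0 := by simp [wt]

lemma wt_succ (n : ℕ) : wt (n + 1) = ((n : ℂ) + 1) / 2 ^ n := by
  simp [wt]

lemma wt_norm_le (k : ℕ) : ‖wt k‖ ≤ 2 := by
  rcases k with _ | n
  · simp [wt_zero]
  · rw [wt_succ]
    rw [norm_div]
    have h2 : ‖(2 : ℂ) ^ n‖ = 2 ^ n := by
      rw [norm_pow]; norm_num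
    have h1 : ‖(n : ℂ) + 1‖ = (n : ℝ) + 1 := by
      rw [show ((n : ℂ) + 1) = ((n + 1 : ℕ) : ℂ) by push_cast; ring]
      rw [Complex.norm_natCast]; push_cast; ring
    rw [h1, h2, div_le_iff₀ (by positivity)]
    have h := Nat.lt_two_pow_self (n := n)
    have hn : (n : ℝ) < 2 ^ n := by exact_mod_cast h
    have hp : (1:ℝ) ≤ 2 ^ n := by exact_mod_cast Nat.one_le_two_pow
    nlinarith

/-- The coefficient action of the operator. -/
noncomputable def Tfun (f : ℕ → ℂ) (m : ℕ) : ℂ :=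
  if m % 2 = 0 then wt (m / 2) * f (m / 2) else 0

lemma Tfun_two_mul (f : ℕ → ℂ) (k : ℕ) : Tfun f (2 * k) = wt k * f k := by
  simp [Tfun, Nat.mul_mod_right, Nat.mul_div_cancel_left _ (by norm_num : 0 < 2)]

lemma Tfun_odd (f : ℕ → ℂ) {m : ℕ} (hm : m % 2 = 1) : Tfun f m = 0 := by
  simp [Tfun, hm]

lemma Tfun_norm_sq_le (f : ℕ → ℂ) (m : ℕ) :
    ‖Tfun f m‖ ^ (2 : ℝ) ≤ 4 * ‖f (m / 2)‖ ^ (2 : ℝ) := by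
  have key : ∀ x : ℝ, 0 ≤ x → x ^ (2:ℝ) = x ^ (2:ℕ) := fun x hx => by
    rw [show (2:ℝ) = ((2:ℕ):ℝ) by norm_num, Real.rpow_natCast]
  by_cases h : m % 2 = 0
  · simp only [Tfun, h, if_true]
    rw [key _ (norm_nonneg _), key _ (norm_nonneg _), norm_mul, mul_pow]
    have h1 := wt_norm_le (m / 2)
    have h3 : (0:ℝ) ≤ ‖wt (m / 2)‖ := norm_nonneg _
    have ha2 : ‖wt (m / 2)‖ ^ (2:ℕ) ≤ 4 := by nlinarith
    nlinarith [sq_nonneg (‖f (m / 2)‖), mul_le_mul_of_nonneg_right ha2 (sq_nonneg (‖f (m / 2)‖))]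
  · simp only [Tfun, h, if_false, norm_zero,
      Real.zero_rpow (by norm_num : (2:ℝ) ≠ 0)]
    positivity

lemma two_toReal : (2 : ℝ≥0∞).toReal = (2 : ℝ) := by simp

lemma summable_sq (f : H2) : Summable fun k => ‖f k‖ ^ (2 : ℝ) := by
  have := (lp.memℓp f).summable (by rw [two_toReal]; norm_num)
  rwa [two_toReal] at this

/-- Summability of the image sequence. -/
lemma Tfun_summable (f : H2) : Summable fun m => ‖Tfun (⇑f) m‖ ^ (2 : ℝ) := by
  have hinj : Function.Injective (fun k : ℕ => 2 * k) := fun a b h => by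
    simpa using h
  have hsupp : ∀ m, m ∉ Set.range (fun k : ℕ => 2 * k) →
      ‖Tfun (⇑f) m‖ ^ (2 : ℝ) = 0 := by
    intro m hm
    have hodd : m % 2 = 1 := by
      rcases Nat.mod_two_eq_zero_or_one m with h | h
      · exact absurd ⟨m / 2, show 2 * (m / 2) = m by omega⟩ hm
      · exact h
    rw [Tfun_odd _ hodd]
    simp [Real.zero_rpow (by norm_num : (2:ℝ) ≠ 0)]
  rw [← Function.Injective.summable_iff hinj hsupp]
  have hle : ∀ k, ‖Tfun (⇑f) (2 * k)‖ ^ (2:ℝ) ≤ 4 * ‖f k‖ ^ (2:ℝ) := by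
    intro k
    have := Tfun_norm_sq_le (⇑f) (2 * k)
    rwa [Nat.mul_div_cancel_left _ (by norm_num : 0 < 2)] at this
  exact Summable.of_nonneg_of_le (fun k => Real.rpow_nonneg (norm_nonneg _) _) hle
    ((summable_sq f).mul_left 4)

lemma Tfun_memℓp (f : H2) : Memℓp (Tfun (⇑f)) 2 :=
  memℓp_gen (by rw [two_toReal]; exact Tfun_summable f)

lemma Tfun_tsum_le (f : H2) :
    ∑' m, ‖Tfun (⇑f) m‖ ^ (2 : ℝ) ≤ 4 * ∑' k, ‖f k‖ ^ (2 : ℝ) := by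
  have hle : ∀ m, ‖Tfun (⇑f) m‖ ^ (2:ℝ) ≤ 4 * ‖f (m / 2)‖ ^ (2:ℝ) := Tfun_norm_sq_le (⇑f)
  have hinj : Function.Injective (fun k : ℕ => 2 * k) := fun a b h => by
    simpa using h
  have hsupp : ∀ m ∉ Set.range (fun k : ℕ => 2 * k),
      ‖Tfun (⇑f) m‖ ^ (2 : ℝ) = 0 := by
    intro m hm
    have hodd : m % 2 = 1 := by
      rcases Nat.mod_two_eq_zero_or_one m with h | h
      · exact absurd ⟨m / 2, show 2 * (m / 2) = m by omega⟩ hm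
      · exact h
    rw [Tfun_odd _ hodd]
    simp [Real.zero_rpow (by norm_num : (2:ℝ) ≠ 0)]
  rw [← Function.Injective.tsum_eq hinj
    (fun m hm => by_contra fun hc => hm (hsupp m hc))]
  have h1 : ∀ k, ‖Tfun (⇑f) (2 * k)‖ ^ (2:ℝ) ≤ 4 * ‖f k‖ ^ (2:ℝ) := by
    intro k
    have := Tfun_norm_sq_le (⇑f) (2 * k)
    rwa [Nat.mul_div_cancel_left _ (by norm_num : 0 < 2)] at this
  calc ∑' k, ‖Tfun (⇑f) (2 * k)‖ ^ (2:ℝ)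
      ≤ ∑' k, 4 * ‖f k‖ ^ (2:ℝ) := by
        apply Summable.tsum_le_tsum h1
        · exact (Tfun_summable f).comp_injective hinj
        · exact (summable_sq f).mul_left 4
    _ = 4 * ∑' k, ‖f k‖ ^ (2:ℝ) := tsum_mul_left

/-- The bounded operator `D_{ψ,φ}` on `H²`. -/
noncomputable def TD : H2 →L[ℂ] H2 :=
  LinearMap.mkContinuous
    { toFun := fun f => (⟨Tfun (⇑f), Tfun_memℓp f⟩ : H2)
      map_add' := by
        intro f g
        apply lp.ext
        funext m
        show Tfun (⇑(f + g)) m = Tfun (⇑f) m + Tfun (⇑g) m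
        rw [lp.coeFn_add]
        simp only [Tfun, Pi.add_apply]
        split_ifs <;> ring
      map_smul' := by
        intro c f
        apply lp.ext
        funext m
        show Tfun (⇑(c • f)) m = c • Tfun (⇑f) m
        rw [lp.coeFn_smul]
        simp only [Tfun, Pi.smul_apply, smul_eq_mul]
        split_ifs <;> ring }
    2
    (by
      intro f
      have hC : (0:ℝ) ≤ 2 * ‖f‖ := by positivity
      refine lp.norm_le_of_tsum_le (by rw [two_toReal]; norm_num) hC ?_
      rw [two_toReal]
      calc ∑' m, ‖Tfun (⇑f) m‖ ^ (2:ℝ) ≤ 4 * ∑' k, ‖f k‖ ^ (2:ℝ) := Tfun_tsum_le f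
        _ = (2 * ‖f‖) ^ (2:ℝ) := by
            have := lp.norm_rpow_eq_tsum (p := 2) (by rw [two_toReal]; norm_num) f
            rw [two_toReal] at this
            rw [← this]
            rw [show (2:ℝ) = ((2:ℕ):ℝ) by norm_num, Real.rpow_natCast,
              Real.rpow_natCast]
            ring)

lemma TD_apply_coe (f : H2) : ⇑(TD f) = Tfun (⇑f) := rfl

lemma TD_adjoint_single3 :
    ContinuousLinearMap.adjoint TD (lp.single 2 3 (1:ℂ)) = 0 := by
  refine ext_inner_left ℂ (fun v => ?_)
  rw [ContinuousLinearMap.adjoint_inner_right, inner_zero_right, lp.inner_single_right]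
  have h3 : (TD v) 3 = (0:ℂ) := by
    show Tfun (⇑v) 3 = 0
    exact Tfun_odd _ (by norm_num)
  rw [h3, inner_zero_left]

lemma TD_single3_ne : TD (lp.single 2 3 (1:ℂ)) ≠ 0 := by
  intro h
  have h6 : (TD (lp.single 2 3 (1:ℂ))) 6 = 0 := by
    rw [h]; exact congrFun (lp.coeFn_zero _ _) 6
  have h6' : (TD (lp.single 2 3 (1:ℂ))) 6 = wt 3 * 1 := by
    show Tfun (⇑(lp.single 2 3 (1:ℂ))) 6 = wt 3 * 1
    rw [show (6:ℕ) = 2 * 3 by norm_num, Tfun_two_mul, lp.single_apply_self]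
  rw [h6'] at h6
  have : wt 3 = (3:ℂ)/4 := by norm_num [wt]
  rw [this] at h6
  norm_num at h6

lemma TD_isWCD : IsWCD (fun z => z ^ 2) (fun z => z ^ 2 / 2) 1 TD := by
  intro f z hz
  have hz1 : ‖z‖ < 1 := by simpa [mem_ball, dist_eq_norm] using hz
  set g : ℂ → ℂ := H2.toFun f with hgdef
  set p : FormalMultilinearSeries ℂ ℂ ℂ := FormalMultilinearSeries.ofScalars ℂ (⇑f) with hp
  have hnorm : ∀ n, ‖p n‖ = ‖f n‖ := fun n => FormalMultilinearSeries.ofScalars_norm ℂ (⇑f) n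
  have hrad : (1 : ℝ≥0∞) ≤ p.radius := by
    have := p.le_radius_of_bound ‖f‖ (r := 1) (fun n => by
      rw [hnorm]
      simp only [NNReal.coe_one, one_pow, mul_one]
      exact lp.norm_apply_le_norm (by norm_num) f n)
    simpa using this
  have hgfun : g = p.sum := by
    funext y
    simp only [hgdef, H2.toFun, FormalMultilinearSeries.sum, hp,
      FormalMultilinearSeries.ofScalars_apply_eq, smul_eq_mul]
  have hg : HasFPowerSeriesOnBall g p 0 1 := by
    rw [hgfun]
    exact (p.hasFPowerSeriesOnBall (lt_of_lt_of_le zero_lt_one hrad)).mono zero_lt_one hrad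
  -- the left-hand side
  have hLHS : H2.toFun (TD f) z = ∑' n, wt (n+1) * f (n+1) * z ^ (2*n+2) := by
    have hinj : Function.Injective (fun n : ℕ => 2 * n + 2) := fun a b h => by
      simpa using h
    have hsupp : Function.support (fun m => Tfun (⇑f) m * z ^ m) ⊆
        Set.range (fun n : ℕ => 2 * n + 2) := by
      intro m hm
      have hT : Tfun (⇑f) m ≠ 0 := fun h0 => hm (by simp [h0])
      have hmod : m % 2 = 0 := by
        by_contra h
        exact hT (Tfun_odd _ (by omega))
      have hne : m / 2 ≠ 0 := by
        intro h0
        apply hT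
        simp only [Tfun, hmod, if_true, h0, wt_zero, zero_mul]
      exact ⟨m / 2 - 1, show 2 * (m / 2 - 1) + 2 = m by omega⟩
    have := Function.Injective.tsum_eq hinj hsupp (α := ℂ)
    rw [show H2.toFun (TD f) z = ∑' m, Tfun (⇑f) m * z ^ m from rfl, ← this]
    refine tsum_congr fun n => ?_
    have : (2 * n + 2 : ℕ) = 2 * (n + 1) := by ring
    rw [this, Tfun_two_mul]
  by_cases hz0 : z = 0
  · subst hz0
    rw [hLHS]
    have : ∀ n : ℕ, wt (n+1) * f (n+1) * (0:ℂ) ^ (2*n+2) = 0 := fun n => by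
      rw [zero_pow (by omega)]; ring
    simp only [this, tsum_zero]
    norm_num
  · set w : ℂ := z ^ 2 / 2 with hwdef
    have hw0 : w ≠ 0 := by
      simp only [hwdef, div_ne_zero_iff]
      exact ⟨pow_ne_zero _ hz0, by norm_num⟩
    have hwn : ‖w‖ < 1 := by
      rw [hwdef, norm_div, norm_pow]
      simp only [Complex.norm_ofNat]
      nlinarith [norm_nonneg z]
    have hwball : (‖w‖₊ : ℝ≥0∞) < 1 := by
      rw [← ENNReal.coe_one, ENNReal.coe_lt_coe]
      exact_mod_cast hwn
    have hwmem : w ∈ Metric.eball (0:ℂ) 1 := by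
      rw [Metric.mem_eball, edist_zero_right]
      exact hwball
    have hDiff : DifferentiableAt ℂ g w :=
      (hg.analyticAt_of_mem (by simpa using hwmem)).differentiableAt
    have hfd : HasFDerivWithinAt g (fderiv ℂ g w) (insert 0 Set.univ) (0 + w) := by
      rw [zero_add]
      exact hDiff.hasFDerivAt.hasFDerivWithinAt
    have huniq : UniqueDiffOn ℂ (insert (0:ℂ) Set.univ) := by
      rw [Set.insert_eq_self.mpr (Set.mem_univ _)]
      exact uniqueDiffOn_univ
    have hders : HasSum (fun n => p.derivSeries n fun _ => w) (fderiv ℂ g w) :=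
      (hasFPowerSeriesWithinOnBall_univ.mpr hg).hasSum_derivSeries_of_hasFDerivWithinAt
        hwball (by simp) hfd huniq
    have heval : HasSum (fun n => (p.derivSeries n fun _ => w) w) (fderiv ℂ g w w) := by
      have := hders.mapL (ContinuousLinearMap.apply ℂ ℂ w)
      simpa using this
    have hterm : ∀ n : ℕ, (p.derivSeries n fun _ => w) w
        = ((n:ℂ)+1) * (f (n+1) * w^(n+1)) := by
      intro n
      rw [FormalMultilinearSeries.derivSeries_apply_diag, hp,
        FormalMultilinearSeries.ofScalars_apply_eq]
      rw [smul_eq_mul, nsmul_eq_mul]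
      push_cast
      ring
    have heval2 : HasSum (fun n : ℕ => ((n:ℂ)+1) * (f (n+1) * w^(n+1))) (fderiv ℂ g w w) := by
      simpa only [hterm] using heval
    have hfderiv : fderiv ℂ g w w = w * deriv g w := by
      rw [← fderiv_apply_one_eq_deriv]
      calc fderiv ℂ g w w = fderiv ℂ g w (w • 1) := by rw [smul_eq_mul, mul_one]
        _ = w • fderiv ℂ g w 1 := (fderiv ℂ g w).map_smul w 1
        _ = w * fderiv ℂ g w 1 := smul_eq_mul _ _
    have htsum : ∑' n : ℕ, ((n:ℂ)+1) * (f (n+1) * w^(n+1)) = w * deriv g w := by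
      rw [heval2.tsum_eq, hfderiv]
    show H2.toFun (TD f) z = z ^ 2 * iteratedDeriv 1 g (z ^ 2 / 2)
    rw [iteratedDeriv_one, hLHS, ← hwdef]
    have hz2 : z ^ 2 = 2 * w := by rw [hwdef]; ring
    rw [hz2, mul_assoc, ← htsum, ← tsum_mul_left]
    refine tsum_congr fun n => ?_
    rw [wt_succ, hwdef, div_pow]
    have h2n : (2:ℂ) ^ n ≠ 0 := pow_ne_zero _ (by norm_num)
    field_simp
    ring

/-- With `ψ(z) = z²` and `φ(z) = z²/2`, `D_{ψ,φ}` is bounded on `H²(𝔻)` but not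
coposinormal: `g(z) = z³` lies in `ker D_{ψ,φ}*` but not in `ker D_{ψ,φ}`. -/
theorem stmt10 :
    ∃ T : H2 →L[ℂ] H2,
      IsWCD (fun z => z ^ 2) (fun z => z ^ 2 / 2) 1 T ∧
      ContinuousLinearMap.adjoint T (lp.single 2 3 1) = 0 ∧
      T (lp.single 2 3 1) ≠ 0 ∧
      ¬ Posinormal (ContinuousLinearMap.adjoint T) := by
  refine ⟨TD, TD_isWCD, TD_adjoint_single3, TD_single3_ne, ?_⟩
  rintro ⟨P, -, hP⟩
  rw [ContinuousLinearMap.adjoint_adjoint] at hP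
  have h0 : ContinuousLinearMap.adjoint TD (TD (lp.single 2 3 (1:ℂ))) = 0 := by
    have := congrArg (fun S => S (lp.single 2 3 (1:ℂ))) hP
    simp only [ContinuousLinearMap.comp_apply] at this
    rw [this, TD_adjoint_single3, map_zero, map_zero]
  have hinner : (⟪TD (lp.single 2 3 (1:ℂ)), TD (lp.single 2 3 (1:ℂ))⟫_ℂ) = 0 := by
    rw [← ContinuousLinearMap.adjoint_inner_left, h0, inner_zero_left]
  exact TD_single3_ne (inner_self_eq_zero.mp hinner)
end
end

section
/- Let ψ: 𝔻 → ℂ be analytic and not identically zero, φ a nonconstant analytic self-map of 𝔻, n ≥ 1, and suppose D_{ψ,φ,n} is bounded and coposinormal on H²(𝔻). Then ψ(w) ≠ 0 for every w ∈ 𝔻 \ {0}. -/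
open Complex Metric
open scoped InnerProductSpace

noncomputable section

/-- If `|a| < 1` and `|z| < 1` then `1 - a z ≠ 0`. -/
lemma oneSub_ne (a z : ℂ) (ha : ‖a‖ < 1) (hz : ‖z‖ < 1) : 1 - a * z ≠ 0 := by
  intro h
  have h1 : a * z = 1 := by linear_combination -h
  have : ‖a * z‖ < 1 := by
    calc ‖a * z‖ = ‖a‖ * ‖z‖ := norm_mul a z
    _ < 1 := by nlinarith [norm_nonneg a, norm_nonneg z]
  rw [h1, norm_one] at this
  exact lt_irrefl 1 this

/-- Derivative of `m! aᵐ (1-az)^{-(m+1)}`. -/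
lemma hasDerivAt_G (a : ℂ) (m : ℕ) (z : ℂ) (hc : 1 - a * z ≠ 0) :
    HasDerivAt (fun y => (Nat.factorial m : ℂ) * a ^ m * ((1 - a * y) ^ (m + 1))⁻¹)
      ((Nat.factorial (m + 1) : ℂ) * a ^ (m + 1) * ((1 - a * z) ^ (m + 2))⁻¹) z := by
  have h0 : HasDerivAt (fun y : ℂ => 1 - a * y) (-a) z := by
    simpa using ((hasDerivAt_id z).const_mul a).const_sub 1
  have h1 := ((h0.pow (m + 1)).inv (pow_ne_zero _ hc)).const_mul
    ((Nat.factorial m : ℂ) * a ^ m)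
  convert h1 using 1
  have hp : ((1 - a * z) ^ (m + 1)) ^ 2 = (1 - a * z) ^ (m + 2) * (1 - a * z) ^ m := by ring
  rotate_left 3
  simp only [Pi.pow_apply, Nat.add_sub_cancel, Nat.factorial_succ, Nat.cast_mul]
  field_simp [Nat.factorial_succ]
  ring
  all_goals rfl

/-- Iterated derivatives of the reproducing kernel function on the unit disk. -/
lemma iteratedDeriv_formula (a : ℂ) (ha : ‖a‖ < 1) (F : ℂ → ℂ)
    (hF : ∀ z ∈ ball (0 : ℂ) 1, F z = (1 - a * z)⁻¹) (m : ℕ) :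
    ∀ z ∈ ball (0 : ℂ) 1,
      iteratedDeriv m F z = (Nat.factorial m : ℂ) * a ^ m * ((1 - a * z) ^ (m + 1))⁻¹ := by
  induction m with
  | zero =>
    intro z hz
    simpa using hF z hz
  | succ m ih =>
    intro z hz
    rw [iteratedDeriv_succ]
    have heq : iteratedDeriv m F =ᶠ[nhds z]
        fun y => (Nat.factorial m : ℂ) * a ^ m * ((1 - a * y) ^ (m + 1))⁻¹ :=
      Filter.eventuallyEq_of_mem (isOpen_ball.mem_nhds hz) (fun y hy => ih y hy)
    rw [heq.deriv_eq]
    have hz' : ‖z‖ < 1 := by simpa [mem_ball_zero_iff] using hz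
    exact (hasDerivAt_G a m z (oneSub_ne a z ha hz')).deriv

/-- Key lemma: the statement with the structural hypotheses unfolded. -/
lemma stmt11_key (ψ φ : ℂ → ℂ)
    (hψ0 : ∃ z ∈ ball (0 : ℂ) 1, ψ z ≠ 0)
    (hφm : ∀ z ∈ ball (0 : ℂ) 1, φ z ∈ ball (0 : ℂ) 1)
    (n : ℕ)
    (T : H2 →L[ℂ] H2)
    (hT : ∀ f : H2, ∀ z ∈ ball (0 : ℂ) 1,
      H2.toFun (T f) z = ψ z * iteratedDeriv n (H2.toFun f) (φ z))
    (hcopos : ∃ P : H2 →L[ℂ] H2, P.IsPositive ∧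
      ContinuousLinearMap.adjoint T ∘L ContinuousLinearMap.adjoint (ContinuousLinearMap.adjoint T)
        = ContinuousLinearMap.adjoint (ContinuousLinearMap.adjoint T) ∘L P ∘L
            ContinuousLinearMap.adjoint T) :
    ∀ w ∈ ball (0 : ℂ) 1, w ≠ 0 → ψ w ≠ 0 := by
  intro w hw hw0 hpsiw
  set a : ℂ := (starRingEnd ℂ) w with ha
  have hwn : ‖w‖ < 1 := by simpa [mem_ball_zero_iff] using hw
  have han : ‖a‖ < 1 := by simpa [ha] using hwn
  -- the reproducing kernel at w
  have hmem : Memℓp (fun k : ℕ => a ^ k) 2 := by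
    apply memℓp_gen
    have h2 : ((2 : ENNReal)).toReal = 2 := by norm_num
    rw [h2]
    have : Summable (fun k : ℕ => (‖a‖ ^ 2) ^ k) :=
      summable_geometric_of_lt_one (by positivity) (by nlinarith [norm_nonneg a])
    refine this.congr fun k => ?_
    rw [norm_pow, ← pow_mul, show ((2:ℝ)) = ((2:ℕ):ℝ) by norm_num, Real.rpow_natCast,
      ← pow_mul, mul_comm]
  set K : H2 := ⟨fun k : ℕ => a ^ k, hmem⟩ with hK
  have hKapp : ∀ k : ℕ, K k = a ^ k := fun k => rfl
  -- toFun of K is geometric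
  have hKfun : ∀ z ∈ ball (0 : ℂ) 1, H2.toFun K z = (1 - a * z)⁻¹ := by
    intro z hz
    have hz' : ‖z‖ < 1 := by simpa [mem_ball_zero_iff] using hz
    have haz : ‖a * z‖ < 1 := by
      calc ‖a * z‖ = ‖a‖ * ‖z‖ := norm_mul a z
      _ < 1 := by nlinarith [norm_nonneg a, norm_nonneg z]
    calc H2.toFun K z = ∑' k, (a * z) ^ k := by
          unfold H2.toFun
          exact tsum_congr fun k => by rw [hKapp, mul_pow]
      _ = (1 - a * z)⁻¹ := tsum_geometric_of_norm_lt_one haz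
  -- inner against K gives evaluation at w
  have hinner : ∀ g : H2, ⟪K, g⟫_ℂ = H2.toFun g w := by
    intro g
    rw [lp.inner_eq_tsum]
    unfold H2.toFun
    refine tsum_congr fun k => ?_
    rw [hKapp]
    simp [RCLike.inner_apply, ha, ← map_pow, mul_comm]
  -- T* K = 0
  have hTadjK : ContinuousLinearMap.adjoint T K = 0 := by
    have h0 : ∀ f : H2, ⟪ContinuousLinearMap.adjoint T K, f⟫_ℂ = 0 := by
      intro f
      rw [ContinuousLinearMap.adjoint_inner_left, hinner, hT f w hw, hpsiw, zero_mul]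
    exact inner_self_eq_zero.mp (h0 _)
  -- coposinormality forces T K = 0
  have hTK : T K = 0 := by
    obtain ⟨P, -, hP⟩ := hcopos
    rw [ContinuousLinearMap.adjoint_adjoint] at hP
    have h1 : ContinuousLinearMap.adjoint T (T K) = 0 := by
      have := congrArg (fun S => S K) hP
      simp only [ContinuousLinearMap.comp_apply] at this
      rw [this, hTadjK, map_zero, map_zero]
    have h2 : ⟪T K, T K⟫_ℂ = 0 := by
      rw [← ContinuousLinearMap.adjoint_inner_left T, h1, inner_zero_left]
    exact inner_self_eq_zero.mp h2
  -- evaluate at a point where ψ ≠ 0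
  obtain ⟨z₀, hz₀, hz₀ψ⟩ := hψ0
  have hTfun : H2.toFun (T K) z₀ = 0 := by
    rw [hTK]
    unfold H2.toFun
    simp [lp.coeFn_zero]
  rw [hT K z₀ hz₀] at hTfun
  have hu := hφm z₀ hz₀
  have hun : ‖φ z₀‖ < 1 := by simpa [mem_ball_zero_iff] using hu
  rw [iteratedDeriv_formula a han (H2.toFun K) hKfun n (φ z₀) hu] at hTfun
  have ha0 : a ≠ 0 := by simpa [ha] using hw0
  have hne : (Nat.factorial n : ℂ) * a ^ n * ((1 - a * φ z₀) ^ (n + 1))⁻¹ ≠ 0 := by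
    apply mul_ne_zero (mul_ne_zero ?_ (pow_ne_zero _ ha0))
      (inv_ne_zero (pow_ne_zero _ (oneSub_ne a _ han hun)))
    exact_mod_cast Nat.factorial_ne_zero n
  exact hz₀ψ (by simpa [hne] using mul_eq_zero.mp hTfun)

/-- If `D_{ψ,φ,n}` is bounded and coposinormal, then `ψ(w) ≠ 0` for all `w ∈ 𝔻 \\ {0}`. -/
theorem stmt11 (ψ φ : ℂ → ℂ)
    (hψ : DifferentiableOn ℂ ψ (ball (0 : ℂ) 1))
    (hψ0 : ∃ z ∈ ball (0 : ℂ) 1, ψ z ≠ 0)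
    (hφ : DifferentiableOn ℂ φ (ball (0 : ℂ) 1))
    (hφm : ∀ z ∈ ball (0 : ℂ) 1, φ z ∈ ball (0 : ℂ) 1)
    (hφnc : ¬ ∃ c : ℂ, ∀ z ∈ ball (0 : ℂ) 1, φ z = c)
    (n : ℕ) (hn : 1 ≤ n)
    (T : H2 →L[ℂ] H2) (hT : IsWCD ψ φ n T)
    (hcopos : Posinormal (ContinuousLinearMap.adjoint T)) :
    ∀ w ∈ ball (0 : ℂ) 1, w ≠ 0 → ψ w ≠ 0 := by
  exact stmt11_key ψ φ hψ0 hφm n T hT hcopos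
end
end

section
/- Let ψ: 𝔻 → ℂ be analytic and not identically zero, φ a nonconstant analytic self-map of 𝔻, n ≥ 1, with D_{ψ,φ,n} bounded and coposinormal on H²(𝔻). Then 0 cannot be a zero of ψ of multiplicity greater than n; i.e., it is impossible that ψ^{(i)}(0) = 0 for all i = 0, 1, …, n. -/
open Complex Metric
open scoped InnerProductSpace

noncomputable section

lemma H2.hasFPowerSeries (g : H2) :
    HasFPowerSeriesOnBall (H2.toFun g) (FormalMultilinearSeries.ofScalars ℂ (fun k => g k)) 0 1 := by
  constructor
  · rw [show (1 : ENNReal) = ((1 : NNReal) : ENNReal) by simp]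
    apply FormalMultilinearSeries.le_radius_of_bound _ ‖g‖
    intro k
    rw [NNReal.coe_one, one_pow, mul_one]
    calc ‖FormalMultilinearSeries.ofScalars ℂ (fun k => g k) k‖
        ≤ ‖g k‖ * ‖ContinuousMultilinearMap.mkPiAlgebraFin ℂ k ℂ‖ := by
          rw [FormalMultilinearSeries.ofScalars]
          exact norm_smul_le (g k) (ContinuousMultilinearMap.mkPiAlgebraFin ℂ k ℂ)
      _ ≤ ‖g k‖ * 1 := by
          gcongr; exact ContinuousMultilinearMap.norm_mkPiAlgebraFin_le.trans (by simp)
      _ ≤ ‖g‖ := by rw [mul_one]; exact lp.norm_apply_le_norm (by norm_num) g k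
  · exact one_pos
  · intro y hy
    rw [mem_emetric_ball_zero_iff] at hy
    have hy' : ‖y‖ < 1 := by rw [enorm_eq_nnnorm] at hy; exact_mod_cast hy
    simp only [FormalMultilinearSeries.ofScalars_apply_eq, smul_eq_mul, zero_add]
    have hs : Summable (fun k => g k * y ^ k) := by
      apply Summable.of_norm_bounded (g := fun k => ‖g‖ * ‖y‖ ^ k)
        ((summable_geometric_of_lt_one (norm_nonneg y) hy').mul_left _)
      intro k
      rw [norm_mul, norm_pow]
      gcongr
      exact lp.norm_apply_le_norm (by norm_num) g k
    exact hs.hasSum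

lemma H2.iteratedDeriv_toFun_zero (g : H2) (n : ℕ) :
    iteratedDeriv n (H2.toFun g) 0 = (n.factorial : ℂ) * g n := by
  have h := (H2.hasFPowerSeries g).factorial_smul (1 : ℂ) n
  rw [FormalMultilinearSeries.ofScalars_apply_eq] at h
  rw [iteratedDeriv_eq_iteratedFDeriv, ← h]
  simp [nsmul_eq_mul]

lemma H2.analyticOnNhd (g : H2) : AnalyticOnNhd ℂ (H2.toFun g) (ball (0 : ℂ) 1) := by
  intro z hz
  apply (H2.hasFPowerSeries g).analyticAt_of_mem
  rw [mem_emetric_ball_zero_iff]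
  rw [mem_ball_zero_iff] at hz
  rw [enorm_eq_nnnorm]; exact_mod_cast hz

lemma analyticOnNhd_iteratedDeriv {f : ℂ → ℂ} {s : Set ℂ}
    (hf : AnalyticOnNhd ℂ f s) (n : ℕ) : AnalyticOnNhd ℂ (iteratedDeriv n f) s := by
  induction n with
  | zero => simpa [iteratedDeriv_zero] using hf
  | succ n ih => rw [iteratedDeriv_succ]; exact ih.deriv

lemma analyticAt_deriv {f : ℂ → ℂ} {x : ℂ} (h : AnalyticAt ℂ f x) :
    AnalyticAt ℂ (deriv f) x := by
  obtain ⟨s, hs, hso, hxs⟩ := _root_.mem_nhds_iff.mp h.eventually_analyticAt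
  have hA : AnalyticOnNhd ℂ f s := fun y hy => hs hy
  exact hA.deriv x hxs

lemma iteratedDerivWithin_of_isOpen' {f : ℂ → ℂ} {s : Set ℂ} (hso : IsOpen s) {x : ℂ}
    (hx : x ∈ s) (n : ℕ) : iteratedDerivWithin n f s x = iteratedDeriv n f x := by
  simp only [iteratedDerivWithin, iteratedDeriv, iteratedFDerivWithin_of_isOpen n hso hx]

lemma iteratedDeriv_add_analytic {f g : ℂ → ℂ} (hf : AnalyticAt ℂ f 0) (hg : AnalyticAt ℂ g 0)
    (n : ℕ) :
    iteratedDeriv n (fun z => f z + g z) 0 = iteratedDeriv n f 0 + iteratedDeriv n g 0 := by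
  obtain ⟨s, hs, hso, h0s⟩ := _root_.mem_nhds_iff.mp (hf.eventually_analyticAt.and hg.eventually_analyticAt)
  have hfs : AnalyticOnNhd ℂ f s := fun y hy => (hs hy).1
  have hgs : AnalyticOnNhd ℂ g s := fun y hy => (hs hy).2
  have hu : UniqueDiffOn ℂ s := hso.uniqueDiffOn
  rw [← iteratedDerivWithin_of_isOpen' hso h0s (f := fun z => f z + g z),
    ← iteratedDerivWithin_of_isOpen' hso h0s (f := f),
    ← iteratedDerivWithin_of_isOpen' hso h0s (f := g)]
  exact iteratedDerivWithin_add h0s hu (hfs.contDiffOn hu 0 h0s) (hgs.contDiffOn hu 0 h0s)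

lemma key_vanish : ∀ n : ℕ, ∀ ψ Φ : ℂ → ℂ, AnalyticAt ℂ ψ 0 → AnalyticAt ℂ Φ 0 →
    (∀ i ≤ n, iteratedDeriv i ψ 0 = 0) → iteratedDeriv n (fun z => ψ z * Φ z) 0 = 0 := by
  intro n
  induction n with
  | zero =>
    intro ψ Φ _ _ h
    have h0 : ψ 0 = 0 := by simpa using h 0 le_rfl
    simp [iteratedDeriv_zero, h0]
  | succ n ih =>
    intro ψ Φ hψ hΦ h
    rw [iteratedDeriv_succ']
    have hd : deriv (fun z => ψ z * Φ z) =ᶠ[nhds 0]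
        fun z => deriv ψ z * Φ z + ψ z * deriv Φ z := by
      filter_upwards [hψ.eventually_analyticAt, hΦ.eventually_analyticAt] with z h1 h2
      exact deriv_fun_mul h1.differentiableAt h2.differentiableAt
    rw [hd.iteratedDeriv_eq n]
    have hψ' : AnalyticAt ℂ (deriv ψ) 0 := analyticAt_deriv hψ
    have hΦ' : AnalyticAt ℂ (deriv Φ) 0 := analyticAt_deriv hΦ
    rw [iteratedDeriv_add_analytic (f := fun z => deriv ψ z * Φ z) (g := fun z => ψ z * deriv Φ z) (hψ'.mul hΦ) (hψ.mul hΦ') n]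
    have h1 : ∀ i ≤ n, iteratedDeriv i (deriv ψ) 0 = 0 := by
      intro i hi
      rw [← iteratedDeriv_succ']
      exact h (i + 1) (by omega)
    have h2 : ∀ i ≤ n, iteratedDeriv i ψ 0 = 0 := fun i hi => h i (by omega)
    rw [ih _ _ hψ' hΦ h1, ih _ _ hψ hΦ' h2, add_zero]

lemma iteratedDeriv_pow_self (n : ℕ) :
    iteratedDeriv n (fun z : ℂ => z ^ n) = fun _ => (n.factorial : ℂ) := by
  induction n with
  | zero => funext w; simp
  | succ n ih =>
    funext w
    rw [iteratedDeriv_succ']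
    have hder : deriv (fun z : ℂ => z ^ (n + 1)) = fun z => (n + 1 : ℂ) * z ^ n := by
      funext z
      rw [deriv_pow_field]
      push_cast
      ring_nf
    have hc : ContDiff ℂ (n : ℕ∞) (fun z : ℂ => z ^ n) := by
      exact contDiff_id.pow n
    rw [hder, ← iteratedDerivWithin_univ,
      iteratedDerivWithin_const_mul (Set.mem_univ w) uniqueDiffOn_univ _ (hc.contDiffOn.contDiffWithinAt (Set.mem_univ w)),
      iteratedDerivWithin_univ, ih]
    rw [Nat.factorial_succ]
    push_cast
    ring

/-- If `D_{ψ,φ,n}` is bounded and coposinormal, then `0` cannot be a zero of `ψ` of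
multiplicity greater than `n`: not all of `ψ(0), ψ'(0), …, ψ⁽ⁿ⁾(0)` can vanish. -/
theorem stmt12 (ψ φ : ℂ → ℂ)
    (hψ : DifferentiableOn ℂ ψ (ball (0 : ℂ) 1))
    (hψ0 : ∃ z ∈ ball (0 : ℂ) 1, ψ z ≠ 0)
    (hφ : DifferentiableOn ℂ φ (ball (0 : ℂ) 1))
    (hφm : ∀ z ∈ ball (0 : ℂ) 1, φ z ∈ ball (0 : ℂ) 1)
    (hφnc : ¬ ∃ c : ℂ, ∀ z ∈ ball (0 : ℂ) 1, φ z = c)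
    (n : ℕ) (hn : 1 ≤ n)
    (T : H2 →L[ℂ] H2) (hT : IsWCD ψ φ n T)
    (hcopos : Posinormal (ContinuousLinearMap.adjoint T)) :
    ¬ (∀ i ≤ n, iteratedDeriv i ψ 0 = 0) := by
  intro hzero
  classical
  set K : H2 := lp.single 2 n (1 : ℂ) with hKdef
  have hball : ball (0 : ℂ) 1 ∈ nhds (0 : ℂ) := isOpen_ball.mem_nhds (by simp)
  have hψA : AnalyticAt ℂ ψ 0 := hψ.analyticAt hball
  have hφA : AnalyticAt ℂ φ 0 := hφ.analyticAt hball
  have hfac : (n.factorial : ℂ) ≠ 0 := by exact_mod_cast n.factorial_ne_zero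
  -- Step 1: n-th coefficient of T f vanishes for every f
  have hcoeff : ∀ f : H2, (T f) n = 0 := by
    intro f
    have hΦA : AnalyticAt ℂ (fun z => iteratedDeriv n (H2.toFun f) (φ z)) 0 := by
      have h1 : AnalyticAt ℂ (iteratedDeriv n (H2.toFun f)) (φ 0) :=
        analyticOnNhd_iteratedDeriv (H2.analyticOnNhd f) n (φ 0) (hφm 0 (by simp))
      exact h1.comp hφA
    have hev : H2.toFun (T f) =ᶠ[nhds 0]
        fun z => ψ z * iteratedDeriv n (H2.toFun f) (φ z) := by
      filter_upwards [hball] with z hz using hT f z hz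
    have h0 : iteratedDeriv n (H2.toFun (T f)) 0 = 0 := by
      rw [hev.iteratedDeriv_eq n]
      exact key_vanish n ψ _ hψA hΦA hzero
    have h1 := H2.iteratedDeriv_toFun_zero (T f) n
    rw [h0] at h1
    exact (mul_eq_zero.mp h1.symm).resolve_left hfac
  -- inner product with K extracts the n-th coefficient
  have hK : ∀ g : H2, ⟪K, g⟫_ℂ = g n := by
    intro g
    rw [lp.inner_eq_tsum, tsum_eq_single n (fun b hb => by
      rw [hKdef, lp.single_apply_ne 2 n _ hb, inner_zero_left])]
    rw [hKdef, lp.single_apply_self]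
    simp [RCLike.inner_apply]
  -- Step 2: T* K = 0
  have hTstarK : ContinuousLinearMap.adjoint T K = 0 := by
    rw [← inner_self_eq_zero (𝕜 := ℂ), ContinuousLinearMap.adjoint_inner_left, hK]
    exact hcoeff _
  -- Step 3: T K = 0 via coposinormality
  obtain ⟨P, hP, heq⟩ := hcopos
  rw [ContinuousLinearMap.adjoint_adjoint] at heq
  have hTK : T K = 0 := by
    rw [← inner_self_eq_zero (𝕜 := ℂ)]
    have h2 : ⟪K, (ContinuousLinearMap.adjoint T ∘L T) K⟫_ℂ
        = ⟪K, (T ∘L P ∘L ContinuousLinearMap.adjoint T) K⟫_ℂ := by rw [heq]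
    simp only [ContinuousLinearMap.comp_apply] at h2
    rw [ContinuousLinearMap.adjoint_inner_right, hTstarK] at h2
    simpa using h2
  -- Step 4: contradiction
  have hKfun : ∀ w : ℂ, iteratedDeriv n (H2.toFun K) w = n.factorial := by
    have hfun : H2.toFun K = fun z => z ^ n := by
      funext z
      rw [H2.toFun, tsum_eq_single n (fun b hb => by
        rw [hKdef, lp.single_apply_ne 2 n _ hb, zero_mul])]
      rw [hKdef, lp.single_apply_self, one_mul]
    intro w
    rw [hfun, iteratedDeriv_pow_self n]
  obtain ⟨z₀, hz₀, hne⟩ := hψ0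
  have hmain := hT K z₀ hz₀
  rw [hTK] at hmain
  have hz : H2.toFun (0 : H2) z₀ = 0 := by simp [H2.toFun]
  rw [hz, hKfun (φ z₀)] at hmain
  exact hne ((mul_eq_zero.mp hmain.symm).resolve_right hfac)
end
end

section
/- Let ψ: 𝔻 → ℂ be analytic and not identically zero, φ a nonconstant analytic self-map of 𝔻, n ≥ 1, with D_{ψ,φ,n} bounded and coposinormal on H²(𝔻). Then φ is injective on 𝔻. -/
open Complex Metric
open scoped InnerProductSpace

noncomputable section

open scoped ENNReal
namespace Stmt13

/-- coefficient sequences of at most polynomial growth -/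
def Temp (c : ℕ → ℂ) : Prop := ∃ (C : ℝ) (m : ℕ), ∀ k, ‖c k‖ ≤ C * ((k : ℝ) + 1) ^ m

/-- the associated power series function -/
def G (c : ℕ → ℂ) (z : ℂ) : ℂ := ∑' k, c k * z ^ k

/-- shift of coefficients corresponding to differentiation -/
def shiftc (c : ℕ → ℂ) : ℕ → ℂ := fun k => ((k : ℂ) + 1) * c (k + 1)

lemma Temp.nonneg {c : ℕ → ℂ} {C : ℝ} {m : ℕ} (h : ∀ k, ‖c k‖ ≤ C * ((k : ℝ) + 1) ^ m) :
    0 ≤ C := by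
  have := (norm_nonneg (c 0)).trans (h 0)
  simpa using this

lemma Temp.shift {c : ℕ → ℂ} (hc : Temp c) : Temp (shiftc c) := by
  obtain ⟨C, m, h⟩ := hc
  refine ⟨C * 2 ^ m, m + 1, fun k => ?_⟩
  have h1 : ‖Stmt13.shiftc c k‖ = ((k : ℝ) + 1) * ‖c (k + 1)‖ := by
    have : ((k : ℂ) + 1) = ((k + 1 : ℕ) : ℂ) := by push_cast; ring
    rw [Stmt13.shiftc, norm_mul, this, Complex.norm_natCast]
    push_cast; ring
  have h2 : ‖c (k + 1)‖ ≤ C * ((k : ℝ) + 2) ^ m := by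
    have := h (k + 1); push_cast at this ⊢; convert this using 3; ring
  have h3 : ((k : ℝ) + 2) ^ m ≤ (2 * ((k : ℝ) + 1)) ^ m := by
    apply pow_le_pow_left₀ (by positivity)
    have : (0:ℝ) ≤ (k : ℝ) := Nat.cast_nonneg k
    linarith
  have hC : 0 ≤ C := Temp.nonneg h
  have hk1 : (0:ℝ) ≤ (k : ℝ) + 1 := by positivity
  calc ‖Stmt13.shiftc c k‖ = ((k : ℝ) + 1) * ‖c (k + 1)‖ := h1
    _ ≤ ((k : ℝ) + 1) * (C * ((k : ℝ) + 2) ^ m) := by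
        apply mul_le_mul_of_nonneg_left h2 hk1
    _ ≤ ((k : ℝ) + 1) * (C * (2 * ((k : ℝ) + 1)) ^ m) := by
        apply mul_le_mul_of_nonneg_left (mul_le_mul_of_nonneg_left h3 hC) hk1
    _ = C * 2 ^ m * ((k : ℝ) + 1) ^ (m + 1) := by rw [mul_pow, pow_succ]; ring
  
lemma summable_aux (m : ℕ) {r : ℝ} (h0 : 0 < r) (hr : r < 1) :
    Summable (fun k : ℕ => ((k : ℝ) + 1) ^ m * r ^ k) := by
  have h1 : Summable (fun k : ℕ => (k : ℝ) ^ m * r ^ k) :=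
    summable_pow_mul_geometric_of_norm_lt_one m (by rwa [Real.norm_eq_abs, abs_of_pos h0])
  have h2 : Summable (fun k : ℕ => ((k + 1 : ℕ) : ℝ) ^ m * r ^ (k + 1)) :=
    ((summable_nat_add_iff 1).2 h1)
  have h3 := h2.mul_left (1 / r)
  apply h3.congr
  intro k
  push_cast
  field_simp
  ring
lemma Temp.summable_norm {c : ℕ → ℂ} (hc : Temp c) {z : ℂ} (hz : ‖z‖ < 1) :
    Summable (fun k => ‖c k * z ^ k‖) := by
  obtain ⟨C, m, h⟩ := hc
  rcases eq_or_lt_of_le (norm_nonneg z) with h0 | h0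
  · apply summable_of_ne_finset_zero (s := {0})
    intro k hk
    simp only [Finset.mem_singleton] at hk
    have hz0 : z = 0 := by
      have := norm_eq_zero.mp h0.symm; exact this
    simp [hz0, zero_pow hk]
  · apply Summable.of_nonneg_of_le (fun k => norm_nonneg _)
      (fun k => ?_) ((summable_aux m h0 hz).mul_left C)
    rw [norm_mul, norm_pow, ← mul_assoc]
    exact mul_le_mul_of_nonneg_right (h k) (by positivity)

lemma Temp.summable {c : ℕ → ℂ} (hc : Temp c) {z : ℂ} (hz : ‖z‖ < 1) :
    Summable (fun k => c k * z ^ k) :=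
  Summable.of_norm (hc.summable_norm hz)

lemma hasDerivAt_G {c : ℕ → ℂ} (hc : Temp c) {z : ℂ} (hz : ‖z‖ < 1) :
    HasDerivAt (G c) (G (shiftc c) z) z := by
  obtain ⟨C, m, hCm⟩ := hc
  have hC : 0 ≤ C := Temp.nonneg hCm
  set r : ℝ := (‖z‖ + 1) / 2 with hr
  have hr0 : 0 < r := by positivity
  have hzr : ‖z‖ < r := by rw [hr]; linarith
  have hr1 : r < 1 := by rw [hr]; linarith
  -- the series of derivatives
  set u : ℕ → ℝ := fun k => C / r * (((k : ℝ) + 1) ^ (m + 1) * r ^ k) with hu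
  have hus : Summable u := (summable_aux (m + 1) hr0 hr1).mul_left _
  have key : ∀ k : ℕ, ∀ y ∈ ball (0 : ℂ) r,
      ‖c k * ((k : ℂ) * y ^ (k - 1))‖ ≤ u k := by
    intro k y hy
    rw [mem_ball, dist_zero_right] at hy
    rw [norm_mul, norm_mul, norm_pow, Complex.norm_natCast]
    rcases Nat.eq_zero_or_pos k with rfl | hk
    · simpa [hu] using by positivity
    · have h1 : ‖y‖ ^ (k - 1) ≤ r ^ (k - 1) :=
        pow_le_pow_left₀ (norm_nonneg y) hy.le _
      have h2 : (k : ℝ) ≤ (k : ℝ) + 1 := by linarith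
      have h3 : r ^ (k - 1) = r ^ k / r := by
        rw [eq_div_iff hr0.ne', ← pow_succ, Nat.sub_add_cancel hk]
      calc ‖c k‖ * ((k : ℝ) * ‖y‖ ^ (k - 1))
          ≤ (C * ((k : ℝ) + 1) ^ m) * (((k : ℝ) + 1) * (r ^ k / r)) := by
            apply mul_le_mul (hCm k) ?_ (by positivity) (by positivity)
            rw [← h3]
            exact mul_le_mul h2 h1 (by positivity) (by linarith)
        _ = u k := by rw [hu]; field_simp; ring
  have hder : ∀ k : ℕ, ∀ y ∈ ball (0 : ℂ) r,
      HasDerivAt (fun w => c k * w ^ k) (c k * ((k : ℂ) * y ^ (k - 1))) y := by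
    intro k y _
    exact (hasDerivAt_pow k y).const_mul (c k)
  have h0 : (0 : ℂ) ∈ ball (0 : ℂ) r := by simpa using hr0
  have hzball : z ∈ ball (0 : ℂ) r := by simpa [dist_zero_right] using hzr
  have hsum0 : Summable fun k : ℕ => c k * (0 : ℂ) ^ k := by
    apply summable_of_ne_finset_zero (s := {0})
    intro k hk
    simp only [Finset.mem_singleton] at hk
    simp [zero_pow hk]
  have H := hasDerivAt_tsum_of_isPreconnected hus isOpen_ball
    (convex_ball (0:ℂ) r).isPreconnected hder key h0 hsum0 hzball
  have hEq : (∑' k, c k * ((k : ℂ) * z ^ (k - 1))) = G (shiftc c) z := by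
    have hs : Summable fun k => c k * ((k : ℂ) * z ^ (k - 1)) := by
      apply Summable.of_norm
      exact Summable.of_nonneg_of_le (fun k => norm_nonneg _) (fun k => key k z hzball) hus
    rw [hs.tsum_eq_zero_add]
    simp only [Nat.cast_zero, pow_zero, Nat.add_sub_cancel]
    rw [G]
    simp only [Nat.cast_add, Nat.cast_one, shiftc]
    rw [zero_mul, mul_zero, zero_add]
    congr 1 with k
    push_cast
    ring
  rw [← hEq]
  exact H
lemma Temp.iterate {c : ℕ → ℂ} (hc : Temp c) (j : ℕ) : Temp (shiftc^[j] c) := by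
  induction j with
  | zero => exact hc
  | succ j ih => rw [Function.iterate_succ_apply']; exact ih.shift

lemma differentiableAt_G {c : ℕ → ℂ} (hc : Temp c) {z : ℂ} (hz : z ∈ ball (0 : ℂ) 1) :
    DifferentiableAt ℂ (G c) z := by
  rw [mem_ball, dist_zero_right] at hz
  exact (hasDerivAt_G hc hz).differentiableAt

lemma differentiableOn_G {c : ℕ → ℂ} (hc : Temp c) :
    DifferentiableOn ℂ (G c) (ball (0 : ℂ) 1) :=
  fun z hz => (differentiableAt_G hc hz).differentiableWithinAt

lemma analyticOnNhd_G {c : ℕ → ℂ} (hc : Temp c) :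
    AnalyticOnNhd ℂ (G c) (ball (0 : ℂ) 1) :=
  (differentiableOn_G hc).analyticOnNhd isOpen_ball

lemma iteratedDeriv_G {c : ℕ → ℂ} (hc : Temp c) (j : ℕ) :
    ∀ z ∈ ball (0 : ℂ) 1, iteratedDeriv j (G c) z = G (shiftc^[j] c) z := by
  induction j with
  | zero => intro z _; simp [iteratedDeriv_zero]
  | succ j ih =>
    intro z hz
    rw [iteratedDeriv_succ]
    have h1 : iteratedDeriv j (G c) =ᶠ[nhds z] G (shiftc^[j] c) := by
      filter_upwards [isOpen_ball.mem_nhds hz] with w hw using ih w hw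
    rw [h1.deriv_eq, Function.iterate_succ_apply']
    rw [mem_ball, dist_zero_right] at hz
    exact (hasDerivAt_G (hc.iterate j) hz).deriv

lemma shiftc_iter_apply (c : ℕ → ℂ) (j : ℕ) : ∀ k,
    shiftc^[j] c k = (∏ i ∈ Finset.range j, ((k + i + 1 : ℕ) : ℂ)) * c (k + j) := by
  induction j generalizing c with
  | zero => intro k; simp
  | succ j ih =>
    intro k
    rw [Function.iterate_succ_apply, ih (shiftc c) k, Finset.prod_range_succ]
    simp only [shiftc]
    push_cast
    ring_nf

lemma shiftc_iter_prod_ne_zero (j k : ℕ) :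
    (∏ i ∈ Finset.range j, ((k + i + 1 : ℕ) : ℂ)) ≠ 0 := by
  apply Finset.prod_ne_zero_iff.mpr
  intro i _
  exact Nat.cast_ne_zero.mpr (Nat.succ_ne_zero _)

lemma G_apply_zero (c : ℕ → ℂ) : G c 0 = c 0 := by
  rw [G, tsum_eq_single 0]
  · simp
  · intro k hk; simp [zero_pow hk]

lemma iteratedDeriv_congr_nhds {f g : ℂ → ℂ} {x : ℂ} (h : f =ᶠ[nhds x] g) (j : ℕ) :
    iteratedDeriv j f =ᶠ[nhds x] iteratedDeriv j g := by
  induction j with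
  | zero => simpa [iteratedDeriv_zero] using h
  | succ j ih =>
    have := ih.deriv
    simpa [iteratedDeriv_succ] using this

lemma iteratedDeriv_zero_fun (j : ℕ) : iteratedDeriv j (fun _ : ℂ => (0 : ℂ)) = fun _ => 0 := by
  induction j with
  | zero => simp [iteratedDeriv_zero]
  | succ j ih => rw [iteratedDeriv_succ, ih]; ext x; simp

/-- If `G c` vanishes on the unit ball then all coefficients vanish. -/
lemma coeff_eq_zero_of_G_eq_zero {c : ℕ → ℂ} (hc : Temp c)
    (h : ∀ z ∈ ball (0 : ℂ) 1, G c z = 0) (k : ℕ) : c k = 0 := by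
  have h1 : G c =ᶠ[nhds (0 : ℂ)] (fun _ => 0) := by
    filter_upwards [isOpen_ball.mem_nhds (by simp : (0:ℂ) ∈ ball (0:ℂ) 1)] with w hw using h w hw
  have h2 : iteratedDeriv k (G c) 0 = 0 := by
    rw [(iteratedDeriv_congr_nhds h1 k).eq_of_nhds, iteratedDeriv_zero_fun]
  rw [iteratedDeriv_G hc k 0 (by simp), G_apply_zero, shiftc_iter_apply] at h2
  have := shiftc_iter_prod_ne_zero k 0
  simp only [zero_add] at h2 ⊢
  exact (mul_eq_zero.mp h2).resolve_left (by simpa using this)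
lemma memℓp_of_bound {a : ℕ → ℂ} {C r : ℝ} (hr0 : 0 < r) (hr : r < 1) (m : ℕ)
    (h : ∀ k, ‖a k‖ ≤ C * ((k : ℝ) + 1) ^ m * r ^ k) : Memℓp a 2 := by
  apply memℓp_gen
  have h20 : (2 : ℝ≥0∞).toReal = ((2 : ℕ) : ℝ) := by simp
  have hmaj : Summable (fun k : ℕ => C ^ 2 * (((k : ℝ) + 1) ^ (2 * m) * (r ^ 2) ^ k)) :=
    (summable_aux (2 * m) (by positivity) (by nlinarith)).mul_left _
  apply Summable.of_nonneg_of_le (fun k => by positivity) (fun k => ?_) hmaj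
  rw [h20, Real.rpow_natCast]
  calc ‖a k‖ ^ (2 : ℕ) ≤ (C * ((k : ℝ) + 1) ^ m * r ^ k) ^ (2:ℕ) :=
        pow_le_pow_left₀ (norm_nonneg _) (h k) 2
    _ = C ^ 2 * (((k : ℝ) + 1) ^ (2 * m) * (r ^ 2) ^ k) := by
        rw [mul_pow, mul_pow, ← pow_mul, ← pow_mul, ← pow_mul]
        ring_nf

lemma norm_half_lt_one (w : ℂ) (hw : ‖w‖ < 1) : (‖w‖ + 1) / 2 < 1 := by linarith

lemma norm_le_half (w : ℂ) : ‖w‖ ≤ (‖w‖ + 1) / 2 ↔ ‖w‖ ≤ 1 := by constructor <;> intro <;> linarith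

/-- The reproducing kernel at `w`. -/
def Kern (w : ℂ) (hw : ‖w‖ < 1) : H2 :=
  ⟨fun k => (starRingEnd ℂ w) ^ k, by
    apply memℓp_of_bound (r := (‖w‖ + 1) / 2) (C := 1) (by positivity)
      (norm_half_lt_one w hw) 0
    intro k
    simp only [pow_zero, one_mul, mul_one, norm_pow, RCLike.norm_conj]
    apply pow_le_pow_left₀ (norm_nonneg w) (by linarith)⟩

lemma Kern_apply (w : ℂ) (hw : ‖w‖ < 1) (k : ℕ) :
    (Kern w hw : ℕ → ℂ) k = (starRingEnd ℂ w) ^ k := rfl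

/-- The kernel representing `f ↦ (d/dz)^N (toFun f) (w)`. -/
def Kd (N : ℕ) (w : ℂ) (hw : ‖w‖ < 1) : H2 :=
  ⟨fun j => if N ≤ j then
      (starRingEnd ℂ) ((∏ i ∈ Finset.range N, ((j - N + i + 1 : ℕ) : ℂ)) * w ^ (j - N))
    else 0, by
    apply memℓp_of_bound (r := (‖w‖ + 1) / 2) (C := 2 ^ N) (by positivity)
      (norm_half_lt_one w hw) N
    intro j
    set r : ℝ := (‖w‖ + 1) / 2 with hrdef
    have hr0 : (0:ℝ) < r := by positivity
    have hrhalf : (1:ℝ)/2 ≤ r := by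
      rw [hrdef]; have := norm_nonneg w; linarith
    by_cases hNj : N ≤ j
    · rw [if_pos hNj]
      have h1 : ‖(starRingEnd ℂ) ((∏ i ∈ Finset.range N, ((j - N + i + 1 : ℕ) : ℂ)) * w ^ (j - N))‖
          = (∏ i ∈ Finset.range N, ((j - N + i + 1 : ℕ) : ℝ)) * ‖w‖ ^ (j - N) := by
        rw [RCLike.norm_conj, norm_mul, norm_pow]
        congr 1
        rw [norm_prod]
        exact Finset.prod_congr rfl fun i _ => Complex.norm_natCast _
      rw [h1]
      have h2 : (∏ i ∈ Finset.range N, ((j - N + i + 1 : ℕ) : ℝ)) ≤ ((j:ℝ) + 1) ^ N := by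
        have hb : ∀ i ∈ Finset.range N, ((j - N + i + 1 : ℕ) : ℝ) ≤ (j:ℝ) + 1 := by
          intro i hi
          rw [Finset.mem_range] at hi
          have : j - N + i + 1 ≤ j + 1 := by omega
          calc ((j - N + i + 1 : ℕ) : ℝ) ≤ ((j + 1 : ℕ) : ℝ) := by exact_mod_cast this
            _ = (j:ℝ) + 1 := by push_cast; ring
        calc (∏ i ∈ Finset.range N, ((j - N + i + 1 : ℕ) : ℝ))
            ≤ ∏ _i ∈ Finset.range N, ((j:ℝ) + 1) :=
              Finset.prod_le_prod (fun i _ => by positivity) hb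
          _ = ((j:ℝ) + 1) ^ N := by rw [Finset.prod_const, Finset.card_range]
      have h3 : ‖w‖ ^ (j - N) ≤ r ^ (j - N) :=
        pow_le_pow_left₀ (norm_nonneg w) (by rw [hrdef]; linarith) _
      have h4 : r ^ (j - N) ≤ 2 ^ N * r ^ j := by
        have : r ^ (j - N) * r ^ N = r ^ j := by
          rw [← pow_add]; congr 1; omega
        have h5 : (1:ℝ)/2 ^ N ≤ r ^ N / r ^ N * 2 ^N / 2 ^N := by
          rw [div_self (by positivity)]; rw [one_mul, div_self (by positivity)]
          rw [div_le_one (by positivity)]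
          exact one_le_pow₀ (by norm_num)
        -- r^(j-N) = r^j / r^N ≤ r^j * 2^N since r ≥ 1/2
        have h6 : (1:ℝ) ≤ 2 ^ N * r ^ N := by
          calc (1:ℝ) = (2 * (1/2)) ^ N := by norm_num
            _ = 2 ^ N * (1/2) ^ N := by rw [mul_pow]
            _ ≤ 2 ^ N * r ^ N := by
                apply mul_le_mul_of_nonneg_left (pow_le_pow_left₀ (by norm_num) hrhalf N)
                  (by positivity)
        calc r ^ (j - N) = 1 * r ^ (j - N) := (one_mul _).symm
          _ ≤ (2 ^ N * r ^ N) * r ^ (j - N) := by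
              apply mul_le_mul_of_nonneg_right h6 (by positivity)
          _ = 2 ^ N * (r ^ N * r ^ (j - N)) := by ring
          _ = 2 ^ N * r ^ j := by rw [← pow_add]; congr 2; omega
      calc (∏ i ∈ Finset.range N, ((j - N + i + 1 : ℕ) : ℝ)) * ‖w‖ ^ (j - N)
          ≤ ((j:ℝ) + 1) ^ N * (2 ^ N * r ^ j) := by
            apply mul_le_mul h2 (h3.trans h4) (by positivity) (by positivity)
        _ = 2 ^ N * ((j:ℝ) + 1) ^ N * r ^ j := by ring
    · rw [if_neg hNj]
      simp only [norm_zero]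
      positivity⟩

lemma Kd_apply (N : ℕ) (w : ℂ) (hw : ‖w‖ < 1) (j : ℕ) :
    (Kd N w hw : ℕ → ℂ) j = if N ≤ j then
      (starRingEnd ℂ) ((∏ i ∈ Finset.range N, ((j - N + i + 1 : ℕ) : ℂ)) * w ^ (j - N))
    else 0 := rfl
lemma H2.temp (f : H2) : Temp ⇑f := by
  refine ⟨‖f‖, 0, fun k => ?_⟩
  simpa using lp.norm_apply_le_norm (by norm_num : (2 : ℝ≥0∞) ≠ 0) f k

lemma inner_eq (f g : H2) : ⟪f, g⟫_ℂ = ∑' k, (starRingEnd ℂ) (f k) * g k := by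
  rw [lp.inner_eq_tsum]
  congr 1 with k; rw [RCLike.inner_apply, mul_comm]

lemma inner_kern (f : H2) (w : ℂ) (hw : ‖w‖ < 1) :
    ⟪Kern w hw, f⟫_ℂ = G (⇑f) w := by
  rw [inner_eq, G]
  congr 1 with k
  rw [Kern_apply, map_pow, Complex.conj_conj]
  ring

lemma inner_kd (N : ℕ) (f : H2) (w : ℂ) (hw : ‖w‖ < 1) :
    ⟪Kd N w hw, f⟫_ℂ = G (shiftc^[N] ⇑f) w := by
  rw [inner_eq]
  have hF : ∀ j, (starRingEnd ℂ) ((Kd N w hw : ℕ → ℂ) j) * f j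
      = if N ≤ j then (∏ i ∈ Finset.range N, ((j - N + i + 1 : ℕ) : ℂ)) * w ^ (j - N) * f j
        else 0 := by
    intro j
    rw [Kd_apply]
    by_cases h : N ≤ j
    · rw [if_pos h, if_pos h, Complex.conj_conj]
    · rw [if_neg h, if_neg h, map_zero, zero_mul]
  calc (∑' j, (starRingEnd ℂ) ((Kd N w hw : ℕ → ℂ) j) * f j)
      = ∑' j, (if N ≤ j then
          (∏ i ∈ Finset.range N, ((j - N + i + 1 : ℕ) : ℂ)) * w ^ (j - N) * f j else 0) := by
        congr 1 with j; exact hF j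
    _ = G (shiftc^[N] ⇑f) w := by
        rw [G]
        rw [← Function.Injective.tsum_eq (g := fun k => k + N) (add_left_injective N)]
        · congr 1 with k
          rw [if_pos (Nat.le_add_left N k), Nat.add_sub_cancel, shiftc_iter_apply]
          ring
        · intro j hj
          rw [Function.mem_support] at hj
          rcases le_or_gt N j with h | h
          · exact ⟨j - N, show j - N + N = j by omega⟩
          · exact absurd (by rw [if_neg (not_le.mpr h)]) hj

lemma toFun_eq_G (f : H2) : H2.toFun f = G ⇑f := rfl

lemma iteratedDeriv_toFun (f : H2) (N : ℕ) {w : ℂ} (hw : w ∈ ball (0 : ℂ) 1) :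
    iteratedDeriv N (H2.toFun f) w = G (shiftc^[N] ⇑f) w := by
  rw [toFun_eq_G]
  exact iteratedDeriv_G (H2.temp f) N w hw
lemma analyticAt_deriv {β : ℂ → ℂ} {x : ℂ} (hβ : AnalyticAt ℂ β x) :
    AnalyticAt ℂ (deriv β) x := by
  have hs : AnalyticOnNhd ℂ β {y | AnalyticAt ℂ β y} := fun y hy => hy
  exact hs.deriv x hβ

lemma iteratedDeriv_pow_mul (m : ℕ) : ∀ {β : ℂ → ℂ}, AnalyticAt ℂ β 0 →
    iteratedDeriv m (fun z => z ^ m * β z) 0 = (m.factorial : ℂ) * β 0 := by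
  induction m with
  | zero => intro β _; simp
  | succ m ih =>
    intro β hβ
    have hev : ∀ᶠ z in nhds (0:ℂ), AnalyticAt ℂ β z := hβ.eventually_analyticAt
    have hderEq : deriv (fun z => z ^ (m+1) * β z)
        =ᶠ[nhds (0:ℂ)] (fun z => z ^ m * (((m:ℂ)+1) * β z + z * deriv β z)) := by
      filter_upwards [hev] with z hz
      have h1 : HasDerivAt (fun z : ℂ => z ^ (m+1) * β z)
          (((m+1 : ℕ) : ℂ) * z ^ m * β z + z ^ (m+1) * deriv β z) z := by
        have hp := hasDerivAt_pow (m+1) z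
        simp only [Nat.add_sub_cancel] at hp
        exact hp.mul hz.differentiableAt.hasDerivAt
      rw [h1.deriv]
      push_cast
      ring
    have hγ : AnalyticAt ℂ (fun z => ((m:ℂ)+1) * β z + z * deriv β z) 0 := by
      exact (analyticAt_const.mul hβ).add ((analyticAt_id).mul (analyticAt_deriv hβ))
    rw [iteratedDeriv_succ', (iteratedDeriv_congr_nhds hderEq m).eq_of_nhds, ih hγ]
    simp only [Nat.factorial_succ]
    push_cast
    ring

/-- coefficient extraction: if `G c` factors as `z ^ m * β z` near `0` then `c m = β 0`. -/
lemma coeff_of_pow_mul {c : ℕ → ℂ} (hc : Temp c) {β : ℂ → ℂ} (hβ : AnalyticAt ℂ β 0) (m : ℕ)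
    (h : ∀ᶠ z in nhds (0:ℂ), G c z = z ^ m * β z) : c m = β 0 := by
  have h1 : iteratedDeriv m (G c) 0 = (m.factorial : ℂ) * β 0 := by
    rw [(iteratedDeriv_congr_nhds h m).eq_of_nhds]
    exact iteratedDeriv_pow_mul m hβ
  rw [iteratedDeriv_G hc m 0 (by simp), G_apply_zero, shiftc_iter_apply] at h1
  have h2 : (∏ i ∈ Finset.range m, ((0 + i + 1 : ℕ) : ℂ)) = (m.factorial : ℂ) := by
    rw [← Nat.cast_prod]
    congr 1
    simpa using Finset.prod_range_add_one_eq_factorial m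
  rw [h2, zero_add] at h1
  have hm : (m.factorial : ℂ) ≠ 0 := Nat.cast_ne_zero.mpr m.factorial_ne_zero
  exact mul_left_cancel₀ hm h1
lemma Kd_congr (N : ℕ) {w w' : ℂ} (h : w = w') (hw : ‖w‖ < 1) (hw' : ‖w'‖ < 1) :
    Kd N w hw = Kd N w' hw' := by subst h; rfl

lemma toFun_zero' (z : ℂ) : H2.toFun (0 : H2) z = 0 := by
  rw [toFun_eq_G]
  have h3 : ⇑(0 : H2) = fun _ : ℕ => (0:ℂ) := lp.coeFn_zero _ _
  rw [h3]
  simp [G]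

section Op

variable {ψ φ : ℂ → ℂ} {n : ℕ} {T : H2 →L[ℂ] H2}

lemma ker_coeff (hψ : DifferentiableOn ℂ ψ (ball (0 : ℂ) 1))
    (hψ0 : ∃ z ∈ ball (0 : ℂ) 1, ψ z ≠ 0)
    (hφ : DifferentiableOn ℂ φ (ball (0 : ℂ) 1))
    (hφm : ∀ z ∈ ball (0 : ℂ) 1, φ z ∈ ball (0 : ℂ) 1)
    (hφnc : ¬ ∃ c : ℂ, ∀ z ∈ ball (0 : ℂ) 1, φ z = c)
    (hT : IsWCD ψ φ n T) {g : H2} (hg : T g = 0) :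
    ∀ k, n ≤ k → g k = 0 := by
  set h : ℂ → ℂ := G (shiftc^[n] ⇑g) with hh
  have htemp : Temp (shiftc^[n] ⇑g) := (H2.temp g).iterate n
  have hps : ∀ z ∈ ball (0:ℂ) 1, ψ z * h (φ z) = 0 := by
    intro z hz
    have h1 := hT g z hz
    rw [hg, toFun_zero'] at h1
    rw [iteratedDeriv_toFun g n (hφm z hz)] at h1
    exact h1.symm
  have hψA : AnalyticOnNhd ℂ ψ (ball (0:ℂ) 1) := hψ.analyticOnNhd isOpen_ball
  have hA : AnalyticOnNhd ℂ h (ball (0:ℂ) 1) := analyticOnNhd_G htemp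
  have h0mem : (0:ℂ) ∈ ball (0:ℂ) 1 := by simp
  have hzero : ∀ z ∈ ball (0:ℂ) 1, h (φ z) = 0 := by
    by_contra hcon
    push_neg at hcon
    obtain ⟨z1, hz1, hne⟩ := hcon
    have hca : ContinuousAt (fun z => h (φ z)) z1 := by
      have hφd : ContinuousAt φ z1 :=
        (hφ.differentiableAt (isOpen_ball.mem_nhds hz1)).continuousAt
      exact ((hA _ (hφm z1 hz1)).continuousAt).comp hφd
    have hev : ∀ᶠ z in nhds z1, h (φ z) ≠ 0 := hca.eventually_ne hne
    have hev2 : ψ =ᶠ[nhds z1] 0 := by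
      filter_upwards [hev, isOpen_ball.mem_nhds hz1] with z h1 h2
      exact (mul_eq_zero.mp (hps z h2)).resolve_right h1
    obtain ⟨z2, hz2, hz2'⟩ := hψ0
    exact hz2' (hψA.eqOn_zero_of_preconnected_of_eventuallyEq_zero
      (convex_ball _ _).isPreconnected hz1 hev2 hz2)
  have hfreqne : ∀ᶠ z in nhdsWithin (0:ℂ) {(0:ℂ)}ᶜ, φ z ≠ φ 0 := by
    by_contra hcon
    rw [Filter.not_eventually] at hcon
    have hfr : ∃ᶠ z in nhdsWithin (0:ℂ) {(0:ℂ)}ᶜ, φ z = φ 0 :=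
      hcon.mono fun z hz => not_not.mp hz
    have := (hφ.analyticOnNhd isOpen_ball).eqOn_of_preconnected_of_frequently_eq
      analyticOnNhd_const (convex_ball _ _).isPreconnected h0mem hfr
    exact hφnc ⟨φ 0, fun z hz => this hz⟩
  have hφc : Filter.Tendsto φ (nhdsWithin (0:ℂ) {(0:ℂ)}ᶜ) (nhds (φ 0)) :=
    ((hφ.differentiableAt (isOpen_ball.mem_nhds h0mem)).continuousAt).tendsto.mono_left
      nhdsWithin_le_nhds
  have hφt : Filter.Tendsto φ (nhdsWithin (0:ℂ) {(0:ℂ)}ᶜ) (nhdsWithin (φ 0) {(φ 0)}ᶜ) := by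
    rw [tendsto_nhdsWithin_iff]
    exact ⟨hφc, hfreqne.mono fun z hz => hz⟩
  have hfr2 : ∃ᶠ z in nhdsWithin (0:ℂ) {(0:ℂ)}ᶜ, h (φ z) = 0 := by
    apply Filter.Eventually.frequently
    filter_upwards [nhdsWithin_le_nhds (isOpen_ball.mem_nhds h0mem)] with z hz
    exact hzero z hz
  have hfr3 : ∃ᶠ w in nhdsWithin (φ 0) {(φ 0)}ᶜ, h w = 0 := hφt.frequently hfr2
  have hzero2 : ∀ z ∈ ball (0:ℂ) 1, h z = 0 := fun z hz =>
    hA.eqOn_zero_of_preconnected_of_frequently_eq_zero (convex_ball _ _).isPreconnected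
      (hφm 0 h0mem) hfr3 hz
  intro k hk
  have hc := coeff_eq_zero_of_G_eq_zero htemp hzero2 (k - n)
  rw [shiftc_iter_apply] at hc
  have hkn : k - n + n = k := by omega
  rw [hkn] at hc
  exact (mul_eq_zero.mp hc).resolve_left (shiftc_iter_prod_ne_zero _ _)

lemma ker_star (hcopos : Posinormal (ContinuousLinearMap.adjoint T)) {x : H2}
    (hx : ContinuousLinearMap.adjoint T x = 0) : T x = 0 := by
  obtain ⟨P, _, hP⟩ := hcopos
  rw [ContinuousLinearMap.adjoint_adjoint] at hP
  have h2 := ContinuousLinearMap.adjoint_inner_left (𝕜 := ℂ)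
    (ContinuousLinearMap.adjoint T) (T x) x
  rw [ContinuousLinearMap.adjoint_adjoint] at h2
  have h3 : ContinuousLinearMap.adjoint T (T x) = 0 := by
    have h4 : (ContinuousLinearMap.adjoint T ∘L T) x
        = (T ∘L P ∘L ContinuousLinearMap.adjoint T) x := by rw [hP]
    simp only [ContinuousLinearMap.comp_apply] at h4
    rw [h4, hx, map_zero, map_zero]
  rw [h3, inner_zero_right] at h2
  exact inner_self_eq_zero.mp h2

lemma adjoint_kern (hφm : ∀ z ∈ ball (0 : ℂ) 1, φ z ∈ ball (0 : ℂ) 1)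
    (hT : IsWCD ψ φ n T) {w : ℂ} (hw : w ∈ ball (0:ℂ) 1) :
    ContinuousLinearMap.adjoint T (Kern w (mem_ball_zero_iff.mp hw))
      = (starRingEnd ℂ) (ψ w) • Kd n (φ w) (mem_ball_zero_iff.mp (hφm w hw)) := by
  apply ext_inner_right ℂ
  intro f
  rw [ContinuousLinearMap.adjoint_inner_left, inner_kern, inner_smul_left, inner_kd,
    Complex.conj_conj]
  have h1 := hT f w hw
  rw [toFun_eq_G] at h1
  rw [h1, iteratedDeriv_toFun f n (hφm w hw)]

lemma adjoint_single (hφ : DifferentiableOn ℂ φ (ball (0 : ℂ) 1))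
    (hφm : ∀ z ∈ ball (0 : ℂ) 1, φ z ∈ ball (0 : ℂ) 1)
    (hT : IsWCD ψ φ n T) {m : ℕ} {ρ : ℂ → ℂ} (hρ : AnalyticAt ℂ ρ 0)
    (hfac : ∀ᶠ z in nhds (0:ℂ), ψ z = z ^ m * ρ z) :
    ContinuousLinearMap.adjoint T (lp.single 2 m 1)
      = (starRingEnd ℂ) (ρ 0) • Kd n (φ 0) (mem_ball_zero_iff.mp (hφm 0 (by simp))) := by
  apply ext_inner_right ℂ
  intro f
  rw [ContinuousLinearMap.adjoint_inner_left, lp.inner_single_left, inner_smul_left, inner_kd,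
    Complex.conj_conj, RCLike.inner_apply, map_one, mul_one]
  have h0mem : (0:ℂ) ∈ ball (0:ℂ) 1 := by simp
  have hβ : AnalyticAt ℂ (fun z => ρ z * G (shiftc^[n] ⇑f) (φ z)) 0 := by
    apply hρ.mul
    have hφ0 : AnalyticAt ℂ φ 0 := (hφ.analyticOnNhd isOpen_ball) 0 h0mem
    have hG : AnalyticAt ℂ (G (shiftc^[n] ⇑f)) (φ 0) :=
      analyticOnNhd_G ((H2.temp f).iterate n) _ (hφm 0 h0mem)
    exact hG.comp hφ0
  have hev : ∀ᶠ z in nhds (0:ℂ), G ⇑(T f) z = z ^ m * (ρ z * G (shiftc^[n] ⇑f) (φ z)) := by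
    filter_upwards [hfac, isOpen_ball.mem_nhds h0mem] with z h1 h2
    have h3 := hT f z h2
    rw [toFun_eq_G] at h3
    rw [h3, iteratedDeriv_toFun f n (hφm z h2), h1]
    ring
  exact coeff_of_pow_mul (H2.temp (T f)) hβ m hev

lemma psi_ne (hψ : DifferentiableOn ℂ ψ (ball (0 : ℂ) 1))
    (hψ0 : ∃ z ∈ ball (0 : ℂ) 1, ψ z ≠ 0)
    (hφ : DifferentiableOn ℂ φ (ball (0 : ℂ) 1))
    (hφm : ∀ z ∈ ball (0 : ℂ) 1, φ z ∈ ball (0 : ℂ) 1)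
    (hφnc : ¬ ∃ c : ℂ, ∀ z ∈ ball (0 : ℂ) 1, φ z = c)
    (hn : 1 ≤ n) (hT : IsWCD ψ φ n T)
    (hcopos : Posinormal (ContinuousLinearMap.adjoint T))
    {w : ℂ} (hw : w ∈ ball (0:ℂ) 1) (hw0 : w ≠ 0) : ψ w ≠ 0 := by
  intro hzero
  have h1 := adjoint_kern hφm hT hw
  rw [hzero, map_zero, zero_smul] at h1
  have h2 := ker_star hcopos h1
  have h3 := ker_coeff hψ hψ0 hφ hφm hφnc hT h2 n le_rfl
  rw [Kern_apply] at h3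
  have h4 : (starRingEnd ℂ) w = 0 :=
    pow_eq_zero_iff (by omega : n ≠ 0) |>.mp h3
  exact hw0 (by simpa using h4)

end Op
lemma key {ψ φ : ℂ → ℂ} {n : ℕ} {T : H2 →L[ℂ] H2}
    (hψ : DifferentiableOn ℂ ψ (ball (0 : ℂ) 1))
    (hψ0 : ∃ z ∈ ball (0 : ℂ) 1, ψ z ≠ 0)
    (hφ : DifferentiableOn ℂ φ (ball (0 : ℂ) 1))
    (hφm : ∀ z ∈ ball (0 : ℂ) 1, φ z ∈ ball (0 : ℂ) 1)
    (hφnc : ¬ ∃ c : ℂ, ∀ z ∈ ball (0 : ℂ) 1, φ z = c)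
    (hn : 1 ≤ n) (hT : IsWCD ψ φ n T)
    (hcopos : Posinormal (ContinuousLinearMap.adjoint T))
    (a b : ℂ) (ha : a ∈ ball (0:ℂ) 1) (hb : b ∈ ball (0:ℂ) 1) (hab : φ a = φ b)
    (hb0 : b ≠ 0) (hne : a ≠ b) : False := by
  have hψb : ψ b ≠ 0 := psi_ne hψ hψ0 hφ hφm hφnc hn hT hcopos hb hb0
  have hwb : ‖b‖ < 1 := mem_ball_zero_iff.mp hb
  have hB0 : (starRingEnd ℂ) b ≠ 0 := by simpa using hb0
  have hXne : (starRingEnd ℂ) (ψ b) ≠ 0 := by simpa using hψb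
  by_cases ha0 : a = 0
  · -- case a = 0 : use the coefficient functional at the order of vanishing of ψ at 0
    subst ha0
    have h0mem : (0:ℂ) ∈ ball (0:ℂ) 1 := by simp
    have hψ0A : AnalyticAt ℂ ψ 0 := hψ.analyticOnNhd isOpen_ball 0 h0mem
    have hord : analyticOrderAt ψ 0 ≠ ⊤ := by
      intro htop
      rw [analyticOrderAt_eq_top] at htop
      have := (hψ.analyticOnNhd isOpen_ball).eqOn_zero_of_preconnected_of_eventuallyEq_zero
        (convex_ball _ _).isPreconnected h0mem htop
      obtain ⟨z2, hz2, hz2'⟩ := hψ0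
      exact hz2' (this hz2)
    obtain ⟨m, hm⟩ : ∃ m : ℕ, analyticOrderAt ψ 0 = (m : ℕ∞) := by
      cases h : analyticOrderAt ψ 0 with
      | top => exact absurd h hord
      | coe m => exact ⟨m, rfl⟩
    obtain ⟨ρ, hρA, hρ0, hfacc⟩ := (hψ0A.analyticOrderAt_eq_natCast).mp hm
    have hfac : ∀ᶠ z in nhds (0:ℂ), ψ z = z ^ m * ρ z := by
      filter_upwards [hfacc] with z hz
      simpa [smul_eq_mul] using hz
    have hK := adjoint_kern hφm hT hb
    have hE := adjoint_single hφ hφm hT hρA hfac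
    set u : H2 := (starRingEnd ℂ) (ψ b) • (lp.single 2 m 1)
        - (starRingEnd ℂ) (ρ 0) • Kern b hwb with hudef
    have hu : ContinuousLinearMap.adjoint T u = 0 := by
      rw [hudef, map_sub, map_smul, map_smul, hK, hE,
        Kd_congr n (hab : φ 0 = φ b) _ (mem_ball_zero_iff.mp (hφm b hb)),
        smul_comm, sub_self]
    have hTu : T u = 0 := ker_star hcopos hu
    have hc := ker_coeff hψ hψ0 hφ hφm hφnc hT hTu (m + n + 1) (by omega)
    have hc2 : (starRingEnd ℂ) (ψ b) * (lp.single (E := fun _ : ℕ => ℂ) 2 m (1:ℂ)) (m + n + 1)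
        - (starRingEnd ℂ) (ρ 0) * (starRingEnd ℂ) b ^ (m + n + 1) = 0 := by
      have : u (m + n + 1) = 0 := hc
      rw [hudef] at this
      rw [lp.coeFn_sub, lp.coeFn_smul, lp.coeFn_smul] at this
      simpa [lp.coeFn_sub, lp.coeFn_smul, Pi.sub_apply, Pi.smul_apply, smul_eq_mul,
        Kern_apply] using this
    rw [lp.single_apply] at hc2
    rw [Pi.single_eq_of_ne (show m + n + 1 ≠ m by omega)] at hc2
    simp only [mul_zero, zero_sub, neg_eq_zero, mul_eq_zero] at hc2
    rcases hc2 with h | h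
    · exact hρ0 (by simpa using h)
    · exact hB0 (pow_eq_zero_iff (by omega : m + n + 1 ≠ 0) |>.mp h)
  · -- case a ≠ 0
    have hψa : ψ a ≠ 0 := psi_ne hψ hψ0 hφ hφm hφnc hn hT hcopos ha ha0
    have hwa : ‖a‖ < 1 := mem_ball_zero_iff.mp ha
    have hA0 : (starRingEnd ℂ) a ≠ 0 := by simpa using ha0
    have hYne : (starRingEnd ℂ) (ψ a) ≠ 0 := by simpa using hψa
    have hABne : (starRingEnd ℂ) a ≠ (starRingEnd ℂ) b := by
      intro h
      exact hne (by simpa using congrArg (starRingEnd ℂ) h)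
    set u : H2 := (starRingEnd ℂ) (ψ b) • Kern a hwa
        - (starRingEnd ℂ) (ψ a) • Kern b hwb with hudef
    have hu : ContinuousLinearMap.adjoint T u = 0 := by
      rw [hudef, map_sub, map_smul, map_smul, adjoint_kern hφm hT ha, adjoint_kern hφm hT hb,
        Kd_congr n (hab : φ a = φ b) _ (mem_ball_zero_iff.mp (hφm b hb)),
        smul_comm, sub_self]
    have hTu : T u = 0 := ker_star hcopos hu
    have hcoef : ∀ k, n ≤ k →
        (starRingEnd ℂ) (ψ b) * (starRingEnd ℂ) a ^ k
          = (starRingEnd ℂ) (ψ a) * (starRingEnd ℂ) b ^ k := by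
      intro k hk
      have := ker_coeff hψ hψ0 hφ hφm hφnc hT hTu k hk
      rw [hudef] at this
      rw [lp.coeFn_sub, lp.coeFn_smul, lp.coeFn_smul] at this
      have h2 : (starRingEnd ℂ) (ψ b) * (starRingEnd ℂ) a ^ k
          - (starRingEnd ℂ) (ψ a) * (starRingEnd ℂ) b ^ k = 0 := by
        simpa [lp.coeFn_sub, lp.coeFn_smul, Pi.sub_apply, Pi.smul_apply, smul_eq_mul,
          Kern_apply] using this
      linear_combination h2
    have h1 := hcoef n le_rfl
    have h2 := hcoef (n + 1) (by omega)
    have h3 : (starRingEnd ℂ) (ψ b) * (starRingEnd ℂ) a ^ n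
        * ((starRingEnd ℂ) a - (starRingEnd ℂ) b) = 0 := by
      linear_combination h2 - (starRingEnd ℂ) b * h1
    rcases mul_eq_zero.mp h3 with h | h
    · rcases mul_eq_zero.mp h with h | h
      · exact hXne h
      · exact hA0 (pow_eq_zero_iff (by omega : n ≠ 0) |>.mp h)
    · exact hABne (sub_eq_zero.mp h)

end Stmt13

/-- If `D_{ψ,φ,n}` is bounded and coposinormal, then `φ` is injective on `𝔻`. -/
theorem stmt13 (ψ φ : ℂ → ℂ)
    (hψ : DifferentiableOn ℂ ψ (ball (0 : ℂ) 1))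
    (hψ0 : ∃ z ∈ ball (0 : ℂ) 1, ψ z ≠ 0)
    (hφ : DifferentiableOn ℂ φ (ball (0 : ℂ) 1))
    (hφm : ∀ z ∈ ball (0 : ℂ) 1, φ z ∈ ball (0 : ℂ) 1)
    (hφnc : ¬ ∃ c : ℂ, ∀ z ∈ ball (0 : ℂ) 1, φ z = c)
    (n : ℕ) (hn : 1 ≤ n)
    (T : H2 →L[ℂ] H2) (hT : IsWCD ψ φ n T)
    (hcopos : Posinormal (ContinuousLinearMap.adjoint T)) :
    Set.InjOn φ (ball (0 : ℂ) 1) := by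
  intro a ha b hb hab
  by_contra hne
  rcases eq_or_ne b 0 with hb0 | hb0
  · exact Stmt13.key hψ hψ0 hφ hφm hφnc hn hT hcopos b a hb ha hab.symm
      (fun h => hne (h.trans hb0.symm)) (Ne.symm hne)
  · exact Stmt13.key hψ hψ0 hφ hφm hφnc hn hT hcopos a b ha hb hab hb0 hne
end
end

section
/- Let φ(z) = (az + b)/(cz + d) with ad − bc ≠ 0 be a linear fractional self-map of 𝔻 with ‖φ‖_∞ < 1, let σ(z) = (\overline{a} z − \overline{c})/(−\overline{b} z + \overline{d}), and let ψ(z) = z^n ψ₁(z) with ψ₁ ∈ H^∞(𝔻). Then on H²(𝔻), D_{ψ,φ,n}^* = T_g D_{σ,n} T_h^*, where g(z) = z^n/(−\overline{b} z + \overline{d})^{n+1}, h(z) = ψ₁(z)(cz + d)^{n+1}, T_g and T_h are the analytic Toeplitz (multiplication) operators, and D_{σ,n} f = f^{(n)} ∘ σ. -/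
open Complex Metric
open scoped InnerProductSpace

noncomputable section

/-! ### Auxiliary material -/

section Aux

set_option linter.unusedSectionVars false

lemma ker_mem (w : ℂ) (hw : ‖w‖ < 1) :
    Memℓp (fun k : ℕ => (starRingEnd ℂ) w ^ k) 2 := by
  apply memℓp_gen
  have : ∀ k : ℕ, ‖(starRingEnd ℂ) w ^ k‖ ^ (2 : ENNReal).toReal = (‖w‖ ^ 2) ^ k := by
    intro k
    rw [norm_pow]
    simp [← pow_mul, mul_comm]
  simp only [this]
  exact summable_geometric_of_lt_one (by positivity) (by
    nlinarith [norm_nonneg w])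

/-- reproducing kernel -/
noncomputable def ker (w : ℂ) (hw : ‖w‖ < 1) : H2 :=
  ⟨fun k => (starRingEnd ℂ) w ^ k, ker_mem w hw⟩

@[simp] lemma ker_apply (w : ℂ) (hw : ‖w‖ < 1) (k : ℕ) :
    (ker w hw) k = (starRingEnd ℂ) w ^ k := rfl

lemma summable_toFun (f : H2) (z : ℂ) (hz : ‖z‖ < 1) :
    Summable fun k : ℕ => f k * z ^ k := by
  apply Summable.of_norm
  apply Summable.of_nonneg_of_le (fun k => norm_nonneg _)
    (fun k => ?_) (Summable.mul_left ‖f‖ (summable_geometric_of_lt_one (norm_nonneg z) hz))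
  rw [norm_mul, norm_pow]
  gcongr
  exact lp.norm_apply_le_norm (by norm_num) f k

lemma inner_ker (f : H2) (w : ℂ) (hw : ‖w‖ < 1) :
    ⟪ker w hw, f⟫_ℂ = H2.toFun f w := by
  rw [lp.inner_eq_tsum]
  apply tsum_congr
  intro k
  rw [RCLike.inner_apply, ker_apply, map_pow, RCLike.conj_conj]

lemma toFun_sub (f g : H2) (z : ℂ) (hz : ‖z‖ < 1) :
    H2.toFun (f - g) z = H2.toFun f z - H2.toFun g z := by
  have h1 : ∀ k : ℕ, (f - g) k * z ^ k = f k * z ^ k - g k * z ^ k := by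
    intro k
    rw [lp.coeFn_sub, Pi.sub_apply]
    ring
  rw [H2.toFun, tsum_congr h1, Summable.tsum_sub (summable_toFun f z hz) (summable_toFun g z hz)]
  rfl

lemma toFun_smul (c : ℂ) (f : H2) (z : ℂ) :
    H2.toFun (c • f) z = c * H2.toFun f z := by
  have h1 : ∀ k : ℕ, (c • f) k * z ^ k = c * (f k * z ^ k) := by
    intro k
    rw [lp.coeFn_smul, Pi.smul_apply, smul_eq_mul]
    ring
  rw [H2.toFun, tsum_congr h1, tsum_mul_left]
  rfl

lemma iteratedDeriv_congr_of_isOpen {s : Set ℂ} (hs : IsOpen s) {f g : ℂ → ℂ}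
    (hfg : Set.EqOn f g s) (n : ℕ) :
    Set.EqOn (iteratedDeriv n f) (iteratedDeriv n g) s := by
  induction n with
  | zero => simpa using hfg
  | succ n ih =>
    intro x hx
    rw [iteratedDeriv_succ, iteratedDeriv_succ]
    exact Filter.EventuallyEq.deriv_eq (Filter.eventuallyEq_of_mem (hs.mem_nhds hx) ih)

lemma iteratedDeriv_geom (c : ℂ) (n : ℕ) :
    ∀ x : ℂ, 1 - c * x ≠ 0 →
      iteratedDeriv n (fun u => (1 - c * u)⁻¹) x
        = (n.factorial : ℂ) * c ^ n / (1 - c * x) ^ (n + 1) := by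
  induction n with
  | zero => intro x hx; simp
  | succ n ih =>
    intro x hx
    rw [iteratedDeriv_succ]
    have hs : IsOpen {x : ℂ | 1 - c * x ≠ 0} :=
      isOpen_ne.preimage (by continuity)
    have hcongr : deriv (iteratedDeriv n (fun u => (1 - c * u)⁻¹)) x
        = deriv (fun x => (n.factorial : ℂ) * c ^ n / (1 - c * x) ^ (n + 1)) x := by
      apply Filter.EventuallyEq.deriv_eq
      exact Filter.eventuallyEq_of_mem (hs.mem_nhds hx) (fun y hy => ih y hy)
    rw [hcongr]
    have h1 : HasDerivAt (fun x : ℂ => 1 - c * x) (-c) x := by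
      simpa using ((hasDerivAt_id x).const_mul c).const_sub 1
    have h2 : HasDerivAt (fun x : ℂ => (1 - c * x) ^ (n + 1))
        ((n + 1 : ℕ) * (1 - c * x) ^ n * (-c)) x := h1.pow (n + 1)
    have h3 : HasDerivAt (fun x : ℂ => ((1 - c * x) ^ (n + 1))⁻¹)
        (-((n + 1 : ℕ) * (1 - c * x) ^ n * (-c)) / ((1 - c * x) ^ (n + 1)) ^ 2) x :=
      h2.inv (pow_ne_zero _ hx)
    have h4 : HasDerivAt (fun x : ℂ => (n.factorial : ℂ) * c ^ n / (1 - c * x) ^ (n + 1))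
        ((n.factorial : ℂ) * c ^ n *
          (-((n + 1 : ℕ) * (1 - c * x) ^ n * (-c)) / ((1 - c * x) ^ (n + 1)) ^ 2)) x := by
      simpa [div_eq_mul_inv] using h3.const_mul ((n.factorial : ℂ) * c ^ n)
    rw [h4.deriv]
    rw [Nat.factorial_succ]
    push_cast
    field_simp
    ring

lemma toFun_ker (w : ℂ) (hw : ‖w‖ < 1) (u : ℂ)
    (hu : ‖(starRingEnd ℂ) w * u‖ < 1) :
    H2.toFun (ker w hw) u = (1 - (starRingEnd ℂ) w * u)⁻¹ := by
  have : ∀ k : ℕ, (ker w hw) k * u ^ k = ((starRingEnd ℂ) w * u) ^ k := by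
    intro k; rw [ker_apply, mul_pow]
  rw [H2.toFun, tsum_congr this, tsum_geometric_of_norm_lt_one (by simpa using hu)]

lemma iteratedDeriv_toFun_ker (w : ℂ) (hw : ‖w‖ < 1) (n : ℕ) (x : ℂ)
    (hx : ‖(starRingEnd ℂ) w * x‖ < 1) :
    iteratedDeriv n (H2.toFun (ker w hw)) x
      = (n.factorial : ℂ) * ((starRingEnd ℂ) w) ^ n
          / (1 - (starRingEnd ℂ) w * x) ^ (n + 1) := by
  set s : Set ℂ := {u | ‖(starRingEnd ℂ) w * u‖ < 1} with hs_def
  have hs : IsOpen s := by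
    have : Continuous fun u : ℂ => ‖(starRingEnd ℂ) w * u‖ :=
      continuous_norm.comp (continuous_const.mul continuous_id)
    exact isOpen_lt this continuous_const
  have h1 : 1 - (starRingEnd ℂ) w * x ≠ 0 := by
    intro h
    have : (starRingEnd ℂ) w * x = 1 := by linear_combination -h
    rw [this] at hx; simp at hx
  have := iteratedDeriv_congr_of_isOpen hs
    (f := H2.toFun (ker w hw)) (g := fun u => (1 - (starRingEnd ℂ) w * u)⁻¹)
    (fun u hu => toFun_ker w hw u hu) n hx
  rw [this, iteratedDeriv_geom _ n x h1]

lemma toFun_eq_zero (f : H2) (ρ : ℝ) (hρ : 0 < ρ)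
    (h : ∀ z ∈ ball (0 : ℂ) ρ, H2.toFun f z = 0) : f = 0 := by
  set p := FormalMultilinearSeries.ofScalars ℂ (fun k => f k) with hp_def
  have hb : ∀ k : ℕ, ‖f k‖ ≤ ‖f‖ := fun k => lp.norm_apply_le_norm (by norm_num) f k
  have hrad : 1 ≤ p.radius := by
    apply ENNReal.le_of_forall_nnreal_lt
    intro r hr
    apply p.le_radius_of_bound ‖f‖
    intro k
    have hnorm : ‖p k‖ = ‖f k‖ := FormalMultilinearSeries.ofScalars_norm ℂ (fun k => f k) k
    calc ‖p k‖ * (r : ℝ) ^ k ≤ ‖f k‖ * 1 ^ k := by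
          rw [hnorm]
          apply mul_le_mul le_rfl (by
            apply pow_le_pow_left₀ (r.coe_nonneg)
            exact le_of_lt (by exact_mod_cast hr)) (by positivity) (norm_nonneg _)
      _ ≤ ‖f‖ := by simpa using hb k
  have hsum : ∀ y : ℂ, ‖y‖ < 1 → Summable fun k : ℕ => f k * y ^ k :=
    fun y hy => summable_toFun f y hy
  have hball : HasFPowerSeriesOnBall (H2.toFun f) p 0 1 := by
    refine ⟨hrad, one_pos, fun {y} hy => ?_⟩
    have hy' : ‖y‖ < 1 := by
      simpa [← ofReal_norm] using mem_emetric_ball_zero_iff.mp hy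
    have : (fun k : ℕ => p k fun _ => y) = fun k : ℕ => f k * y ^ k := by
      funext k
      rw [hp_def, FormalMultilinearSeries.ofScalars_apply_eq, smul_eq_mul]
    rw [this, zero_add]
    exact (hsum y hy').hasSum
  have hzero : p = 0 := by
    apply hball.hasFPowerSeriesAt.eq_zero_of_eventually
    apply Filter.eventuallyEq_of_mem (Metric.ball_mem_nhds (0 : ℂ) hρ)
    intro z hz
    exact h z hz
  have hcoeff : (fun k : ℕ => (f k : ℂ)) = 0 := by
    rwa [hp_def, FormalMultilinearSeries.ofScalars_series_eq_zero] at hzero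
  apply lp.ext
  funext k
  have := congrFun hcoeff k
  simpa using this

variable (a b c d : ℂ) (r : ℝ) (ph : ℂ → ℂ)
  (habcd : a * d - b * c ≠ 0)
  (hph : ∀ z : ℂ, ph z = (a * z + b) / (c * z + d))
  (hr1 : r < 1)
  (hrb : ∀ z ∈ ball (0 : ℂ) 1, ‖ph z‖ ≤ r)

include habcd hph hr1 hrb

lemma fact_hr0 : 0 ≤ r :=
  le_trans (norm_nonneg _) (hrb 0 (by simp))

lemma fact_num_le (z : ℂ) (hz : z ∈ ball (0 : ℂ) 1) (hne : c * z + d ≠ 0) :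
    ‖a * z + b‖ ≤ r * ‖c * z + d‖ := by
  have := hrb z hz
  rw [hph, norm_div] at this
  rw [div_le_iff₀ (by simpa [norm_pos_iff] using hne)] at this
  linarith [this]

lemma fact_hd : d ≠ 0 := by
  intro hd0
  subst hd0
  have hb : b ≠ 0 := fun hb0 => habcd (by rw [hb0]; ring)
  have hc : c ≠ 0 := fun hc0 => habcd (by rw [hc0]; ring)
  have hr0 : 0 ≤ r := fact_hr0 a b c 0 r ph habcd hph hr1 hrb
  set β := ‖b‖ with hβ
  have hβ0 : 0 < β := norm_pos_iff.mpr hb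
  set γ := ‖c‖ with hγ
  have hγ0 : 0 < γ := norm_pos_iff.mpr hc
  set ε : ℝ := min (min (1/2) (β / (2 * (‖a‖ + 1)))) (β / (2 * (r + 1) * γ)) with hε
  have hε0 : 0 < ε := by
    apply lt_min (lt_min (by norm_num) (by positivity)) (by positivity)
  have hε1 : ε ≤ 1 / 2 := le_trans (min_le_left _ _) (min_le_left _ _)
  have hε2 : ε ≤ β / (2 * (‖a‖ + 1)) := le_trans (min_le_left _ _) (min_le_right _ _)
  have hε3 : ε ≤ β / (2 * (r + 1) * γ) := min_le_right _ _
  have hzball : (ε : ℂ) ∈ ball (0 : ℂ) 1 := by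
    simp only [mem_ball, dist_zero_right]
    rw [Complex.norm_real, Real.norm_eq_abs]
    rw [abs_of_pos hε0]; linarith
  have hne : c * (ε : ℂ) + 0 ≠ 0 := by
    simpa using mul_ne_zero hc (Complex.ofReal_ne_zero.mpr hε0.ne')
  have hle := fact_num_le a b c 0 r ph habcd hph hr1 hrb (ε : ℂ) hzball hne
  rw [add_zero, norm_mul, Complex.norm_real, Real.norm_eq_abs, abs_of_pos hε0] at hle
  have habs : ‖a * (ε : ℂ)‖ = ‖a‖ * ε := by
    rw [norm_mul, Complex.norm_real, Real.norm_eq_abs, abs_of_pos hε0]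
  have hlow : β - ‖a‖ * ε ≤ ‖a * (ε : ℂ) + b‖ := by
    have h1 := norm_sub_norm_le b (-(a * (ε : ℂ)))
    simp only [norm_neg, sub_neg_eq_add] at h1
    rw [habs] at h1
    calc β - ‖a‖ * ε ≤ ‖b + a * (ε : ℂ)‖ := h1
      _ = ‖a * (ε : ℂ) + b‖ := by rw [add_comm]
  have h4 : ‖a‖ * ε ≤ β / 2 := by
    have := mul_le_mul_of_nonneg_left hε2 (norm_nonneg a)
    have h5 : ‖a‖ * (β / (2 * (‖a‖ + 1))) ≤ β / 2 := by
      rw [mul_div_assoc', div_le_div_iff₀ (by positivity) (by norm_num : (0:ℝ) < 2)]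
      nlinarith [norm_nonneg a]
    linarith
  have h6 : r * (γ * ε) < β / 2 := by
    have := mul_le_mul_of_nonneg_left hε3 (by positivity : (0:ℝ) ≤ r * γ)
    have h7 : r * γ * (β / (2 * (r + 1) * γ)) < β / 2 := by
      rw [mul_div_assoc', div_lt_div_iff₀ (by positivity) (by norm_num : (0:ℝ) < 2)]
      nlinarith
    nlinarith
  nlinarith

lemma fact_hblt : ‖b‖ < ‖d‖ := by
  have hd := fact_hd a b c d r ph habcd hph hr1 hrb
  have hr0 : 0 ≤ r := fact_hr0 a b c d r ph habcd hph hr1 hrb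
  have h0 := fact_num_le a b c d r ph habcd hph hr1 hrb 0 (by simp) (by simpa using hd)
  simp only [mul_zero, zero_add] at h0
  have hdpos : 0 < ‖d‖ := norm_pos_iff.mpr hd
  nlinarith

lemma fact_den2 (z : ℂ) (hz : z ∈ ball (0 : ℂ) 1) :
    -(starRingEnd ℂ) b * z + (starRingEnd ℂ) d ≠ 0 := by
  intro h0
  have hblt := fact_hblt a b c d r ph habcd hph hr1 hrb
  have hzn : ‖z‖ < 1 := by simpa [mem_ball, dist_zero_right] using hz
  have : (starRingEnd ℂ) d = (starRingEnd ℂ) b * z := by linear_combination h0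
  have habs : ‖d‖ = ‖b‖ * ‖z‖ := by
    calc ‖d‖ = ‖(starRingEnd ℂ) d‖ := (Complex.norm_conj d).symm
      _ = ‖(starRingEnd ℂ) b * z‖ := by rw [this]
      _ = ‖b‖ * ‖z‖ := by rw [norm_mul, Complex.norm_conj]
  nlinarith [norm_nonneg b, norm_nonneg z, norm_nonneg d]

lemma fact_den1 (z₀ : ℂ) (hz : z₀ ∈ ball (0 : ℂ) 1) : c * z₀ + d ≠ 0 := by
  intro h0
  have hd := fact_hd a b c d r ph habcd hph hr1 hrb
  have hr0 : 0 ≤ r := fact_hr0 a b c d r ph habcd hph hr1 hrb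
  have hzn : ‖z₀‖ < 1 := by simpa [mem_ball, dist_zero_right] using hz
  have ha0 : a * z₀ + b ≠ 0 := by
    intro e2
    exact habcd (by linear_combination a * h0 - c * e2)
  set A := ‖a * z₀ + b‖ with hA
  have hA0 : 0 < A := norm_pos_iff.mpr ha0
  set D := ‖a * z₀‖ + r * ‖d‖ + 1 with hD
  have hD0 : 0 < D := by positivity
  set ε : ℝ := min (1/2) (A / D) with hε
  have hε0 : 0 < ε := lt_min (by norm_num) (by positivity)
  have hε1 : ε ≤ 1/2 := min_le_left _ _
  have hε2 : ε * D ≤ A := by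
    have := min_le_right (1/2) (A / D)
    calc ε * D ≤ (A / D) * D := by nlinarith
      _ = A := by field_simp
  set z : ℂ := (1 - (ε : ℂ)) * z₀ with hzdef
  have hzball : z ∈ ball (0 : ℂ) 1 := by
    simp only [mem_ball, dist_zero_right, hzdef, norm_mul]
    have h1 : ‖1 - (ε : ℂ)‖ = 1 - ε := by
      rw [show (1 : ℂ) - (ε : ℂ) = ((1 - ε : ℝ) : ℂ) by push_cast; ring,
        Complex.norm_real, Real.norm_eq_abs, abs_of_pos (by linarith)]
    rw [h1]
    nlinarith [norm_nonneg z₀]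
  have hczd : c * z + d = (ε : ℂ) * d := by
    rw [hzdef]; linear_combination (1 - (ε : ℂ)) * h0
  have hne : c * z + d ≠ 0 := by
    rw [hczd]
    exact mul_ne_zero (Complex.ofReal_ne_zero.mpr hε0.ne') hd
  have hle := fact_num_le a b c d r ph habcd hph hr1 hrb z hzball hne
  rw [hczd, norm_mul, Complex.norm_real, Real.norm_eq_abs, abs_of_pos hε0] at hle
  have hazb : a * z + b = (a * z₀ + b) - (ε : ℂ) * (a * z₀) := by
    rw [hzdef]; ring
  have habs2 : ‖(ε : ℂ) * (a * z₀)‖ = ε * ‖a * z₀‖ := by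
    rw [norm_mul, Complex.norm_real, Real.norm_eq_abs, abs_of_pos hε0]
  have hlow : A - ε * ‖a * z₀‖ ≤ ‖a * z + b‖ := by
    rw [hazb]
    have h1 := norm_sub_norm_le (a * z₀ + b) ((ε : ℂ) * (a * z₀))
    rw [habs2] at h1
    exact h1
  nlinarith

end Aux
set_option maxHeartbeats 1000000

/-- Cowen-type adjoint formula: for a linear fractional `φ` with `‖φ‖_∞ < 1` and
`ψ(z) = zⁿ ψ₁(z)` with `ψ₁ ∈ H^∞(𝔻)`, one has `D_{ψ,φ,n}* = T_g D_{σ,n} T_h*`. -/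
theorem stmt14 (a b c d : ℂ) (habcd : a * d - b * c ≠ 0) (n : ℕ) (hn : 1 ≤ n)
    (ψ₁ : ℂ → ℂ)
    (hψ₁d : DifferentiableOn ℂ ψ₁ (ball (0 : ℂ) 1))
    (hψ₁b : ∃ M : ℝ, ∀ z ∈ ball (0 : ℂ) 1, ‖ψ₁ z‖ ≤ M)
    (φ σ ψ g h : ℂ → ℂ)
    (hφ : ∀ z : ℂ, φ z = (a * z + b) / (c * z + d))
    (hσ : ∀ z : ℂ, σ z =
      ((starRingEnd ℂ) a * z - (starRingEnd ℂ) c) /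
        (-(starRingEnd ℂ) b * z + (starRingEnd ℂ) d))
    (hψ : ∀ z : ℂ, ψ z = z ^ n * ψ₁ z)
    (hg : ∀ z : ℂ, g z = z ^ n / (-(starRingEnd ℂ) b * z + (starRingEnd ℂ) d) ^ (n + 1))
    (hh : ∀ z : ℂ, h z = ψ₁ z * (c * z + d) ^ (n + 1))
    (hsup : ∃ r < (1 : ℝ), ∀ z ∈ ball (0 : ℂ) 1, ‖φ z‖ ≤ r)
    (T Dσ Mg Mh : H2 →L[ℂ] H2)
    (hT : IsWCD ψ φ n T)
    (hDσ : ∀ f : H2, ∀ z ∈ ball (0 : ℂ) 1,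
      H2.toFun (Dσ f) z = iteratedDeriv n (H2.toFun f) (σ z))
    (hMg : ∀ f : H2, ∀ z ∈ ball (0 : ℂ) 1, H2.toFun (Mg f) z = g z * H2.toFun f z)
    (hMh : ∀ f : H2, ∀ z ∈ ball (0 : ℂ) 1, H2.toFun (Mh f) z = h z * H2.toFun f z) :
    ContinuousLinearMap.adjoint T = Mg ∘L Dσ ∘L ContinuousLinearMap.adjoint Mh := by
  obtain ⟨r, hr1, hrb⟩ := hsup
  have memb : ∀ z : ℂ, ‖z‖ < 1 → z ∈ ball (0 : ℂ) 1 := fun z hz => by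
    simpa [mem_ball, dist_zero_right] using hz
  have hr0 : 0 ≤ r := fact_hr0 a b c d r φ habcd hφ hr1 hrb
  have hd : d ≠ 0 := fact_hd a b c d r φ habcd hφ hr1 hrb
  have hblt : ‖b‖ < ‖d‖ := fact_hblt a b c d r φ habcd hφ hr1 hrb
  have hden1 : ∀ z ∈ ball (0 : ℂ) 1, c * z + d ≠ 0 :=
    fun z hz => fact_den1 a b c d r φ habcd hφ hr1 hrb z hz
  have hden2 : ∀ z ∈ ball (0 : ℂ) 1, -(starRingEnd ℂ) b * z + (starRingEnd ℂ) d ≠ 0 :=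
    fun z hz => fact_den2 a b c d r φ habcd hφ hr1 hrb z hz
  -- bound for σ
  set R : ℝ := (‖a‖ + ‖c‖) / (‖d‖ - ‖b‖) with hRdef
  have hdb : 0 < ‖d‖ - ‖b‖ := by linarith
  have hR0 : 0 ≤ R := by positivity
  have hσR : ∀ z ∈ ball (0 : ℂ) 1, ‖σ z‖ ≤ R := by
    intro z hz
    have hzn : ‖z‖ < 1 := by simpa [mem_ball, dist_zero_right] using hz
    rw [hσ, norm_div]
    apply div_le_div₀ (by positivity) ?_ hdb ?_
    · calc ‖(starRingEnd ℂ) a * z - (starRingEnd ℂ) c‖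
          ≤ ‖(starRingEnd ℂ) a * z‖ + ‖(starRingEnd ℂ) c‖ :=
            norm_sub_le _ _
        _ ≤ ‖a‖ + ‖c‖ := by
            rw [norm_mul, Complex.norm_conj, Complex.norm_conj]
            nlinarith [norm_nonneg a, norm_nonneg z]
    · calc ‖d‖ - ‖b‖
          ≤ ‖(starRingEnd ℂ) d‖ - ‖-(starRingEnd ℂ) b * z‖ := by
            rw [Complex.norm_conj, norm_mul, norm_neg, Complex.norm_conj]
            nlinarith [norm_nonneg b, norm_nonneg z, norm_nonneg d]
        _ ≤ ‖-(starRingEnd ℂ) b * z + (starRingEnd ℂ) d‖ := by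
            have h1 := norm_sub_norm_le ((starRingEnd ℂ) d) (-(-(starRingEnd ℂ) b * z))
            simp only [norm_neg, sub_neg_eq_add] at h1
            rw [add_comm] at h1
            linarith
  set ρ : ℝ := min (1/2) (1/(2*(R+1))) with hρdef
  have hρ0 : 0 < ρ := lt_min (by norm_num) (by positivity)
  have hρh : ρ ≤ 1/2 := min_le_left _ _
  have hρ1 : ρ < 1 := by linarith
  have hwσ : ∀ w : ℂ, ‖w‖ < ρ → ∀ z ∈ ball (0 : ℂ) 1,
      ‖(starRingEnd ℂ) w * σ z‖ < 1 := by
    intro w hw z hz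
    have h1 : ρ ≤ 1/(2*(R+1)) := min_le_right _ _
    have h2 := hσR z hz
    rw [norm_mul, Complex.norm_conj]
    have h3 : ‖w‖ * ‖σ z‖ ≤ ‖w‖ * R :=
      mul_le_mul_of_nonneg_left h2 (norm_nonneg w)
    have h5 : ρ * (R + 1) ≤ 1/2 := by
      have hR1 : R + 1 ≠ 0 := by positivity
      have h6 : (1/(2*(R+1))) * (R+1) = 1/2 := by field_simp
      calc ρ * (R+1) ≤ (1/(2*(R+1))) * (R+1) := by nlinarith
        _ = 1/2 := h6
    nlinarith [h3, h5, mul_lt_mul_of_pos_right hw (by positivity : (0:ℝ) < R+1),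
      norm_nonneg w]
  have hne1 : ∀ x : ℂ, ‖x‖ < 1 → (1 : ℂ) - x ≠ 0 := by
    intro x hx hx0
    have : x = 1 := by linear_combination -hx0
    rw [this] at hx; simp at hx
  -- adjoint of Mh on kernels
  have hMhadj : ∀ (w : ℂ) (hw1 : ‖w‖ < 1),
      ContinuousLinearMap.adjoint Mh (ker w hw1) = (starRingEnd ℂ) (h w) • ker w hw1 := by
    intro w hw1
    apply ext_inner_left ℂ
    intro f
    rw [ContinuousLinearMap.adjoint_inner_right, inner_smul_right]
    have e1 : ⟪Mh f, ker w hw1⟫_ℂ = (starRingEnd ℂ) (H2.toFun (Mh f) w) := by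
      rw [← inner_conj_symm, inner_ker]
    rw [e1, hMh f w (memb w hw1), map_mul, ← inner_ker f w hw1, inner_conj_symm]
  -- the adjoint of T on kernels, as a function on the disk
  have key1 : ∀ (w z : ℂ) (hw1 : ‖w‖ < 1) (hz : ‖z‖ < 1),
      H2.toFun (ContinuousLinearMap.adjoint T (ker w hw1)) z
        = (starRingEnd ℂ) (ψ w) *
            ((n.factorial : ℂ) * z ^ n / (1 - z * (starRingEnd ℂ) (φ w)) ^ (n + 1)) := by
    intro w z hw1 hz
    have habs : ‖(starRingEnd ℂ) z * φ w‖ < 1 := by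
      rw [norm_mul, Complex.norm_conj]
      have := hrb w (memb w hw1)
      nlinarith [norm_nonneg z, norm_nonneg (φ w)]
    rw [← inner_ker _ z hz, ContinuousLinearMap.adjoint_inner_right, ← inner_conj_symm,
      inner_ker, hT (ker z hz) w (memb w hw1), iteratedDeriv_toFun_ker z hz n (φ w) habs]
    simp only [map_mul, map_div₀, map_pow, map_sub, map_one, map_natCast, Complex.conj_conj]
  -- the right-hand side on kernels
  have key2 : ∀ (w z : ℂ) (hw : ‖w‖ < ρ) (hw1 : ‖w‖ < 1)
      (hz : ‖z‖ < 1),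
      H2.toFun ((Mg ∘L Dσ ∘L ContinuousLinearMap.adjoint Mh) (ker w hw1)) z
        = (starRingEnd ℂ) (h w) * (g z *
            ((n.factorial : ℂ) * ((starRingEnd ℂ) w) ^ n
              / (1 - (starRingEnd ℂ) w * σ z) ^ (n + 1))) := by
    intro w z hw hw1 hz
    rw [ContinuousLinearMap.comp_apply, ContinuousLinearMap.comp_apply, hMhadj w hw1,
      map_smul, map_smul, toFun_smul, hMg _ z (memb z hz), hDσ _ z (memb z hz),
      iteratedDeriv_toFun_ker w hw1 n (σ z) (hwσ w hw z (memb z hz))]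
  -- the algebraic identity
  have halg : ∀ (w z : ℂ) (hw1 : ‖w‖ < 1) (hz : ‖z‖ < 1)
      (hA3 : 1 - z * (starRingEnd ℂ) (φ w) ≠ 0) (hA4 : 1 - (starRingEnd ℂ) w * σ z ≠ 0),
      (starRingEnd ℂ) (ψ w) *
          ((n.factorial : ℂ) * z ^ n / (1 - z * (starRingEnd ℂ) (φ w)) ^ (n + 1))
        = (starRingEnd ℂ) (h w) * (g z *
            ((n.factorial : ℂ) * ((starRingEnd ℂ) w) ^ n
              / (1 - (starRingEnd ℂ) w * σ z) ^ (n + 1))) := by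
    intro w z hw1 hz hA3 hA4
    have hE1 : (starRingEnd ℂ) c * (starRingEnd ℂ) w + (starRingEnd ℂ) d ≠ 0 := by
      intro h0
      apply hden1 w (memb w hw1)
      have h1 := congrArg (starRingEnd ℂ) h0
      simpa [map_add, map_mul, Complex.conj_conj] using h1
    have hE2 : -(starRingEnd ℂ) b * z + (starRingEnd ℂ) d ≠ 0 := hden2 z (memb z hz)
    set cw := (starRingEnd ℂ) w with hcw
    set E1 : ℂ := (starRingEnd ℂ) c * cw + (starRingEnd ℂ) d with hE1def
    set E2 : ℂ := -(starRingEnd ℂ) b * z + (starRingEnd ℂ) d with hE2def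
    set N : ℂ := E1 - z * ((starRingEnd ℂ) a * cw + (starRingEnd ℂ) b) with hN
    have hφw : (starRingEnd ℂ) (φ w) = ((starRingEnd ℂ) a * cw + (starRingEnd ℂ) b) / E1 := by
      rw [hφ w, map_div₀, map_add, map_add, map_mul, map_mul]
    have hK1 : 1 - z * (starRingEnd ℂ) (φ w) = N / E1 := by
      rw [hφw, eq_div_iff hE1]
      have hmul : ((starRingEnd ℂ) a * cw + (starRingEnd ℂ) b) / E1 * E1
          = (starRingEnd ℂ) a * cw + (starRingEnd ℂ) b := div_mul_cancel₀ _ hE1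
      linear_combination (-z) * hmul - hN
    have hK2 : 1 - cw * σ z = N / E2 := by
      rw [eq_div_iff hE2]
      have hσz : σ z * E2 = (starRingEnd ℂ) a * z - (starRingEnd ℂ) c := by
        rw [hσ z, hE2def]
        exact div_mul_cancel₀ _ hE2
      linear_combination (-cw) * hσz - hN
    have hN0 : N ≠ 0 := by
      intro h0
      apply hA3
      rw [hK1, h0, zero_div]
    rw [hK1, hK2, hψ w, hh w, hg z]
    simp only [map_mul, map_pow, map_add]
    rw [div_pow, div_pow, div_div_eq_mul_div, div_div_eq_mul_div]
    have cancel : ∀ (x y u v F' : ℂ), y ≠ 0 → x / y * (F' * u * y / v) = F' * x * u / v := by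
      intro x y u v F' hy
      calc x / y * (F' * u * y / v) = F' * x * u * (y / y) / v := by ring
        _ = F' * x * u / v := by rw [div_self hy, mul_one]
    rw [cancel _ _ _ _ _ (pow_ne_zero (n+1) hE2)]
    simp only [hN, hE1def, hE2def, hcw]
    ring
  -- conclusion by density of the kernels
  have hρlt : ∀ w : ℂ, ‖w‖ < ρ → ‖w‖ < 1 := fun w hw => lt_trans hw hρ1
  set A := Mg ∘L Dσ ∘L ContinuousLinearMap.adjoint Mh with hAdef
  have hBker : ∀ (w : ℂ) (hw : ‖w‖ < ρ),
      (ContinuousLinearMap.adjoint T - A) (ker w (hρlt w hw)) = 0 := by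
    intro w hw
    have hw1 := hρlt w hw
    apply toFun_eq_zero _ 1 one_pos
    intro z hzb
    have hz : ‖z‖ < 1 := by simpa [mem_ball, dist_zero_right] using hzb
    have hA3 : 1 - z * (starRingEnd ℂ) (φ w) ≠ 0 := by
      apply hne1
      rw [norm_mul, Complex.norm_conj]
      have := hrb w (memb w hw1)
      nlinarith [norm_nonneg z, norm_nonneg (φ w)]
    have hA4 : 1 - (starRingEnd ℂ) w * σ z ≠ 0 := hne1 _ (hwσ w hw z (memb z hz))
    rw [ContinuousLinearMap.sub_apply, toFun_sub _ _ z hz, key1 w z hw1 hz,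
      key2 w z hw hw1 hz, halg w z hw1 hz hA3 hA4, sub_self]
  have hadj : ContinuousLinearMap.adjoint (ContinuousLinearMap.adjoint T - A) = 0 := by
    apply ContinuousLinearMap.ext
    intro f
    rw [ContinuousLinearMap.zero_apply]
    apply toFun_eq_zero _ ρ hρ0
    intro w hwb
    have hw : ‖w‖ < ρ := by simpa [mem_ball, dist_zero_right] using hwb
    rw [← inner_ker _ w (hρlt w hw), ContinuousLinearMap.adjoint_inner_right,
      hBker w hw, inner_zero_left]
  have hB0 : ContinuousLinearMap.adjoint T - A = 0 := by
    have h1 := congrArg ContinuousLinearMap.adjoint hadj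
    rwa [ContinuousLinearMap.adjoint_adjoint, map_zero] at h1
  exact sub_eq_zero.mp hB0
end
end
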